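/- arXiv:1607.02330 — 5 statements merged into one kernel-verified Lean document; each statement's English description precedes it below -/
import Mathlib

section
/- J_α(X;Y) is continuous in α at α = 1, with J_1(X;Y) = I(X;Y): lim_{α→1} J_α(X;Y) = I(X;Y). -/
open scoped ENNReal BigOperators
open Finset

/-- Kullback-Leibler divergence between two PMFs on a finite set, valued in `EReal`
(`⊤` when `P` is not absolutely continuous w.r.t. `Q`). -/
noncomputable def klDiv {X : Type*} [Fintype X] (P Q : X → ℝ≥0∞) : EReal :=
  if ∀ x, Q x = 0 → P x = 0 then
    (((∑ x, (P x).toReal * Real.log ((P x).toReal / (Q x).toReal)) : ℝ) : EReal)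
  else ⊤

/-- Rényi divergence of order `α` (KL divergence at `α = 1`).  The ENNReal conventions
`0 * ⊤ = 0` and `0 ^ y = ⊤` for `y < 0` encode `0/0 = 0` and `p/0 = ∞`. -/
noncomputable def renyiDiv {X : Type*} [Fintype X] (α : ℝ) (P Q : X → ℝ≥0∞) : EReal :=
  if α = 1 then klDiv P Q
  else (((α - 1)⁻¹ : ℝ) : EReal) * ENNReal.log (∑ x, P x ^ α * Q x ^ (1 - α))

/-- Relative α-entropy (Sundaresan's divergence); KL divergence at `α = 1`. -/
noncomputable def relAlphaEnt {X : Type*} [Fintype X] (α : ℝ) (P Q : X → ℝ≥0∞) : EReal :=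
  if α = 1 then klDiv P Q
  else ((α / (1 - α) : ℝ) : EReal) * ENNReal.log (∑ x, P x * Q x ^ (α - 1))
    + ENNReal.log (∑ x, Q x ^ α)
    - (((1 - α)⁻¹ : ℝ) : EReal) * ENNReal.log (∑ x, P x ^ α)

/-- The set of PMFs on a finite type, as a subtype. -/
def PMFon (X : Type*) [Fintype X] : Type _ := {p : X → ℝ≥0∞ // ∑ x, p x = 1}

noncomputable def margX {X Y : Type*} [Fintype X] [Fintype Y] (P : X × Y → ℝ≥0∞) : X → ℝ≥0∞ :=
  fun x => ∑ y, P (x, y)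

noncomputable def margY {X Y : Type*} [Fintype X] [Fintype Y] (P : X × Y → ℝ≥0∞) : Y → ℝ≥0∞ :=
  fun y => ∑ x, P (x, y)

/-- Mutual information of a joint PMF. -/
noncomputable def mutualInfo {X Y : Type*} [Fintype X] [Fintype Y] (P : X × Y → ℝ≥0∞) : EReal :=
  klDiv P (fun p => margX P p.1 * margY P p.2)

/-- The dependence measure `J_α`. -/
noncomputable def Jalpha {X Y : Type*} [Fintype X] [Fintype Y] (α : ℝ) (P : X × Y → ℝ≥0∞) :
    EReal :=
  ⨅ (Q : PMFon X × PMFon Y), renyiDiv α P (fun p => Q.1.1 p.1 * Q.2.1 p.2)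

/-- The dependence measure `K_α`. -/
noncomputable def Kalpha {X Y : Type*} [Fintype X] [Fintype Y] (α : ℝ) (P : X × Y → ℝ≥0∞) :
    EReal :=
  ⨅ (Q : PMFon X × PMFon Y), relAlphaEnt α P (fun p => Q.1.1 p.1 * Q.2.1 p.2)

/-- Rényi entropy of order `β`. -/
noncomputable def renyiEnt {X : Type*} [Fintype X] (β : ℝ) (P : X → ℝ≥0∞) : EReal :=
  if β = 1 then (((∑ x, (P x).toReal * Real.log (P x).toReal⁻¹ : ℝ)) : EReal)
  else (((1 - β)⁻¹ : ℝ) : EReal) * ENNReal.log (∑ x, P x ^ β)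

/-- Min-entropy. -/
noncomputable def minEnt {X : Type*} [Fintype X] (P : X → ℝ≥0∞) : EReal :=
  - ENNReal.log (⨆ x, P x)



section Aux

lemma mul_log_div_ge {p q : ℝ} (hp : 0 ≤ p) (hq : 0 ≤ q) (h : q = 0 → p = 0) :
    p - q ≤ p * Real.log (p / q) := by
  rcases eq_or_lt_of_le hp with hp0 | hp0
  · simp [← hp0]; linarith
  · have hq0 : 0 < q := by
      rcases eq_or_lt_of_le hq with hq0 | hq0
      · exact absurd (h hq0.symm) hp0.ne'
      · exact hq0
    have hlog : Real.log (q / p) ≤ q / p - 1 :=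
      Real.log_le_sub_one_of_pos (div_pos hq0 hp0)
    have hrw : Real.log (p / q) = - Real.log (q / p) := by
      rw [← Real.log_inv, inv_div]
    rw [hrw]
    have h2 := mul_le_mul_of_nonneg_left hlog hp
    have h3 : p * (q / p) = q := by field_simp
    nlinarith [h2, h3]

lemma sum_mul_log_le_log_sum {ι : Type*} (s : Finset ι) (w x : ι → ℝ)
    (hw : ∀ i ∈ s, 0 ≤ w i) (hw1 : ∑ i ∈ s, w i = 1) (hx : ∀ i ∈ s, 0 < x i) :
    ∑ i ∈ s, w i * Real.log (x i) ≤ Real.log (∑ i ∈ s, w i * x i) := by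
  set S := ∑ i ∈ s, w i * x i with hS
  have hS0 : 0 < S := by
    obtain ⟨i, hi, hwi⟩ : ∃ i ∈ s, 0 < w i := by
      by_contra hcon
      push_neg at hcon
      have : ∑ i ∈ s, w i = 0 := Finset.sum_eq_zero fun i hi =>
        le_antisymm (hcon i hi) (hw i hi)
      rw [this] at hw1; norm_num at hw1
    have : 0 < w i * x i := mul_pos hwi (hx i hi)
    calc (0:ℝ) < w i * x i := this
      _ ≤ S := Finset.single_le_sum (fun j hj => mul_nonneg (hw j hj) (hx j hj).le) hi
  have key : ∀ i ∈ s, w i * Real.log (x i) ≤ w i * (x i / S - 1) + w i * Real.log S := by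
    intro i hi
    rcases eq_or_lt_of_le (hw i hi) with h0 | h0
    · rw [← h0]; simp
    · have : Real.log (x i) = Real.log (x i / S) + Real.log S := by
        rw [← Real.log_mul (div_pos (hx i hi) hS0).ne' hS0.ne']
        congr 1; field_simp
      rw [this, mul_add]
      have := Real.log_le_sub_one_of_pos (div_pos (hx i hi) hS0)
      nlinarith
  calc ∑ i ∈ s, w i * Real.log (x i)
      ≤ ∑ i ∈ s, (w i * (x i / S - 1) + w i * Real.log S) := Finset.sum_le_sum key
    _ = (∑ i ∈ s, w i * x i) / S - (∑ i ∈ s, w i) + (∑ i ∈ s, w i) * Real.log S := by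
        rw [Finset.sum_add_distrib, ← Finset.sum_mul]
        congr 1
        rw [Finset.sum_div, ← Finset.sum_sub_distrib]
        exact Finset.sum_congr rfl fun i _ => by rw [mul_sub, mul_div_assoc, mul_one]
    _ = Real.log S := by rw [hw1, ← hS]; field_simp; ring

section
variable {Z : Type*} [Fintype Z]

lemma pmf_le_one {Q : Z → ℝ≥0∞} (hQ : ∑ z, Q z = 1) (z : Z) : Q z ≤ 1 := by
  rw [← hQ]
  exact Finset.single_le_sum (fun _ _ => zero_le) (Finset.mem_univ z)

lemma pmf_ne_top {Q : Z → ℝ≥0∞} (hQ : ∑ z, Q z = 1) (z : Z) : Q z ≠ ⊤ :=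
  fun h => by simpa [h] using pmf_le_one hQ z

lemma pmf_toReal_sum {Q : Z → ℝ≥0∞} (hQ : ∑ z, Q z = 1) :
    ∑ z, (Q z).toReal = 1 := by
  rw [← ENNReal.toReal_sum (fun z _ => pmf_ne_top hQ z), hQ, ENNReal.toReal_one]

lemma pmf_toReal_le_one {Q : Z → ℝ≥0∞} (hQ : ∑ z, Q z = 1) (z : Z) : (Q z).toReal ≤ 1 := by
  have := ENNReal.toReal_mono (by norm_num) (pmf_le_one hQ z)
  simpa using this
end

section
variable {X Y : Type*} [Fintype X] [Fintype Y] {P : X × Y → ℝ≥0∞}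

lemma margX_sum (hP : ∑ p, P p = 1) : ∑ x, margX P x = 1 := by
  rw [← hP, Fintype.sum_prod_type]; rfl

lemma margY_sum (hP : ∑ p, P p = 1) : ∑ y, margY P y = 1 := by
  rw [← margX_sum hP]
  exact Finset.sum_comm

lemma le_margX (p : X × Y) : P p ≤ margX P p.1 := by
  have : P p = P (p.1, p.2) := by rw [Prod.mk.eta]
  rw [this]
  exact Finset.single_le_sum (f := fun y => P (p.1, y)) (fun _ _ => zero_le) (Finset.mem_univ p.2)

lemma le_margY (p : X × Y) : P p ≤ margY P p.2 := by
  have : P p = P (p.1, p.2) := by rw [Prod.mk.eta]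
  rw [this]
  exact Finset.single_le_sum (f := fun x => P (x, p.2)) (fun _ _ => zero_le) (Finset.mem_univ p.1)

lemma marg_ac (p : X × Y) (h : margX P p.1 * margY P p.2 = 0) : P p = 0 := by
  rcases mul_eq_zero.1 h with h | h
  · exact le_antisymm (h ▸ le_margX p) (zero_le)
  · exact le_antisymm (h ▸ le_margY p) (zero_le)
end

noncomputable def Ireal {X Y : Type*} [Fintype X] [Fintype Y] (P : X × Y → ℝ≥0∞) : ℝ :=
  ∑ p, (P p).toReal * Real.log ((P p).toReal / (margX P p.1 * margY P p.2).toReal)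

section
variable {X Y : Type*} [Fintype X] [Fintype Y] {P : X × Y → ℝ≥0∞}

lemma pmf_le_one' {Z : Type*} [Fintype Z] {Q : Z → ℝ≥0∞} (hQ : ∑ z, Q z = 1) (z : Z) : Q z ≤ 1 := by
  rw [← hQ]
  exact Finset.single_le_sum (fun _ _ => zero_le) (Finset.mem_univ z)

lemma margX_ne_top (hP : ∑ p, P p = 1) (x : X) : margX P x ≠ ⊤ :=
  fun h => by simpa [h] using pmf_le_one' (margX_sum hP) x

lemma margY_ne_top (hP : ∑ p, P p = 1) (y : Y) : margY P y ≠ ⊤ :=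
  fun h => by simpa [h] using pmf_le_one' (margY_sum hP) y

lemma margX_toReal (hP : ∑ p, P p = 1) (x : X) :
    (margX P x).toReal = ∑ y, (P (x, y)).toReal := by
  rw [margX, ENNReal.toReal_sum]
  intro y _
  exact fun h => by simpa [h] using pmf_le_one' hP (x, y)

lemma margY_toReal (hP : ∑ p, P p = 1) (y : Y) :
    (margY P y).toReal = ∑ x, (P (x, y)).toReal := by
  rw [margY, ENNReal.toReal_sum]
  intro x _
  exact fun h => by simpa [h] using pmf_le_one' hP (x, y)

lemma sum_fst (hP : ∑ p, P p = 1) (f : X → ℝ) :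
    ∑ p : X × Y, (P p).toReal * f p.1 = ∑ x, (margX P x).toReal * f x := by
  rw [Fintype.sum_prod_type]
  exact Finset.sum_congr rfl fun x _ => by
    rw [margX_toReal hP, Finset.sum_mul]

lemma sum_snd (hP : ∑ p, P p = 1) (g : Y → ℝ) :
    ∑ p : X × Y, (P p).toReal * g p.2 = ∑ y, (margY P y).toReal * g y := by
  rw [Fintype.sum_prod_type]
  rw [Finset.sum_comm]
  exact Finset.sum_congr rfl fun y _ => by
    rw [margY_toReal hP, Finset.sum_mul]

/-- Gibbs-type inequality for one marginal. -/
lemma marg_gibbs {Z : Type*} [Fintype Z] {m q : Z → ℝ≥0∞} (hm : ∑ z, m z = 1)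
    (hq : ∑ z, q z = 1) (hac : ∀ z, q z = 0 → m z = 0) :
    0 ≤ ∑ z, (m z).toReal * (Real.log (m z).toReal - Real.log (q z).toReal) := by
  have key : ∀ z ∈ Finset.univ, (m z).toReal * (Real.log (m z).toReal - Real.log (q z).toReal)
      = (m z).toReal * Real.log ((m z).toReal / (q z).toReal) := by
    intro z _
    by_cases hz : m z = 0
    · simp [hz]
    · have hmz : 0 < (m z).toReal := ENNReal.toReal_pos hz (pmf_ne_top hm z)
      have hqz0 : q z ≠ 0 := fun h => hz (hac z h)
      have hqz : 0 < (q z).toReal := ENNReal.toReal_pos hqz0 (pmf_ne_top hq z)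
      rw [Real.log_div hmz.ne' hqz.ne']
  rw [Finset.sum_congr rfl key]
  have h1 : ∑ z, ((m z).toReal - (q z).toReal)
      ≤ ∑ z, (m z).toReal * Real.log ((m z).toReal / (q z).toReal) := by
    apply Finset.sum_le_sum
    intro z _
    apply mul_log_div_ge ENNReal.toReal_nonneg ENNReal.toReal_nonneg
    intro h
    have : q z = 0 := by
      have := pmf_ne_top hq z
      exact (ENNReal.toReal_eq_zero_iff _).1 h |>.resolve_right this
    rw [hac z this]; simp
  calc (0:ℝ) = ∑ z, ((m z).toReal - (q z).toReal) := by
        rw [Finset.sum_sub_distrib, pmf_toReal_sum hm, pmf_toReal_sum hq]; ring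
    _ ≤ _ := h1

lemma kl_ge (hP : ∑ p, P p = 1) {q1 : X → ℝ≥0∞} {q2 : Y → ℝ≥0∞}
    (hq1 : ∑ x, q1 x = 1) (hq2 : ∑ y, q2 y = 1)
    (hac : ∀ p : X × Y, P p ≠ 0 → q1 p.1 * q2 p.2 ≠ 0) :
    Ireal P ≤ ∑ p, (P p).toReal * Real.log ((P p).toReal / (q1 p.1 * q2 p.2).toReal) := by
  set f : X → ℝ := fun x => Real.log (margX P x).toReal - Real.log (q1 x).toReal with hf
  set g : Y → ℝ := fun y => Real.log (margY P y).toReal - Real.log (q2 y).toReal with hg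
  have step1 : ∀ p : X × Y,
      (P p).toReal * Real.log ((P p).toReal / (q1 p.1 * q2 p.2).toReal)
        - (P p).toReal * Real.log ((P p).toReal / (margX P p.1 * margY P p.2).toReal)
      = (P p).toReal * f p.1 + (P p).toReal * g p.2 := by
    intro p
    by_cases hp : P p = 0
    · simp [hp]
    · have hpr : 0 < (P p).toReal := ENNReal.toReal_pos hp (pmf_ne_top hP p)
      have hm1 : margX P p.1 ≠ 0 := fun h => hp (by
        exact le_antisymm (h ▸ le_margX p) (zero_le))
      have hm2 : margY P p.2 ≠ 0 := fun h => hp (by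
        exact le_antisymm (h ▸ le_margY p) (zero_le))
      have hm1r : 0 < (margX P p.1).toReal := ENNReal.toReal_pos hm1 (margX_ne_top hP p.1)
      have hm2r : 0 < (margY P p.2).toReal := ENNReal.toReal_pos hm2 (margY_ne_top hP p.2)
      have hq12 := hac p hp
      have hq1z : q1 p.1 ≠ 0 := fun h => hq12 (by rw [h, zero_mul])
      have hq2z : q2 p.2 ≠ 0 := fun h => hq12 (by rw [h, mul_zero])
      have hq1r : 0 < (q1 p.1).toReal := ENNReal.toReal_pos hq1z (pmf_ne_top hq1 p.1)
      have hq2r : 0 < (q2 p.2).toReal := ENNReal.toReal_pos hq2z (pmf_ne_top hq2 p.2)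
      rw [ENNReal.toReal_mul, ENNReal.toReal_mul]
      rw [Real.log_div hpr.ne' (mul_pos hq1r hq2r).ne',
          Real.log_div hpr.ne' (mul_pos hm1r hm2r).ne',
          Real.log_mul hq1r.ne' hq2r.ne', Real.log_mul hm1r.ne' hm2r.ne']
      simp only [hf, hg]
      ring
  have step2 : ∑ p, (P p).toReal * Real.log ((P p).toReal / (q1 p.1 * q2 p.2).toReal) - Ireal P
      = (∑ x, (margX P x).toReal * f x) + (∑ y, (margY P y).toReal * g y) := by
    rw [← sum_fst hP f, ← sum_snd hP g, Ireal, ← Finset.sum_sub_distrib,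
      ← Finset.sum_add_distrib]
    exact Finset.sum_congr rfl fun p _ => step1 p
  have h3 : 0 ≤ ∑ x, (margX P x).toReal * f x := by
    apply marg_gibbs (margX_sum hP) hq1
    intro x hx
    rw [margX]
    apply Finset.sum_eq_zero
    intro y _
    by_contra hPy
    exact hac (x, y) hPy (by rw [hx, zero_mul])
  have h4 : 0 ≤ ∑ y, (margY P y).toReal * g y := by
    apply marg_gibbs (margY_sum hP) hq2
    intro y hy
    rw [margY]
    apply Finset.sum_eq_zero
    intro x _
    by_contra hPx
    exact hac (x, y) hPx (by rw [hy, mul_zero])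
  linarith [step2, h3, h4]
end

end Aux
section Aux2
variable {X Y : Type*} [Fintype X] [Fintype Y] {P : X × Y → ℝ≥0∞}

lemma mutualInfo_eq (hP : ∑ p, P p = 1) : mutualInfo P = ((Ireal P : ℝ) : EReal) := by
  rw [mutualInfo, klDiv, if_pos (fun p => marg_ac p)]
  rfl

noncomputable def margPair (P : X × Y → ℝ≥0∞) (hP : ∑ p, P p = 1) : PMFon X × PMFon Y :=
  (⟨margX P, margX_sum hP⟩, ⟨margY P, margY_sum hP⟩)

lemma Jalpha_le_marg (α : ℝ) (hP : ∑ p, P p = 1) :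
    Jalpha α P ≤ renyiDiv α P (fun p => margX P p.1 * margY P p.2) :=
  iInf_le _ (margPair P hP)

theorem Jalpha_one (hP : ∑ p, P p = 1) : Jalpha 1 P = mutualInfo P := by
  apply le_antisymm
  · have h := Jalpha_le_marg 1 hP
    rwa [renyiDiv, if_pos rfl] at h
  · apply le_iInf
    intro Q
    rw [renyiDiv, if_pos rfl]
    by_cases hac : ∀ p : X × Y, Q.1.1 p.1 * Q.2.1 p.2 = 0 → P p = 0
    · rw [klDiv, if_pos hac, mutualInfo_eq hP, EReal.coe_le_coe_iff]
      exact kl_ge hP Q.1.2 Q.2.2 (fun p hp h0 => hp (hac p h0))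
    · rw [klDiv, if_neg hac]
      exact le_top
end Aux2
section Aux3
variable {Z : Type*} [Fintype Z]

/-- support of a PMF as a finset -/
noncomputable def suppP (P : Z → ℝ≥0∞) : Finset Z := Finset.univ.filter (fun z => P z ≠ 0)

lemma mem_suppP {P : Z → ℝ≥0∞} {z : Z} : z ∈ suppP P ↔ P z ≠ 0 := by
  simp [suppP]

lemma suppP_nonempty {P : Z → ℝ≥0∞} (hP : ∑ z, P z = 1) : (suppP P).Nonempty := by
  by_contra h
  rw [Finset.not_nonempty_iff_eq_empty] at h
  have : ∑ z, P z = 0 := Finset.sum_eq_zero fun z _ => by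
    by_contra hz
    exact absurd (mem_suppP.2 hz) (by simp [h])
  rw [hP] at this; norm_num at this

lemma sum_toReal_suppP {P : Z → ℝ≥0∞} (hP : ∑ z, P z = 1) :
    ∑ z ∈ suppP P, (P z).toReal = 1 := by
  rw [← pmf_toReal_sum hP]
  apply Finset.sum_subset (Finset.subset_univ _)
  intro z _ hz
  rw [mem_suppP, not_not] at hz
  rw [hz]
  simp

lemma renyi_coe {α : ℝ} (hα : α ≠ 1) {P q : Z → ℝ≥0∞}
    (h0 : (∑ z, P z ^ α * q z ^ (1-α)) ≠ 0) (ht : (∑ z, P z ^ α * q z ^ (1-α)) ≠ ⊤) :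
    renyiDiv α P q
      = (((α-1)⁻¹ * Real.log (∑ z, P z ^ α * q z ^ (1-α)).toReal : ℝ) : EReal) := by
  rw [renyiDiv, if_neg hα, ENNReal.log_pos_real h0 ht, EReal.coe_mul]

lemma renyi_top_of_zero {α : ℝ} (hα : α < 1) {P q : Z → ℝ≥0∞}
    (h0 : (∑ z, P z ^ α * q z ^ (1-α)) = 0) : renyiDiv α P q = ⊤ := by
  rw [renyiDiv, if_neg hα.ne, h0, ENNReal.log_zero,
    EReal.coe_mul_bot_of_neg (inv_lt_zero.mpr (by linarith))]

lemma renyi_top_of_top {α : ℝ} (hα : 1 < α) {P q : Z → ℝ≥0∞}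
    (ht : (∑ z, P z ^ α * q z ^ (1-α)) = ⊤) : renyiDiv α P q = ⊤ := by
  rw [renyiDiv, if_neg hα.ne', ht, ENNReal.log_top,
    EReal.coe_mul_top_of_pos (inv_pos.mpr (by linarith))]

lemma term_toReal (α : ℝ) (a b : ℝ≥0∞) :
    (a ^ α * b ^ (1-α)).toReal = a.toReal ^ α * b.toReal ^ (1-α) := by
  rw [ENNReal.toReal_mul, ← ENNReal.toReal_rpow, ← ENNReal.toReal_rpow]

lemma S_toReal {α : ℝ} (hα0 : 0 < α) {P q : Z → ℝ≥0∞}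
    (hterm : ∀ z, P z ^ α * q z ^ (1-α) ≠ ⊤) :
    (∑ z, P z ^ α * q z ^ (1-α)).toReal
      = ∑ z ∈ suppP P, (P z).toReal ^ α * (q z).toReal ^ (1-α) := by
  rw [ENNReal.toReal_sum (fun z _ => hterm z)]
  rw [Finset.sum_congr rfl (fun z _ => term_toReal α (P z) (q z))]
  symm
  apply Finset.sum_subset (Finset.subset_univ _)
  intro z _ hz
  rw [mem_suppP, not_not] at hz
  rw [hz, ENNReal.toReal_zero, Real.zero_rpow hα0.ne', zero_mul]

end Aux3
section Aux4
variable {X Y : Type*} [Fintype X] [Fintype Y] {P : X × Y → ℝ≥0∞}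

lemma rpow_ne_zero' {a : ℝ≥0∞} (h0 : a ≠ 0) (ht : a ≠ ⊤) (y : ℝ) : a ^ y ≠ 0 := by
  intro h
  rcases ENNReal.rpow_eq_zero_iff.1 h with ⟨h1, _⟩ | ⟨h1, _⟩
  exacts [h0 h1, ht h1]

lemma rpow_ne_top' {a : ℝ≥0∞} (h0 : a ≠ 0) (ht : a ≠ ⊤) (y : ℝ) : a ^ y ≠ ⊤ := by
  intro h
  rcases ENNReal.rpow_eq_top_iff.1 h with ⟨h1, _⟩ | ⟨h1, _⟩
  exacts [h0 h1, ht h1]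

lemma rpow_term_eq {pr qr : ℝ} (hp : 0 < pr) (hq : 0 < qr) (α : ℝ) :
    pr ^ α * qr ^ (1-α) = pr * Real.exp ((α-1) * (Real.log pr - Real.log qr)) := by
  have h1 : pr * Real.exp ((α-1) * (Real.log pr - Real.log qr))
      = Real.exp (Real.log pr + (α-1) * (Real.log pr - Real.log qr)) := by
    rw [Real.exp_add, Real.exp_log hp]
  rw [Real.rpow_def_of_pos hp, Real.rpow_def_of_pos hq, ← Real.exp_add, h1]
  congr 1
  ring

lemma kl_ge_supp (hP : ∑ p, P p = 1) {q1 : X → ℝ≥0∞} {q2 : Y → ℝ≥0∞}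
    (hq1 : ∑ x, q1 x = 1) (hq2 : ∑ y, q2 y = 1)
    (hac : ∀ p : X × Y, P p ≠ 0 → q1 p.1 * q2 p.2 ≠ 0) :
    Ireal P ≤ ∑ p ∈ suppP P, (P p).toReal *
      (Real.log (P p).toReal - Real.log ((q1 p.1).toReal * (q2 p.2).toReal)) := by
  refine (kl_ge hP hq1 hq2 hac).trans_eq ?_
  rw [show (∑ p, (P p).toReal * Real.log ((P p).toReal / (q1 p.1 * q2 p.2).toReal))
      = ∑ p ∈ suppP P, (P p).toReal * Real.log ((P p).toReal / (q1 p.1 * q2 p.2).toReal) by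
    symm
    apply Finset.sum_subset (Finset.subset_univ _)
    intro p _ hp
    rw [mem_suppP, not_not] at hp
    rw [hp]; simp]
  apply Finset.sum_congr rfl
  intro p hp
  rw [mem_suppP] at hp
  have hpr : 0 < (P p).toReal := ENNReal.toReal_pos hp (pmf_ne_top hP p)
  have hq12 := hac p hp
  have hq1z : q1 p.1 ≠ 0 := fun h => hq12 (by rw [h, zero_mul])
  have hq2z : q2 p.2 ≠ 0 := fun h => hq12 (by rw [h, mul_zero])
  have hq1r : 0 < (q1 p.1).toReal := ENNReal.toReal_pos hq1z (pmf_ne_top hq1 p.1)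
  have hq2r : 0 < (q2 p.2).toReal := ENNReal.toReal_pos hq2z (pmf_ne_top hq2 p.2)
  rw [ENNReal.toReal_mul, Real.log_div hpr.ne' (mul_pos hq1r hq2r).ne']

lemma lower_gt_one (hP : ∑ p, P p = 1) {q1 : X → ℝ≥0∞} {q2 : Y → ℝ≥0∞}
    (hq1 : ∑ x, q1 x = 1) (hq2 : ∑ y, q2 y = 1) {α : ℝ} (hα : 1 < α) :
    ((Ireal P : ℝ) : EReal) ≤ renyiDiv α P (fun p => q1 p.1 * q2 p.2) := by
  set q : X × Y → ℝ≥0∞ := fun p => q1 p.1 * q2 p.2 with hq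
  by_cases hac : ∀ p : X × Y, P p ≠ 0 → q p ≠ 0
  · -- absolutely continuous case
    have hα0 : (0:ℝ) < α := by linarith
    have hqt : ∀ p : X × Y, q p ≠ ⊤ := fun p =>
      ENNReal.mul_ne_top (pmf_ne_top hq1 p.1) (pmf_ne_top hq2 p.2)
    have hPt : ∀ p : X × Y, P p ≠ ⊤ := pmf_ne_top hP
    have hterm : ∀ p : X × Y, P p ^ α * q p ^ (1-α) ≠ ⊤ := by
      intro p
      by_cases hp : P p = 0
      · rw [hp, ENNReal.zero_rpow_of_pos hα0, zero_mul]
        exact ENNReal.zero_ne_top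
      · exact ENNReal.mul_ne_top (rpow_ne_top' hp (hPt p) α)
          (rpow_ne_top' (hac p hp) (hqt p) (1-α))
    have hS0 : (∑ p, P p ^ α * q p ^ (1-α)) ≠ 0 := by
      obtain ⟨p0, hp0⟩ := suppP_nonempty hP
      rw [mem_suppP] at hp0
      intro hzero
      have hterm0 := (Finset.sum_eq_zero_iff.1 hzero) p0 (Finset.mem_univ _)
      exact mul_ne_zero (rpow_ne_zero' hp0 (hPt p0) α)
        (rpow_ne_zero' (hac p0 hp0) (hqt p0) (1-α)) hterm0
    have hSt : (∑ p, P p ^ α * q p ^ (1-α)) ≠ ⊤ := by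
      intro h
      obtain ⟨p, _, hp⟩ := ENNReal.sum_eq_top.1 h
      exact hterm p hp
    rw [renyi_coe hα.ne' hS0 hSt, EReal.coe_le_coe_iff]
    rw [S_toReal hα0 hterm]
    -- real-land
    set T := ∑ p ∈ suppP P, (P p).toReal ^ α * (q p).toReal ^ (1-α) with hT
    have hsupp_pos : ∀ p ∈ suppP P, 0 < (P p).toReal := fun p hp =>
      ENNReal.toReal_pos (mem_suppP.1 hp) (hPt p)
    have hsupp_qpos : ∀ p ∈ suppP P, 0 < (q p).toReal := fun p hp =>
      ENNReal.toReal_pos (hac p (mem_suppP.1 hp)) (hqt p)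
    have hTsum : T = ∑ p ∈ suppP P, (P p).toReal *
        Real.exp ((α-1) * (Real.log (P p).toReal - Real.log (q p).toReal)) := by
      exact Finset.sum_congr rfl fun p hp =>
        rpow_term_eq (hsupp_pos p hp) (hsupp_qpos p hp) α
    have hK : Ireal P ≤ ∑ p ∈ suppP P, (P p).toReal *
        (Real.log (P p).toReal - Real.log (q p).toReal) := by
      have := kl_ge_supp hP hq1 hq2 hac
      refine this.trans_eq (Finset.sum_congr rfl fun p hp => ?_)
      rw [hq]
      rw [ENNReal.toReal_mul]
    have hjensen : ∑ p ∈ suppP P, (P p).toReal *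
        ((α-1) * (Real.log (P p).toReal - Real.log (q p).toReal)) ≤ Real.log T := by
      rw [hTsum]
      have := sum_mul_log_le_log_sum (suppP P) (fun p => (P p).toReal)
        (fun p => Real.exp ((α-1) * (Real.log (P p).toReal - Real.log (q p).toReal)))
        (fun p _ => ENNReal.toReal_nonneg) (sum_toReal_suppP hP)
        (fun p _ => Real.exp_pos _)
      simpa [Real.log_exp] using this
    have hfin : (α-1) * Ireal P ≤ Real.log T := by
      calc (α-1) * Ireal P
          ≤ (α-1) * ∑ p ∈ suppP P, (P p).toReal *
              (Real.log (P p).toReal - Real.log (q p).toReal) :=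
            mul_le_mul_of_nonneg_left hK (by linarith)
        _ = ∑ p ∈ suppP P, (P p).toReal *
              ((α-1) * (Real.log (P p).toReal - Real.log (q p).toReal)) := by
            rw [Finset.mul_sum]
            exact Finset.sum_congr rfl fun p _ => by ring
        _ ≤ Real.log T := hjensen
    calc Ireal P = (α-1)⁻¹ * ((α-1) * Ireal P) :=
          (inv_mul_cancel_left₀ (by linarith : α - 1 ≠ 0) _).symm
      _ ≤ (α-1)⁻¹ * Real.log T :=
          mul_le_mul_of_nonneg_left hfin (inv_nonneg.mpr (by linarith))
  · -- not absolutely continuous: divergence is ⊤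
    push_neg at hac
    obtain ⟨p0, hp0, hq0⟩ := hac
    have : (∑ p, P p ^ α * q p ^ (1-α)) = ⊤ := by
      rw [ENNReal.sum_eq_top]
      refine ⟨p0, Finset.mem_univ _, ?_⟩
      rw [hq0, ENNReal.zero_rpow_of_neg (by linarith),
        ENNReal.mul_top (rpow_ne_zero' hp0 (pmf_ne_top hP p0) α)]
    rw [renyi_top_of_top hα this]
    exact le_top
end Aux4
section Aux5
variable {X Y : Type*} [Fintype X] [Fintype Y] {P : X × Y → ℝ≥0∞}

lemma rpow_ne_top_of_pos {a : ℝ≥0∞} (ht : a ≠ ⊤) {y : ℝ} (hy : 0 < y) : a ^ y ≠ ⊤ := by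
  by_cases h0 : a = 0
  · rw [h0, ENNReal.zero_rpow_of_pos hy]
    exact ENNReal.zero_ne_top
  · exact rpow_ne_top' h0 ht y

set_option maxHeartbeats 2000000 in
lemma lower_lt_one (hP : ∑ p, P p = 1) {ε : ℝ} (hε : 0 < ε) :
    ∃ θ : ℝ, 0 < θ ∧ θ ≤ 1/2 ∧ ∀ α : ℝ, 1 - θ < α → α < 1 →
      ∀ (q1 : X → ℝ≥0∞) (q2 : Y → ℝ≥0∞), (∑ x, q1 x = 1) → (∑ y, q2 y = 1) →
      ((Ireal P - ε : ℝ) : EReal) ≤ renyiDiv α P (fun p => q1 p.1 * q2 p.2) := by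
  classical
  -- the smoothing parameter δ
  set δ : ℝ := 1 - Real.exp (-(ε/4)) with hδdef
  have hδ0 : 0 < δ := by
    have : Real.exp (-(ε/4)) < 1 := Real.exp_lt_one_iff.2 (by linarith)
    simp only [hδdef]; linarith
  have hδ1 : δ < 1 := by
    have : 0 < Real.exp (-(ε/4)) := Real.exp_pos _
    simp only [hδdef]; linarith
  have h1δ : 1 - δ = Real.exp (-(ε/4)) := by simp [hδdef]
  have h1δpos : 0 < 1 - δ := by rw [h1δ]; exact Real.exp_pos _
  have hlog1δ : Real.log (1-δ) = -(ε/4) := by rw [h1δ, Real.log_exp]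
  -- the constants
  set B1 : ℝ := ∑ p ∈ suppP P, |Real.log (P p).toReal| with hB1
  set B2 : ℝ := ∑ p ∈ suppP P, |Real.log ((margX P p.1).toReal * (margY P p.2).toReal)| with hB2
  have hB1nn : 0 ≤ B1 := Finset.sum_nonneg fun p _ => abs_nonneg _
  have hB2nn : 0 ≤ B2 := Finset.sum_nonneg fun p _ => abs_nonneg _
  set B : ℝ := B1 + B2 + 2*|Real.log δ| + 1 with hB
  have hBpos : 0 < B := by positivity
  set θ : ℝ := min (min (1/2) (1/(B+1))) ((ε/2)/(B^2+1)) with hθ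
  have hθpos : 0 < θ := by
    apply lt_min (lt_min (by norm_num) (by positivity)) (by positivity)
  refine ⟨θ, hθpos, (min_le_left _ _).trans (min_le_left _ _), ?_⟩
  intro α hαθ hα1 q1 q2 hq1 hq2
  have hθhalf : θ ≤ 1/2 := (min_le_left _ _).trans (min_le_left _ _)
  have hθ1 : θ ≤ 1/(B+1) := (min_le_left _ _).trans (min_le_right _ _)
  have hθ2 : θ ≤ (ε/2)/(B^2+1) := min_le_right _ _
  clear_value θ
  clear_value δ
  clear_value B1 B2 B
  have hα0 : 0 < α := by linarith
  have h1α : 0 < 1 - α := by linarith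
  have h1αθ : 1 - α < θ := by linarith
  set q : X × Y → ℝ≥0∞ := fun p => q1 p.1 * q2 p.2 with hqdef
  have hqt : ∀ p : X × Y, q p ≠ ⊤ := fun p =>
    ENNReal.mul_ne_top (pmf_ne_top hq1 p.1) (pmf_ne_top hq2 p.2)
  have hPt : ∀ p : X × Y, P p ≠ ⊤ := pmf_ne_top hP
  have hterm : ∀ p : X × Y, P p ^ α * q p ^ (1-α) ≠ ⊤ := fun p =>
    ENNReal.mul_ne_top (rpow_ne_top_of_pos (hPt p) hα0) (rpow_ne_top_of_pos (hqt p) h1α)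
  by_cases hS0 : (∑ p, P p ^ α * q p ^ (1-α)) = 0
  · rw [renyi_top_of_zero hα1 hS0]
    exact le_top
  · have hSt : (∑ p, P p ^ α * q p ^ (1-α)) ≠ ⊤ := by
      intro h
      obtain ⟨p, _, hp⟩ := ENNReal.sum_eq_top.1 h
      exact hterm p hp
    rw [renyi_coe hα1.ne hS0 hSt, EReal.coe_le_coe_iff, S_toReal hα0 hterm]
    have hTpos : 0 < (∑ p, P p ^ α * q p ^ (1-α)).toReal := ENNReal.toReal_pos hS0 hSt
    rw [S_toReal hα0 hterm] at hTpos
    set T := ∑ p ∈ suppP P, (P p).toReal ^ α * (q p).toReal ^ (1-α) with hT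
    -- smoothed distributions
    set q1' : X → ℝ≥0∞ := fun x => ENNReal.ofReal (1-δ) * q1 x + ENNReal.ofReal δ * margX P x
      with hq1'def
    set q2' : Y → ℝ≥0∞ := fun y => ENNReal.ofReal (1-δ) * q2 y + ENNReal.ofReal δ * margY P y
      with hq2'def
    have hsum1' : ∑ x, q1' x = 1 := by
      simp only [hq1'def]
      rw [Finset.sum_add_distrib, ← Finset.mul_sum, ← Finset.mul_sum, hq1, margX_sum hP,
        mul_one, mul_one, ← ENNReal.ofReal_add (by linarith) hδ0.le]
      norm_num
    have hsum2' : ∑ y, q2' y = 1 := by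
      simp only [hq2'def]
      rw [Finset.sum_add_distrib, ← Finset.mul_sum, ← Finset.mul_sum, hq2, margY_sum hP,
        mul_one, mul_one, ← ENNReal.ofReal_add (by linarith) hδ0.le]
      norm_num
    -- real versions
    have hq1'toReal : ∀ x, (q1' x).toReal = (1-δ) * (q1 x).toReal + δ * (margX P x).toReal := by
      intro x
      simp only [hq1'def]
      rw [ENNReal.toReal_add (ENNReal.mul_ne_top ENNReal.ofReal_ne_top (pmf_ne_top hq1 x))
        (ENNReal.mul_ne_top ENNReal.ofReal_ne_top (margX_ne_top hP x)),
        ENNReal.toReal_mul, ENNReal.toReal_mul,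
        ENNReal.toReal_ofReal h1δpos.le, ENNReal.toReal_ofReal hδ0.le]
    have hq2'toReal : ∀ y, (q2' y).toReal = (1-δ) * (q2 y).toReal + δ * (margY P y).toReal := by
      intro y
      simp only [hq2'def]
      rw [ENNReal.toReal_add (ENNReal.mul_ne_top ENNReal.ofReal_ne_top (pmf_ne_top hq2 y))
        (ENNReal.mul_ne_top ENNReal.ofReal_ne_top (margY_ne_top hP y)),
        ENNReal.toReal_mul, ENNReal.toReal_mul,
        ENNReal.toReal_ofReal h1δpos.le, ENNReal.toReal_ofReal hδ0.le]
    -- basic positivity on the support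
    have hsupp : ∀ p : X × Y, p ∈ suppP P →
        0 < (P p).toReal ∧ 0 < (margX P p.1).toReal ∧ 0 < (margY P p.2).toReal := by
      intro p hp
      rw [mem_suppP] at hp
      have hm1 : margX P p.1 ≠ 0 := fun h => hp (le_antisymm (h ▸ le_margX p) (zero_le))
      have hm2 : margY P p.2 ≠ 0 := fun h => hp (le_antisymm (h ▸ le_margY p) (zero_le))
      exact ⟨ENNReal.toReal_pos hp (hPt p),
        ENNReal.toReal_pos hm1 (margX_ne_top hP p.1),
        ENNReal.toReal_pos hm2 (margY_ne_top hP p.2)⟩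
    -- the primed product in real terms
    set q'r : X × Y → ℝ := fun p => (q1' p.1).toReal * (q2' p.2).toReal with hq'r
    have hq'pos : ∀ p ∈ suppP P, 0 < q'r p := by
      intro p hp
      obtain ⟨_, hm1, hm2⟩ := hsupp p hp
      apply mul_pos
      · rw [hq1'toReal]
        have h01 : 0 ≤ (1-δ) * (q1 p.1).toReal := by positivity
        have h02 : 0 < δ * (margX P p.1).toReal := mul_pos hδ0 hm1
        linarith
      · rw [hq2'toReal]
        have h01 : 0 ≤ (1-δ) * (q2 p.2).toReal := by positivity
        have h02 : 0 < δ * (margY P p.2).toReal := mul_pos hδ0 hm2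
        linarith
    have hq'le1 : ∀ p : X × Y, q'r p ≤ 1 := by
      intro p
      have h1 : (q1' p.1).toReal ≤ 1 := pmf_toReal_le_one hsum1' p.1
      have h2 : (q2' p.2).toReal ≤ 1 := pmf_toReal_le_one hsum2' p.2
      have h1n : 0 ≤ (q1' p.1).toReal := ENNReal.toReal_nonneg
      have h2n : 0 ≤ (q2' p.2).toReal := ENNReal.toReal_nonneg
      simp only [hq'r]
      exact mul_le_one₀ h1 h2n h2
    have hq'lower : ∀ p ∈ suppP P,
        δ^2 * ((margX P p.1).toReal * (margY P p.2).toReal) ≤ q'r p := by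
      intro p hp
      have e1 : δ * (margX P p.1).toReal ≤ (q1' p.1).toReal := by
        rw [hq1'toReal]
        have : 0 ≤ (1-δ) * (q1 p.1).toReal := by positivity
        linarith
      have e2 : δ * (margY P p.2).toReal ≤ (q2' p.2).toReal := by
        rw [hq2'toReal]
        have : 0 ≤ (1-δ) * (q2 p.2).toReal := by positivity
        linarith
      simp only [hq'r]
      calc δ^2 * ((margX P p.1).toReal * (margY P p.2).toReal)
          = (δ * (margX P p.1).toReal) * (δ * (margY P p.2).toReal) := by ring
        _ ≤ (q1' p.1).toReal * (q2' p.2).toReal :=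
            mul_le_mul e1 e2 (by positivity) ENNReal.toReal_nonneg
    have hqle : ∀ p : X × Y, (1-δ)^2 * (q p).toReal ≤ q'r p := by
      intro p
      have e1 : (1-δ) * (q1 p.1).toReal ≤ (q1' p.1).toReal := by
        rw [hq1'toReal]
        have : 0 ≤ δ * (margX P p.1).toReal := by positivity
        linarith
      have e2 : (1-δ) * (q2 p.2).toReal ≤ (q2' p.2).toReal := by
        rw [hq2'toReal]
        have : 0 ≤ δ * (margY P p.2).toReal := by positivity
        linarith
      simp only [hq'r, hqdef, ENNReal.toReal_mul]
      calc (1-δ)^2 * ((q1 p.1).toReal * (q2 p.2).toReal)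
          = ((1-δ) * (q1 p.1).toReal) * ((1-δ) * (q2 p.2).toReal) := by ring
        _ ≤ (q1' p.1).toReal * (q2' p.2).toReal :=
            mul_le_mul e1 e2 (by positivity) ENNReal.toReal_nonneg
    -- the log-ratio and its bound
    set L : X × Y → ℝ := fun p => Real.log (P p).toReal - Real.log (q'r p) with hL
    have hLbound : ∀ p ∈ suppP P, |L p| ≤ B - 1 := by
      intro p hp
      obtain ⟨hpr, hm1, hm2⟩ := hsupp p hp
      have hq'p := hq'pos p hp
      have hlogp : |Real.log (P p).toReal| ≤ B1 := by
        rw [hB1]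
        exact Finset.single_le_sum (f := fun p => |Real.log (P p).toReal|)
          (fun p _ => abs_nonneg _) hp
      have hlogm : |Real.log ((margX P p.1).toReal * (margY P p.2).toReal)| ≤ B2 := by
        rw [hB2]
        exact Finset.single_le_sum
          (f := fun p => |Real.log ((margX P p.1).toReal * (margY P p.2).toReal)|)
          (fun p _ => abs_nonneg _) hp
      have hup : Real.log (q'r p) ≤ 0 := Real.log_nonpos hq'p.le (hq'le1 p)
      have hlow : 2 * Real.log δ + Real.log ((margX P p.1).toReal * (margY P p.2).toReal)
          ≤ Real.log (q'r p) := by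
        have hmm : 0 < (margX P p.1).toReal * (margY P p.2).toReal := mul_pos hm1 hm2
        have h2 := Real.log_le_log (by positivity) (hq'lower p hp)
        rwa [Real.log_mul (by positivity) hmm.ne', show δ^2 = δ^(2:ℕ) from rfl,
          Real.log_pow] at h2
      have hlogq' : |Real.log (q'r p)| ≤ 2*|Real.log δ| + B2 := by
        rw [abs_le]
        constructor
        · have : -|Real.log δ| ≤ Real.log δ := neg_abs_le _
          have h2 : -B2 ≤ Real.log ((margX P p.1).toReal * (margY P p.2).toReal) :=
            neg_le_of_abs_le hlogm |>.trans_eq rfl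
          linarith
        · linarith [abs_nonneg (Real.log δ), hB2nn]
      calc |L p| ≤ |Real.log (P p).toReal| + |Real.log (q'r p)| := abs_sub _ _
        _ ≤ B1 + (2*|Real.log δ| + B2) := add_le_add hlogp hlogq'
        _ = B - 1 := by rw [hB]; ring
    -- step A and B setup
    set w : ℝ := ((1-δ)^2)⁻¹ with hw
    have hwpos : 0 < w := by positivity
    set T' : ℝ := ∑ p ∈ suppP P, (P p).toReal ^ α * (q'r p) ^ (1-α) with hT'
    have hT'pos : 0 < T' := by
      apply Finset.sum_pos
      · intro p hp
        exact mul_pos (Real.rpow_pos_of_pos (hsupp p hp).1 _)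
          (Real.rpow_pos_of_pos (hq'pos p hp) _)
      · exact suppP_nonempty hP
    have stepA : T ≤ w ^ (1-α) * T' := by
      rw [hT', Finset.mul_sum]
      apply Finset.sum_le_sum
      intro p hp
      have hqr1 : (q p).toReal ≤ q'r p * w := by
        have h2 := mul_le_mul_of_nonneg_left (hqle p) hwpos.le
        rwa [← mul_assoc, hw, inv_mul_cancel₀ (pow_ne_zero 2 h1δpos.ne'), one_mul,
          mul_comm (((1-δ)^2)⁻¹) (q'r p)] at h2
      have h3 : (q p).toReal ^ (1-α) ≤ (q'r p * w) ^ (1-α) :=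
        Real.rpow_le_rpow ENNReal.toReal_nonneg hqr1 h1α.le
      have h4 : (q'r p * w) ^ (1-α) = (q'r p) ^ (1-α) * w ^ (1-α) :=
        Real.mul_rpow (hq'pos p hp).le hwpos.le
      calc (P p).toReal ^ α * (q p).toReal ^ (1-α)
          ≤ (P p).toReal ^ α * ((q'r p) ^ (1-α) * w ^ (1-α)) := by
            rw [← h4]
            exact mul_le_mul_of_nonneg_left h3 (Real.rpow_nonneg ENNReal.toReal_nonneg _)
        _ = w ^ (1-α) * ((P p).toReal ^ α * (q'r p) ^ (1-α)) := by ring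
    -- step B
    set K' : ℝ := ∑ p ∈ suppP P, (P p).toReal * L p with hK'
    have ht2 : ∀ p ∈ suppP P, |(α-1) * L p| ≤ (1-α) * B := by
      intro p hp
      rw [abs_mul, abs_of_neg (by linarith : α - 1 < 0)]
      have := hLbound p hp
      have hla : |L p| ≤ B := by linarith
      calc (-(α-1)) * |L p| = (1-α) * |L p| := by ring
        _ ≤ (1-α) * B := mul_le_mul_of_nonneg_left hla h1α.le
    have htle1 : (1-α) * B ≤ 1 := by
      have hθle : θ ≤ 1/(B+1) := hθ1
      have : (1-α) * B ≤ (1/(B+1)) * B := by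
        apply mul_le_mul_of_nonneg_right _ hBpos.le
        linarith
      have hB1 : (1/(B+1)) * B ≤ 1 := by
        rw [div_mul_eq_mul_div, one_mul, div_le_one (by linarith)]
        linarith
      linarith
    have stepB : T' ≤ 1 + ((α-1) * K' + (1-α)^2 * B^2) := by
      have hper : ∀ p ∈ suppP P, (P p).toReal ^ α * (q'r p) ^ (1-α)
          ≤ (P p).toReal + (P p).toReal * ((α-1) * L p) + (P p).toReal * ((1-α)^2 * B^2) := by
        intro p hp
        have hpr := (hsupp p hp).1
        rw [show (P p).toReal ^ α * (q'r p) ^ (1-α)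
            = (P p).toReal * Real.exp ((α-1) * L p) from rpow_term_eq hpr (hq'pos p hp) α]
        have htabs : |(α-1) * L p| ≤ 1 := (ht2 p hp).trans htle1
        have hexp := Real.abs_exp_sub_one_sub_id_le htabs
        have hexp2 : Real.exp ((α-1) * L p) ≤ 1 + (α-1) * L p + ((α-1) * L p)^2 := by
          have := (abs_le.1 hexp).2
          linarith
        have hsq : ((α-1) * L p)^2 ≤ (1-α)^2 * B^2 := by
          have h5 : |(α-1) * L p|^2 ≤ ((1-α) * B)^2 := by
            apply pow_le_pow_left₀ (abs_nonneg _) (ht2 p hp)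
          rw [sq_abs] at h5
          calc ((α-1) * L p)^2 ≤ ((1-α) * B)^2 := h5
            _ = (1-α)^2 * B^2 := by ring
        calc (P p).toReal * Real.exp ((α-1) * L p)
            ≤ (P p).toReal * (1 + (α-1) * L p + (1-α)^2 * B^2) := by
              apply mul_le_mul_of_nonneg_left _ hpr.le
              linarith
          _ = (P p).toReal + (P p).toReal * ((α-1) * L p) + (P p).toReal * ((1-α)^2 * B^2) := by
              ring
      calc T' ≤ ∑ p ∈ suppP P, ((P p).toReal + (P p).toReal * ((α-1) * L p)
            + (P p).toReal * ((1-α)^2 * B^2)) := Finset.sum_le_sum hper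
        _ = 1 + ((α-1) * K' + (1-α)^2 * B^2) := by
            rw [Finset.sum_add_distrib, Finset.sum_add_distrib]
            have e1 : ∑ p ∈ suppP P, (P p).toReal * ((α-1) * L p) = (α-1) * K' := by
              rw [hK', Finset.mul_sum]
              exact Finset.sum_congr rfl fun p _ => by ring
            have e2 : ∑ p ∈ suppP P, (P p).toReal * ((1-α)^2 * B^2) = (1-α)^2 * B^2 := by
              rw [← Finset.sum_mul, sum_toReal_suppP hP, one_mul]
            rw [e1, e2, sum_toReal_suppP hP]
            ring
    -- step C : K' at least the mutual information
    have hac' : ∀ p : X × Y, P p ≠ 0 → q1' p.1 * q2' p.2 ≠ 0 := by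
      intro p hp
      have hpos := hq'pos p (mem_suppP.2 hp)
      rw [hq'r] at hpos
      rcases mul_pos_iff.1 hpos with ⟨ha, hb⟩ | ⟨ha, hb⟩
      · apply mul_ne_zero
        · intro h; rw [h] at ha; simp at ha
        · intro h; rw [h] at hb; simp at hb
      · linarith [ENNReal.toReal_nonneg (a := q1' p.1)]
    have stepC : Ireal P ≤ K' := by
      refine (kl_ge_supp hP hsum1' hsum2' hac').trans_eq ?_
      rw [hK']
    -- assemble
    have hKI : (α-1) * K' ≤ (α-1) * Ireal P := mul_le_mul_of_nonpos_left stepC (by linarith)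
    have hlogT' : Real.log T' ≤ (α-1) * Ireal P + (1-α)^2 * B^2 := by
      have := Real.log_le_sub_one_of_pos hT'pos
      linarith
    have hlogw : Real.log w = ε/2 := by
      rw [hw, Real.log_inv, show (1-δ)^2 = (1-δ)^(2:ℕ) from rfl, Real.log_pow, hlog1δ]
      push_cast
      ring
    have hlogT : Real.log T ≤ (1-α) * (ε/2) + ((α-1) * Ireal P + (1-α)^2 * B^2) := by
      have h6 : Real.log T ≤ Real.log (w ^ (1-α) * T') := Real.log_le_log hTpos stepA
      rw [Real.log_mul (Real.rpow_pos_of_pos hwpos _).ne' hT'pos.ne',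
        Real.log_rpow hwpos, hlogw] at h6
      linarith
    have hαinv : (α-1)⁻¹ < 0 := inv_lt_zero.2 (by linarith)
    have h7 := mul_le_mul_of_nonpos_left hlogT hαinv.le
    have h8 : (α-1)⁻¹ * ((1-α) * (ε/2) + ((α-1) * Ireal P + (1-α)^2 * B^2))
        = Ireal P - ε/2 - (1-α) * B^2 := by
      have hne : α - 1 ≠ 0 := by linarith
      rw [inv_mul_eq_div, div_eq_iff hne]
      ring
    have h9 : (1-α) * B^2 ≤ ε/2 := by
      have hθle : θ ≤ (ε/2)/(B^2+1) := hθ2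
      have hB2pos : (0:ℝ) < B^2 := by positivity
      have h10 : (1-α) * B^2 ≤ ((ε/2)/(B^2+1)) * B^2 := by
        apply mul_le_mul_of_nonneg_right _ hB2pos.le
        linarith
      have h11 : ((ε/2)/(B^2+1)) * B^2 ≤ ε/2 := by
        rw [div_mul_eq_mul_div, div_le_iff₀ (by positivity)]
        nlinarith
      linarith
    rw [h8] at h7
    linarith

end Aux5
section Aux6
variable {X Y : Type*} [Fintype X] [Fintype Y] {P : X × Y → ℝ≥0∞}

lemma renyi_real_of_ac (hP : ∑ p, P p = 1) {q : X × Y → ℝ≥0∞} (hqt : ∀ p, q p ≠ ⊤)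
    (hac : ∀ p : X × Y, P p ≠ 0 → q p ≠ 0) {α : ℝ} (hα0 : 0 < α) (hα1 : α ≠ 1) :
    renyiDiv α P q = (((α-1)⁻¹ *
      Real.log (∑ p ∈ suppP P, (P p).toReal ^ α * (q p).toReal ^ (1-α)) : ℝ) : EReal) := by
  have hPt : ∀ p : X × Y, P p ≠ ⊤ := pmf_ne_top hP
  have hterm : ∀ p : X × Y, P p ^ α * q p ^ (1-α) ≠ ⊤ := by
    intro p
    by_cases hp : P p = 0
    · rw [hp, ENNReal.zero_rpow_of_pos hα0, zero_mul]
      exact ENNReal.zero_ne_top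
    · exact ENNReal.mul_ne_top (rpow_ne_top' hp (hPt p) α)
        (rpow_ne_top' (hac p hp) (hqt p) (1-α))
  have hS0 : (∑ p, P p ^ α * q p ^ (1-α)) ≠ 0 := by
    obtain ⟨p0, hp0⟩ := suppP_nonempty hP
    rw [mem_suppP] at hp0
    intro hzero
    have hterm0 := (Finset.sum_eq_zero_iff.1 hzero) p0 (Finset.mem_univ _)
    exact mul_ne_zero (rpow_ne_zero' hp0 (hPt p0) α)
      (rpow_ne_zero' (hac p0 hp0) (hqt p0) (1-α)) hterm0
  have hSt : (∑ p, P p ^ α * q p ^ (1-α)) ≠ ⊤ := by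
    intro h
    obtain ⟨p, _, hp⟩ := ENNReal.sum_eq_top.1 h
    exact hterm p hp
  rw [renyi_coe hα1 hS0 hSt, S_toReal hα0 hterm]

lemma marg_prod_ne_top (hP : ∑ p, P p = 1) (p : X × Y) :
    margX P p.1 * margY P p.2 ≠ ⊤ :=
  ENNReal.mul_ne_top (margX_ne_top hP p.1) (margY_ne_top hP p.2)

lemma Ireal_supp (hP : ∑ p, P p = 1) :
    Ireal P = ∑ p ∈ suppP P, (P p).toReal *
      (Real.log (P p).toReal - Real.log (margX P p.1 * margY P p.2).toReal) := by
  rw [Ireal]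
  rw [show (∑ p, (P p).toReal * Real.log ((P p).toReal / (margX P p.1 * margY P p.2).toReal))
      = ∑ p ∈ suppP P, (P p).toReal * Real.log ((P p).toReal / (margX P p.1 * margY P p.2).toReal) by
    symm
    apply Finset.sum_subset (Finset.subset_univ _)
    intro p _ hp
    rw [mem_suppP, not_not] at hp
    rw [hp]; simp]
  apply Finset.sum_congr rfl
  intro p hp
  rw [mem_suppP] at hp
  have hpr : 0 < (P p).toReal := ENNReal.toReal_pos hp (pmf_ne_top hP p)
  have hm : margX P p.1 * margY P p.2 ≠ 0 := fun h => hp (marg_ac p h)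
  have hmr : 0 < (margX P p.1 * margY P p.2).toReal :=
    ENNReal.toReal_pos hm (marg_prod_ne_top hP p)
  rw [Real.log_div hpr.ne' hmr.ne']

lemma tendsto_upper (hP : ∑ p, P p = 1) :
    Filter.Tendsto (fun α : ℝ => renyiDiv α P (fun p => margX P p.1 * margY P p.2))
      (nhdsWithin 1 ((Set.Ioi (0:ℝ)) \ {1})) (nhds ((Ireal P : ℝ) : EReal)) := by
  set m : X × Y → ℝ≥0∞ := fun p => margX P p.1 * margY P p.2 with hm
  set Φ : ℝ → ℝ := fun a => ∑ p ∈ suppP P, (P p).toReal ^ a * (m p).toReal ^ (1-a) with hΦ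
  have hsupp : ∀ p ∈ suppP P, 0 < (P p).toReal ∧ 0 < (m p).toReal := by
    intro p hp
    rw [mem_suppP] at hp
    refine ⟨ENNReal.toReal_pos hp (pmf_ne_top hP p), ?_⟩
    exact ENNReal.toReal_pos (fun h => hp (marg_ac p h)) (marg_prod_ne_top hP p)
  have hΦ1 : Φ 1 = 1 := by
    rw [hΦ]
    simp only [sub_self, Real.rpow_one, Real.rpow_zero, mul_one]
    exact sum_toReal_suppP hP
  have hderiv : HasDerivAt Φ (Ireal P) 1 := by
    have hsum : HasDerivAt Φ (∑ p ∈ suppP P,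
        ((P p).toReal ^ (1:ℝ) * Real.log (P p).toReal * (m p).toReal ^ (1-(1:ℝ))
          + (P p).toReal ^ (1:ℝ) * ((m p).toReal ^ (1-(1:ℝ)) * Real.log (m p).toReal * (-1)))) 1 := by
      apply HasDerivAt.fun_sum
      intro p hp
      obtain ⟨hpr, hmr⟩ := hsupp p hp
      have h1 : HasDerivAt (fun a : ℝ => (P p).toReal ^ a)
          ((P p).toReal ^ (1:ℝ) * Real.log (P p).toReal) 1 :=
        (Real.hasStrictDerivAt_const_rpow hpr 1).hasDerivAt
      have hg : HasDerivAt (fun a : ℝ => 1 - a) (-1) 1 := by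
        simpa using (hasDerivAt_id (1:ℝ)).const_sub 1
      have h2 : HasDerivAt (fun a : ℝ => (m p).toReal ^ (1-a))
          ((m p).toReal ^ (1-(1:ℝ)) * Real.log (m p).toReal * (-1)) 1 := by
        have := (Real.hasStrictDerivAt_const_rpow hmr (1-(1:ℝ))).hasDerivAt.comp 1 hg
        simpa [Function.comp_def] using this
      exact h1.mul h2
    have heq : (∑ p ∈ suppP P,
        ((P p).toReal ^ (1:ℝ) * Real.log (P p).toReal * (m p).toReal ^ (1-(1:ℝ))
          + (P p).toReal ^ (1:ℝ) * ((m p).toReal ^ (1-(1:ℝ)) * Real.log (m p).toReal * (-1))))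
        = Ireal P := by
      rw [Ireal_supp hP]
      apply Finset.sum_congr rfl
      intro p hp
      simp only [sub_self, Real.rpow_one, Real.rpow_zero, hm]
      ring
    rwa [heq] at hsum
  have hlogderiv : HasDerivAt (fun a => Real.log (Φ a)) (Ireal P) 1 := by
    have := hderiv.log (by rw [hΦ1]; norm_num)
    rwa [hΦ1, div_one] at this
  rw [hasDerivAt_iff_tendsto_slope] at hlogderiv
  have hslope : ∀ α : ℝ, α ≠ 1 → slope (fun a => Real.log (Φ a)) 1 α
      = (α-1)⁻¹ * Real.log (Φ α) := by
    intro α hα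
    rw [slope_def_field, hΦ1, Real.log_one, sub_zero, div_eq_inv_mul]
  have hmono : nhdsWithin (1:ℝ) ((Set.Ioi (0:ℝ)) \ {1}) ≤ nhdsWithin 1 {(1:ℝ)}ᶜ :=
    nhdsWithin_mono _ (fun x hx => hx.2)
  have htendR : Filter.Tendsto (fun α : ℝ => (α-1)⁻¹ * Real.log (Φ α))
      (nhdsWithin 1 ((Set.Ioi (0:ℝ)) \ {1})) (nhds (Ireal P)) := by
    apply Filter.Tendsto.congr' _ (hlogderiv.mono_left hmono)
    filter_upwards [self_mem_nhdsWithin] with α hα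
    exact hslope α hα.2
  have htendE : Filter.Tendsto (fun α : ℝ => (((α-1)⁻¹ * Real.log (Φ α) : ℝ) : EReal))
      (nhdsWithin 1 ((Set.Ioi (0:ℝ)) \ {1})) (nhds ((Ireal P : ℝ) : EReal)) :=
    EReal.tendsto_coe.2 htendR
  apply Filter.Tendsto.congr' _ htendE
  filter_upwards [self_mem_nhdsWithin] with α hα
  have hα0 : 0 < α := hα.1
  have hα1 : α ≠ 1 := hα.2
  have hac : ∀ p : X × Y, P p ≠ 0 → m p ≠ 0 := fun p hp h => hp (marg_ac p h)
  rw [renyi_real_of_ac hP (marg_prod_ne_top hP) hac hα0 hα1]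
end Aux6

/-- `J_1(X;Y) = I(X;Y)` and `J_α(X;Y) → I(X;Y)` as `α → 1`
(within the domain `(0, ∞)`). -/
theorem stmt9 {X Y : Type*} [Fintype X] [Fintype Y] (P : X × Y → ℝ≥0∞)
    (hP : ∑ p, P p = 1) :
    Jalpha 1 P = mutualInfo P ∧
    Filter.Tendsto (fun α : ℝ => Jalpha α P) (nhdsWithin 1 (Set.Ioi (0 : ℝ)))
      (nhds (mutualInfo P)) := by
  have hfin := mutualInfo_eq hP
  refine ⟨Jalpha_one hP, ?_⟩
  rw [hfin]
  have hsplit : Set.Ioi (0:ℝ) = ((Set.Ioi (0:ℝ)) \ {1}) ∪ {1} := by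
    rw [Set.diff_union_of_subset]
    exact Set.singleton_subset_iff.2 (by norm_num : (1:ℝ) ∈ Set.Ioi 0)
  rw [hsplit, nhdsWithin_union, Filter.tendsto_sup]
  constructor
  · -- punctured neighborhood
    rw [tendsto_order]
    constructor
    · intro b hb
      obtain ⟨r, hbr, hrI⟩ := EReal.exists_between_coe_real hb
      rw [EReal.coe_lt_coe_iff] at hrI
      set ε := Ireal P - r with hε
      have hεpos : 0 < ε := by rw [hε]; linarith
      obtain ⟨θ, hθpos, hθhalf, hθ⟩ := lower_lt_one hP hεpos
      have hnb : Set.Ioo (1-θ) (1+θ) ∈ nhds (1:ℝ) := Ioo_mem_nhds (by linarith) (by linarith)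
      filter_upwards [self_mem_nhdsWithin, mem_nhdsWithin_of_mem_nhds hnb] with α hα hαθ
      rcases lt_or_gt_of_ne hα.2 with h1 | h1
      · -- α < 1
        refine lt_of_lt_of_le hbr ?_
        have hre : ((r:ℝ) : EReal) = ((Ireal P - ε : ℝ) : EReal) := by
          rw [hε]; norm_num
        rw [hre]
        exact le_iInf fun Q => hθ α hαθ.1 h1 Q.1.1 Q.2.1 Q.1.2 Q.2.2
      · -- α > 1
        have hge : ((Ireal P : ℝ) : EReal) ≤ Jalpha α P :=
          le_iInf fun Q => lower_gt_one hP Q.1.2 Q.2.2 h1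
        calc b < (r : EReal) := hbr
          _ ≤ ((Ireal P : ℝ) : EReal) := EReal.coe_le_coe_iff.2 hrI.le
          _ ≤ _ := hge
    · intro b hb
      filter_upwards [(tendsto_upper hP).eventually_lt_const hb] with α hupper
      exact lt_of_le_of_lt (Jalpha_le_marg α hP) hupper
  · -- at the point itself
    rw [nhdsWithin_singleton]
    have hJ1 : Jalpha 1 P = ((Ireal P : ℝ) : EReal) := by rw [Jalpha_one hP, hfin]
    have h := tendsto_pure_nhds (fun α : ℝ => Jalpha α P) 1
    rwa [hJ1] at h
end

section
/- For α > 0, α ≠ 1, J_α(X;Y) = min over PMFs Q_X of (α/(α−1)) log Σ_y [ Σ_x P_XY(x,y)^α Q_X(x)^{1−α} ]^{1/α}; i.e., the inner minimization over Q_Y in the definition of J_α can be solved in closed form. -/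
open scoped ENNReal BigOperators
open Finset

open scoped Classical in
noncomputable def deltaPMF {Y : Type*} [Fintype Y] (y0 : Y) : PMFon Y :=
  ⟨fun y => if y = y0 then 1 else 0, by simp⟩

lemma pmf_le_one_s10 {Y : Type*} [Fintype Y] (Q : PMFon Y) (y : Y) : Q.1 y ≤ 1 :=
  le_trans (Finset.single_le_sum (fun i _ => zero_le) (Finset.mem_univ y)) (le_of_eq Q.2)

lemma pmf_ne_top_s10 {Y : Type*} [Fintype Y] (Q : PMFon Y) (y : Y) : Q.1 y ≠ ⊤ :=
  ne_top_of_le_ne_top ENNReal.one_ne_top (pmf_le_one_s10 Q y)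

lemma holder_lt {Y : Type*} [Fintype Y] (S Q : Y → ℝ≥0∞) {α : ℝ} (hα : 0 < α) (hlt : α < 1) :
    ∑ y, S y * Q y ^ (1 - α) ≤ (∑ y, S y ^ α⁻¹) ^ α * (∑ y, Q y) ^ (1 - α) := by
  have hne : (1 : ℝ) - α ≠ 0 := by linarith
  have hpq : (α⁻¹).HolderConjugate (1 - α)⁻¹ :=
    ⟨by rw [inv_inv, inv_inv, inv_one]; ring, inv_pos.2 hα, inv_pos.2 (by linarith)⟩
  have h := ENNReal.inner_le_Lp_mul_Lq Finset.univ S (fun y => Q y ^ (1 - α)) hpq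
  have h1 : ∀ y : Y, (Q y ^ (1 - α)) ^ (1 - α)⁻¹ = Q y := fun y => by
    rw [← ENNReal.rpow_mul, mul_inv_cancel₀ hne, ENNReal.rpow_one]
  simp only [h1, one_div, inv_inv] at h
  exact h

lemma holder_gt {Y : Type*} [Fintype Y] (S Q : Y → ℝ≥0∞) {α : ℝ} (hgt : 1 < α)
    (hz : ∀ y, Q y = 0 → S y = 0) (ht : ∀ y, Q y ≠ ⊤) :
    ∑ y, S y ^ α⁻¹ ≤ (∑ y, S y * Q y ^ (1 - α)) ^ α⁻¹ * (∑ y, Q y) ^ (1 - α⁻¹) := by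
  have hα : (0:ℝ) < α := lt_trans one_pos hgt
  have hinvlt : α⁻¹ < 1 := (inv_lt_one₀ hα).2 hgt
  have hne : (1 : ℝ) - α⁻¹ ≠ 0 := by linarith
  have hpq : α.HolderConjugate (1 - α⁻¹)⁻¹ := ⟨by rw [inv_inv, inv_one]; ring, hα, inv_pos.2 (by linarith)⟩
  have key : ∀ y, S y ^ α⁻¹ = (S y * Q y ^ (1 - α)) ^ α⁻¹ * Q y ^ (1 - α⁻¹) := by
    intro y
    rcases eq_or_ne (Q y) 0 with h0 | h0
    · rw [h0, hz y h0, zero_mul, ENNReal.zero_rpow_of_pos (inv_pos.2 hα),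
        ENNReal.zero_rpow_of_pos (by linarith : (0:ℝ) < 1 - α⁻¹), zero_mul]
    · rw [ENNReal.mul_rpow_of_nonneg _ _ (inv_pos.2 hα).le, ← ENNReal.rpow_mul,
        mul_assoc, ← ENNReal.rpow_add _ _ h0 (ht y)]
      have : (1 - α) * α⁻¹ + (1 - α⁻¹) = 0 := by field_simp; ring
      rw [this, ENNReal.rpow_zero, mul_one]
  calc ∑ y, S y ^ α⁻¹
      = ∑ y, (S y * Q y ^ (1 - α)) ^ α⁻¹ * Q y ^ (1 - α⁻¹) :=
        Finset.sum_congr rfl fun y _ => key y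
    _ ≤ (∑ y, ((S y * Q y ^ (1 - α)) ^ α⁻¹) ^ α) ^ (1/α)
        * (∑ y, (Q y ^ (1 - α⁻¹)) ^ (1 - α⁻¹)⁻¹) ^ (1/(1 - α⁻¹)⁻¹) :=
        ENNReal.inner_le_Lp_mul_Lq Finset.univ _ _ hpq
    _ = (∑ y, S y * Q y ^ (1 - α)) ^ α⁻¹ * (∑ y, Q y) ^ (1 - α⁻¹) := by
        have h1 : ∀ y : Y, ((S y * Q y ^ (1 - α)) ^ α⁻¹) ^ α = S y * Q y ^ (1 - α) := fun y => by
          rw [← ENNReal.rpow_mul, inv_mul_cancel₀ (ne_of_gt hα), ENNReal.rpow_one]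
        have h2 : ∀ y : Y, (Q y ^ (1 - α⁻¹)) ^ (1 - α⁻¹)⁻¹ = Q y := fun y => by
          rw [← ENNReal.rpow_mul, mul_inv_cancel₀ hne, ENNReal.rpow_one]
        simp only [h1, h2, one_div, inv_inv]

lemma inner_min {Y : Type*} [Fintype Y] [Nonempty Y] (S : Y → ℝ≥0∞) {α : ℝ}
    (hα : 0 < α) (hα1 : α ≠ 1) :
    ⨅ QY : PMFon Y, (((α - 1)⁻¹ : ℝ) : EReal) * ENNReal.log (∑ y, S y * QY.1 y ^ (1 - α))
      = ((α / (α - 1) : ℝ) : EReal) * ENNReal.log (∑ y, S y ^ (α⁻¹)) := by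
  haveI : Nonempty (PMFon Y) := ⟨deltaPMF (Classical.arbitrary Y)⟩
  set T := ∑ y, S y ^ (α⁻¹) with hT
  rcases eq_or_ne T 0 with hT0 | hT0
  · -- T = 0 : all S y = 0
    have hS : ∀ y, S y = 0 := by
      intro y
      have h2 : S y ^ α⁻¹ = 0 :=
        Finset.sum_eq_zero_iff.mp (hT.symm.trans hT0) y (Finset.mem_univ y)
      exact (ENNReal.rpow_eq_zero_iff_of_pos (inv_pos.2 hα)).mp h2
    have hval : ∀ QY : PMFon Y, (∑ y, S y * QY.1 y ^ (1 - α)) = 0 :=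
      fun QY => Finset.sum_eq_zero fun y _ => by rw [hS y, zero_mul]
    simp only [hval, ENNReal.log_zero, iInf_const, hT0, ENNReal.log_zero]
    rcases hα1.lt_or_gt with hlt | hgt
    · rw [EReal.coe_mul_bot_of_neg (by rw [inv_neg'']; linarith),
        EReal.coe_mul_bot_of_neg (div_neg_of_pos_of_neg hα (by linarith))]
    · rw [EReal.coe_mul_bot_of_pos (by rw [inv_pos]; linarith),
        EReal.coe_mul_bot_of_pos (div_pos hα (by linarith))]
  rcases eq_or_ne T ⊤ with hTt | hTt
  · -- T = ⊤
    obtain ⟨y0, -, hy0⟩ := ENNReal.sum_eq_top.mp (hT.symm.trans hTt)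
    have hy0top : S y0 = ⊤ := (ENNReal.rpow_eq_top_iff_of_pos (inv_pos.2 hα)).mp hy0
    rcases hα1.lt_or_gt with hlt | hgt
    · rw [hTt, ENNReal.log_top,
        EReal.coe_mul_top_of_neg (by exact_mod_cast div_neg_of_pos_of_neg hα (by linarith : α - 1 < 0))]
      refine le_antisymm (iInf_le_of_le (deltaPMF y0) ?_) bot_le
      have hterm : S y0 * (deltaPMF y0).1 y0 ^ (1 - α) = ⊤ := by
        simp [deltaPMF, hy0top]
      have hsum : (∑ y, S y * (deltaPMF y0).1 y ^ (1 - α)) = ⊤ := by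
        have hle := Finset.single_le_sum (f := fun y => S y * (deltaPMF y0).1 y ^ (1 - α))
          (fun i _ => zero_le) (Finset.mem_univ y0)
        exact top_le_iff.mp ((le_of_eq hterm.symm).trans hle)
      rw [hsum, ENNReal.log_top,
        EReal.coe_mul_top_of_neg (by exact_mod_cast (by rw [inv_neg'']; linarith : ((α-1)⁻¹:ℝ) < 0))]
    · have hval : ∀ QY : PMFon Y, (∑ y, S y * QY.1 y ^ (1 - α)) = ⊤ := by
        intro QY
        have hne : QY.1 y0 ^ (1 - α) ≠ 0 := by
          intro h
          rcases ENNReal.rpow_eq_zero_iff.mp h with ⟨-, h2⟩ | ⟨h1, -⟩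
          · linarith
          · exact pmf_ne_top_s10 QY y0 h1
        have hterm : S y0 * QY.1 y0 ^ (1 - α) = ⊤ := by rw [hy0top, ENNReal.top_mul hne]
        have hle := Finset.single_le_sum (f := fun y => S y * QY.1 y ^ (1 - α))
          (fun i _ => zero_le) (Finset.mem_univ y0)
        exact top_le_iff.mp ((le_of_eq hterm.symm).trans hle)
      simp only [hval, ENNReal.log_top, iInf_const, hTt]
      rw [EReal.coe_mul_top_of_pos (by exact_mod_cast (by rw [inv_pos]; linarith : (0:ℝ) < (α-1)⁻¹)),
        EReal.coe_mul_top_of_pos (by exact_mod_cast div_pos hα (by linarith : (0:ℝ) < α - 1))]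
  · -- main case : 0 < T < ⊤
    have hSt : ∀ y, S y ≠ ⊤ := by
      intro y h
      apply hTt
      have h2 : S y ^ α⁻¹ = ⊤ := (ENNReal.rpow_eq_top_iff_of_pos (inv_pos.2 hα)).mpr h
      have hle := Finset.single_le_sum (f := fun y => S y ^ α⁻¹)
        (fun i _ => zero_le) (Finset.mem_univ y)
      exact top_le_iff.mp ((le_of_eq h2.symm).trans hle)
    have hSrt : ∀ y, S y ^ α⁻¹ ≠ ⊤ := fun y h =>
      hSt y ((ENNReal.rpow_eq_top_iff_of_pos (inv_pos.2 hα)).mp h)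
    have ht : 0 < T.toReal := ENNReal.toReal_pos hT0 hTt
    set t := T.toReal with htdef
    have hlogT : ENNReal.log T = (Real.log t : EReal) := by
      have h := ENNReal.log_ofReal_of_pos ht
      rwa [ENNReal.ofReal_toReal hTt] at h
    rw [hlogT, ← EReal.coe_mul]
    -- the optimal QY
    have hQsum : (∑ y, S y ^ α⁻¹ * T⁻¹) = 1 := by
      rw [← Finset.sum_mul, ← hT, ENNReal.mul_inv_cancel hT0 hTt]
    set Qstar : PMFon Y := ⟨fun y => S y ^ α⁻¹ * T⁻¹, hQsum⟩ with hQstar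
    have hMstar : (∑ y, S y * Qstar.1 y ^ (1 - α)) = T ^ α := by
      have hterm : ∀ y : Y, S y * (S y ^ α⁻¹ * T⁻¹) ^ (1 - α) = S y ^ α⁻¹ * T ^ (α - 1) := by
        intro y
        rcases eq_or_ne (S y) 0 with h0 | h0
        · rw [h0, zero_mul, ENNReal.zero_rpow_of_pos (inv_pos.2 hα), zero_mul]
        · rw [ENNReal.mul_rpow_of_ne_top (hSrt y) (ENNReal.inv_ne_top.2 hT0),
            ← ENNReal.rpow_mul, ENNReal.inv_rpow, ← ENNReal.rpow_neg, neg_sub, ← mul_assoc]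
          congr 1
          nth_rewrite 1 [← ENNReal.rpow_one (S y)]
          rw [← ENNReal.rpow_add _ _ h0 (hSt y)]
          congr 1
          field_simp
          ring
        -- result per-term
      calc (∑ y, S y * Qstar.1 y ^ (1 - α))
          = ∑ y, S y ^ α⁻¹ * T ^ (α - 1) := Finset.sum_congr rfl fun y _ => hterm y
        _ = T * T ^ (α - 1) := by rw [← Finset.sum_mul, ← hT]
        _ = T ^ α := by
            nth_rewrite 1 [← ENNReal.rpow_one T]
            rw [← ENNReal.rpow_add _ _ hT0 hTt]
            norm_num
    have hvalstar : (((α - 1)⁻¹ : ℝ) : EReal) * ENNReal.log (T ^ α)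
        = ((α / (α - 1) * Real.log t : ℝ) : EReal) := by
      rw [ENNReal.log_rpow, hlogT, ← EReal.coe_mul, ← EReal.coe_mul]
      congr 1
      rw [div_eq_mul_inv]
      ring
    have hlb : ∀ QY : PMFon Y, ((α / (α - 1) * Real.log t : ℝ) : EReal)
        ≤ (((α - 1)⁻¹ : ℝ) : EReal) * ENNReal.log (∑ y, S y * QY.1 y ^ (1 - α)) := by
      intro QY
      set M := ∑ y, S y * QY.1 y ^ (1 - α) with hM
      rcases hα1.lt_or_gt with hlt | hgt
      · -- α < 1
        have hc1neg : ((α - 1)⁻¹ : ℝ) < 0 := by rw [inv_neg'']; linarith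
        have hMle : M ≤ T ^ α := by
          have h := holder_lt S QY.1 hα hlt
          rwa [QY.2, ENNReal.one_rpow, mul_one, ← hT] at h
        have hMt : M ≠ ⊤ := ne_top_of_le_ne_top
          (fun h => hTt ((ENNReal.rpow_eq_top_iff_of_pos hα).mp h)) hMle
        rcases eq_or_ne M 0 with hM0 | hM0
        · rw [hM0, ENNReal.log_zero, EReal.coe_mul_bot_of_neg (by exact_mod_cast hc1neg)]
          exact le_top
        · have hlogM : ENNReal.log M = (Real.log M.toReal : EReal) := by
            have h := ENNReal.log_ofReal_of_pos (ENNReal.toReal_pos hM0 hMt)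
            rwa [ENNReal.ofReal_toReal hMt] at h
          rw [hlogM, ← EReal.coe_mul, EReal.coe_le_coe_iff]
          have hMr : M.toReal ≤ t ^ α := by
            have h := ENNReal.toReal_mono (fun h => hTt ((ENNReal.rpow_eq_top_iff_of_pos hα).mp h)) hMle
            rwa [← ENNReal.toReal_rpow] at h
          have hlogle : Real.log M.toReal ≤ α * Real.log t := by
            calc Real.log M.toReal ≤ Real.log (t ^ α) :=
                  Real.log_le_log (ENNReal.toReal_pos hM0 hMt) hMr
              _ = α * Real.log t := Real.log_rpow ht α
          have h2 : α / (α - 1) * Real.log t = (α - 1)⁻¹ * (α * Real.log t) := by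
            rw [div_eq_mul_inv]; ring
          rw [h2]
          exact mul_le_mul_of_nonpos_left hlogle hc1neg.le
      · -- α > 1
        have hc1pos : (0:ℝ) < (α - 1)⁻¹ := by rw [inv_pos]; linarith
        by_cases hz : ∀ y, QY.1 y = 0 → S y = 0
        · have hTle : T ^ α ≤ M := by
            have h := holder_gt S QY.1 hgt hz (pmf_ne_top_s10 QY)
            rw [QY.2, ENNReal.one_rpow, mul_one, ← hT] at h
            calc T ^ α ≤ (M ^ α⁻¹) ^ α := ENNReal.rpow_le_rpow h hα.le
              _ = M := by rw [← ENNReal.rpow_mul, inv_mul_cancel₀ (ne_of_gt hα), ENNReal.rpow_one]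
          rcases eq_or_ne M ⊤ with hMt | hMt
          · rw [hMt, ENNReal.log_top, EReal.coe_mul_top_of_pos (by exact_mod_cast hc1pos)]
            exact le_top
          · have hM0 : M ≠ 0 := by
              intro h
              rw [h] at hTle
              exact hT0 ((ENNReal.rpow_eq_zero_iff_of_pos hα).mp (le_antisymm hTle zero_le))
            have hlogM : ENNReal.log M = (Real.log M.toReal : EReal) := by
              have h := ENNReal.log_ofReal_of_pos (ENNReal.toReal_pos hM0 hMt)
              rwa [ENNReal.ofReal_toReal hMt] at h
            rw [hlogM, ← EReal.coe_mul, EReal.coe_le_coe_iff]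
            have hMr : t ^ α ≤ M.toReal := by
              have h := ENNReal.toReal_mono hMt hTle
              rwa [← ENNReal.toReal_rpow] at h
            have hlogle : α * Real.log t ≤ Real.log M.toReal := by
              calc α * Real.log t = Real.log (t ^ α) := (Real.log_rpow ht α).symm
                _ ≤ Real.log M.toReal := Real.log_le_log (Real.rpow_pos_of_pos ht α) hMr
            have h2 : α / (α - 1) * Real.log t = (α - 1)⁻¹ * (α * Real.log t) := by
              rw [div_eq_mul_inv]; ring
            rw [h2]
            exact mul_le_mul_of_nonneg_left hlogle hc1pos.le
        · -- some y with QY y = 0 but S y ≠ 0 : sum is ⊤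
          push_neg at hz
          obtain ⟨y1, hQ0, hS0⟩ := hz
          have hterm : S y1 * QY.1 y1 ^ (1 - α) = ⊤ := by
            rw [hQ0, ENNReal.zero_rpow_of_neg (by linarith : (1:ℝ) - α < 0), ENNReal.mul_top hS0]
          have hMtop : M = ⊤ := by
            have hle := Finset.single_le_sum (f := fun y => S y * QY.1 y ^ (1 - α))
              (fun i _ => zero_le) (Finset.mem_univ y1)
            exact top_le_iff.mp ((le_of_eq hterm.symm).trans hle)
          rw [hMtop, ENNReal.log_top,
            EReal.coe_mul_top_of_pos (by exact_mod_cast ((by rw [inv_pos]; linarith : (0:ℝ) < (α-1)⁻¹)))]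
          exact le_top
    refine le_antisymm (le_trans (iInf_le _ Qstar) ?_) (le_iInf hlb)
    rw [hMstar, hvalstar]

/-- closed form for the inner minimization over `Q_Y` in `J_α`. -/
theorem stmt10 {X Y : Type*} [Fintype X] [Fintype Y] (P : X × Y → ℝ≥0∞)
    (hP : ∑ p, P p = 1) (α : ℝ) (hα : 0 < α) (hα1 : α ≠ 1) :
    Jalpha α P =
      ⨅ QX : PMFon X,
        ((α / (α - 1) : ℝ) : EReal) *
          ENNReal.log (∑ y, (∑ x, P (x, y) ^ α * QX.1 x ^ (1 - α)) ^ (α⁻¹)) := by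
  have hYne : Nonempty Y := by
    by_contra h
    rw [not_nonempty_iff] at h
    rw [Finset.univ_eq_empty, Finset.sum_empty] at hP
    exact one_ne_zero hP.symm
  rw [Jalpha, iInf_prod]
  refine iInf_congr fun QX => ?_
  have hre : ∀ QY : PMFon Y, renyiDiv α P (fun p => QX.1 p.1 * QY.1 p.2)
      = (((α - 1)⁻¹ : ℝ) : EReal) *
        ENNReal.log (∑ y, (∑ x, P (x, y) ^ α * QX.1 x ^ (1 - α)) * QY.1 y ^ (1 - α)) := by
    intro QY
    rw [renyiDiv, if_neg hα1]
    congr 1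
    have h1 : ∀ (x : X) (y : Y), P (x, y) ^ α * (QX.1 x * QY.1 y) ^ (1 - α)
        = P (x, y) ^ α * QX.1 x ^ (1 - α) * QY.1 y ^ (1 - α) := fun x y => by
      rw [ENNReal.mul_rpow_of_ne_top (pmf_ne_top_s10 QX x) (pmf_ne_top_s10 QY y), ← mul_assoc]
    rw [Fintype.sum_prod_type]
    simp only [h1]
    exact congrArg ENNReal.log (Eq.trans Finset.sum_comm
      (Finset.sum_congr rfl fun y _ => (Finset.sum_mul _ _ _).symm))
  simp only [hre]
  exact inner_min _ hα hα1
end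

section
/- For α ≥ 1 and fixed conditional PMF P_{Y|X}, the map P_X ↦ J_α(P_X P_{Y|X}) is concave: J_α((λP_{X1} + (1−λ)P_{X2}) P_{Y|X}) ≥ λ J_α(P_{X1} P_{Y|X}) + (1−λ) J_α(P_{X2} P_{Y|X}) for λ ∈ (0,1). -/
open scoped ENNReal BigOperators
open Finset

lemma gibbs_aux {ι : Type*} [Fintype ι] (p q : ι → ℝ) (hp : ∀ i, 0 ≤ p i) (hq : ∀ i, 0 ≤ q i)
    (hac : ∀ i, q i = 0 → p i = 0) (hpsum : ∑ i, p i = 1) (hqsum : ∑ i, q i ≤ 1) :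
    0 ≤ ∑ i, p i * Real.log (p i / q i) := by
  have key : ∀ i, p i * Real.log (q i / p i) ≤ q i - p i := by
    intro i
    rcases eq_or_lt_of_le (hp i) with h | h
    · simp [← h, hq i]
    · have hqi : 0 < q i := by
        rcases eq_or_lt_of_le (hq i) with h' | h'
        · exact absurd (hac i h'.symm) (by positivity)
        · exact h'
      have h2 : Real.log (q i / p i) ≤ q i / p i - 1 :=
        Real.log_le_sub_one_of_pos (by positivity)
      calc p i * Real.log (q i / p i) ≤ p i * (q i / p i - 1) :=
            mul_le_mul_of_nonneg_left h2 (hp i)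
        _ = q i - p i := by field_simp
  have h1 : ∑ i, p i * Real.log (q i / p i) ≤ 0 := by
    calc ∑ i, p i * Real.log (q i / p i) ≤ ∑ i, (q i - p i) :=
          Finset.sum_le_sum fun i _ => key i
      _ = (∑ i, q i) - ∑ i, p i := by rw [Finset.sum_sub_distrib]
      _ ≤ 0 := by rw [hpsum]; linarith
  have h2 : ∀ i, p i * Real.log (p i / q i) = - (p i * Real.log (q i / p i)) := by
    intro i
    rcases eq_or_lt_of_le (hp i) with h | h
    · simp [← h]
    · rw [show p i / q i = (q i / p i)⁻¹ by rw [inv_div], Real.log_inv]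
      ring
  simp only [h2, Finset.sum_neg_distrib]
  linarith

lemma log_concave_mix {s1 s2 l : ℝ} (h1 : 0 < s1) (h2 : 0 < s2) (hl0 : 0 < l) (hl1 : l < 1) :
    l * Real.log s1 + (1 - l) * Real.log s2 ≤ Real.log (l * s1 + (1 - l) * s2) := by
  have h : l • Real.log s1 + (1 - l) • Real.log s2 ≤ Real.log (l • s1 + (1 - l) • s2) :=
    (strictConcaveOn_log_Ioi.concaveOn).2 (Set.mem_Ioi.2 h1) (Set.mem_Ioi.2 h2)
      hl0.le (by linarith) (by ring)
  simpa [smul_eq_mul] using h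

lemma pmf_le_one_s13 {ι : Type*} [Fintype ι] {f : ι → ℝ≥0∞} (hf : ∑ i, f i = 1) (i : ι) : f i ≤ 1 :=
  hf ▸ Finset.single_le_sum (fun _ _ => zero_le) (mem_univ i)

lemma pmf_ne_top_s13 {ι : Type*} [Fintype ι] {f : ι → ℝ≥0∞} (hf : ∑ i, f i = 1) (i : ι) : f i ≠ ⊤ :=
  (lt_of_le_of_lt (pmf_le_one_s13 hf i) ENNReal.one_lt_top).ne

lemma pmf_exists_ne_zero {ι : Type*} [Fintype ι] {f : ι → ℝ≥0∞} (hf : ∑ i, f i = 1) :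
    ∃ i, f i ≠ 0 := by
  by_contra h
  push_neg at h
  rw [Finset.sum_eq_zero (fun i _ => h i)] at hf
  exact one_ne_zero hf.symm

/-- for `α ≥ 1` and a fixed channel `P_{Y|X} = W`, `J_α` is concave in the
input distribution `P_X`. -/
theorem stmt13 {X Y : Type*} [Fintype X] [Fintype Y]
    (W : X → Y → ℝ≥0∞) (hW : ∀ x, ∑ y, W x y = 1)
    (PX1 PX2 : X → ℝ≥0∞) (hPX1 : ∑ x, PX1 x = 1) (hPX2 : ∑ x, PX2 x = 1)
    (α : ℝ) (hα : 1 ≤ α) (l : ℝ) (hl0 : 0 < l) (hl1 : l < 1) :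
    ((l : ℝ) : EReal) * Jalpha α (fun p : X × Y => PX1 p.1 * W p.1 p.2) +
        ((1 - l : ℝ) : EReal) * Jalpha α (fun p : X × Y => PX2 p.1 * W p.1 p.2) ≤
      Jalpha α (fun p : X × Y =>
        (ENNReal.ofReal l * PX1 p.1 + ENNReal.ofReal (1 - l) * PX2 p.1) * W p.1 p.2) := by
  classical
  have hl1' : (0:ℝ) < 1 - l := by linarith
  set Pm : X → ℝ≥0∞ := fun x => ENNReal.ofReal l * PX1 x + ENNReal.ofReal (1 - l) * PX2 x
    with hPmdef
  have hofl : ENNReal.ofReal l ≠ 0 := by simp [ENNReal.ofReal_eq_zero]; linarith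
  have hPmsum : ∑ x, Pm x = 1 := by
    simp only [hPmdef, Finset.sum_add_distrib, ← Finset.mul_sum, hPX1, hPX2, mul_one]
    rw [← ENNReal.ofReal_add hl0.le hl1'.le]
    norm_num
  refine le_iInf ?_
  rintro ⟨⟨QX, hQX⟩, ⟨QY, hQY⟩⟩
  simp only at hQX hQY ⊢
  show ((l : ℝ) : EReal) * Jalpha α (fun p : X × Y => PX1 p.1 * W p.1 p.2) +
      ((1 - l : ℝ) : EReal) * Jalpha α (fun p : X × Y => PX2 p.1 * W p.1 p.2) ≤
    renyiDiv α (fun p : X × Y => Pm p.1 * W p.1 p.2) (fun p => QX p.1 * QY p.2)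
  have hWtop : ∀ x y, W x y ≠ ⊤ := fun x y => pmf_ne_top_s13 (hW x) y
  have hQYtop : ∀ y, QY y ≠ ⊤ := pmf_ne_top_s13 hQY
  have hQXtop : ∀ x, QX x ≠ ⊤ := pmf_ne_top_s13 hQX
  have hPmtop : ∀ x, Pm x ≠ ⊤ := pmf_ne_top_s13 hPmsum
  have hPmzero : ∀ x, Pm x = 0 ↔ (PX1 x = 0 ∧ PX2 x = 0) := by
    intro x
    simp [hPmdef, add_eq_zero, mul_eq_zero, hofl,
      (by simp [ENNReal.ofReal_eq_zero]; linarith : ENNReal.ofReal (1 - l) ≠ 0)]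
  rcases eq_or_lt_of_le hα with hα1 | hα1
  · -- α = 1 : KL divergence case
    subst hα1
    have hP1top : ∀ x, PX1 x ≠ ⊤ := pmf_ne_top_s13 hPX1
    have hP2top : ∀ x, PX2 x ≠ ⊤ := pmf_ne_top_s13 hPX2
    have ered : renyiDiv (1:ℝ) (fun p : X × Y => Pm p.1 * W p.1 p.2)
        (fun p => QX p.1 * QY p.2)
        = klDiv (fun p : X × Y => Pm p.1 * W p.1 p.2) (fun p => QX p.1 * QY p.2) := if_pos rfl
    rw [ered]
    by_cases hac : ∀ p : X × Y, QX p.1 * QY p.2 = 0 → Pm p.1 * W p.1 p.2 = 0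
    swap
    · exact le_top.trans_eq ((show klDiv (fun p : X × Y => Pm p.1 * W p.1 p.2)
        (fun p => QX p.1 * QY p.2) = ⊤ from if_neg hac).symm)
    -- absolute continuity facts
    have hQX0 : ∀ x, QX x = 0 → Pm x = 0 := by
      intro x h
      by_contra hPm
      obtain ⟨y, _, hy⟩ := Finset.exists_ne_zero_of_sum_ne_zero
        (by rw [hW x]; exact one_ne_zero : ∑ y, W x y ≠ 0)
      exact mul_ne_zero hPm hy (hac (x, y) (by simp [h]))
    have hQY0 : ∀ x y, Pm x ≠ 0 → W x y ≠ 0 → QY y ≠ 0 := by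
      intro x y hPm hw h
      exact mul_ne_zero hPm hw (hac (x, y) (by simp [h]))
    have hPmne : ∀ x, PX1 x ≠ 0 ∨ PX2 x ≠ 0 → Pm x ≠ 0 := by
      intro x h h0
      rcases h with h | h
      · exact h ((hPmzero x).1 h0).1
      · exact h ((hPmzero x).1 h0).2
    -- the channel-relative divergence d
    set d : X → ℝ := fun x => ∑ y, (W x y).toReal * Real.log ((W x y).toReal / (QY y).toReal)
      with hddef
    have hwsum : ∀ x, ∑ y, (W x y).toReal = 1 := by
      intro x
      rw [← ENNReal.toReal_sum (fun y _ => hWtop x y), hW x, ENNReal.toReal_one]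
    -- identity (1): value of KL(P_i W ‖ P_i ⊗ QY)
    have hkl_i : ∀ P : X → ℝ≥0∞, (∀ x, P x ≠ ⊤) → (∀ x, P x ≠ 0 → Pm x ≠ 0) →
        ∑ p : X × Y, (P p.1 * W p.1 p.2).toReal *
          Real.log ((P p.1 * W p.1 p.2).toReal / (P p.1 * QY p.2).toReal)
        = ∑ x, (P x).toReal * d x := by
      intro P hPtop hPPm
      rw [Fintype.sum_prod_type]
      refine Finset.sum_congr rfl fun x _ => ?_
      rw [hddef, Finset.mul_sum]
      refine Finset.sum_congr rfl fun y _ => ?_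
      rcases eq_or_ne (P x) 0 with h | h
      · simp [h]
      · rcases eq_or_ne (W x y) 0 with hw | hw
        · simp [hw]
        · have hqy : QY y ≠ 0 := hQY0 x y (hPPm x h) hw
          have hP : (0:ℝ) < (P x).toReal := ENNReal.toReal_pos h (hPtop x)
          rw [ENNReal.toReal_mul, ENNReal.toReal_mul,
            mul_div_mul_left _ _ (ne_of_gt hP)]
          ring
    -- identity (2): value of KL(Pm W ‖ QX ⊗ QY)
    have hklmix : ∑ p : X × Y, (Pm p.1 * W p.1 p.2).toReal *
          Real.log ((Pm p.1 * W p.1 p.2).toReal / (QX p.1 * QY p.2).toReal)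
        = (∑ x, (Pm x).toReal * Real.log ((Pm x).toReal / (QX x).toReal))
          + ∑ x, (Pm x).toReal * d x := by
      rw [Fintype.sum_prod_type, ← Finset.sum_add_distrib]
      refine Finset.sum_congr rfl fun x _ => ?_
      rcases eq_or_ne (Pm x) 0 with h | h
      · simp [h, hddef]
      · have hqx : QX x ≠ 0 := fun h0 => h (hQX0 x h0)
        have hpm : (0:ℝ) < (Pm x).toReal := ENNReal.toReal_pos h (hPmtop x)
        have hqxr : (0:ℝ) < (QX x).toReal := ENNReal.toReal_pos hqx (hQXtop x)
        have split : ∀ y, (Pm x * W x y).toReal *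
              Real.log ((Pm x * W x y).toReal / (QX x * QY y).toReal)
            = (Pm x).toReal * Real.log ((Pm x).toReal / (QX x).toReal) * (W x y).toReal
              + (Pm x).toReal *
                ((W x y).toReal * Real.log ((W x y).toReal / (QY y).toReal)) := by
          intro y
          rcases eq_or_ne (W x y) 0 with hw | hw
          · simp [hw]
          · have hqy : QY y ≠ 0 := hQY0 x y h hw
            have hwr : (0:ℝ) < (W x y).toReal := ENNReal.toReal_pos hw (hWtop x y)
            have hqyr : (0:ℝ) < (QY y).toReal := ENNReal.toReal_pos hqy (hQYtop y)
            rw [ENNReal.toReal_mul, ENNReal.toReal_mul, ← div_mul_div_comm,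
              Real.log_mul (by positivity) (by positivity)]
            ring
        rw [Finset.sum_congr rfl (fun y _ => split y), Finset.sum_add_distrib,
          ← Finset.mul_sum, ← Finset.mul_sum, hwsum x, mul_one, hddef]
    -- Gibbs inequality
    have hGibbs : 0 ≤ ∑ x, (Pm x).toReal * Real.log ((Pm x).toReal / (QX x).toReal) := by
      refine gibbs_aux _ _ (fun x => ENNReal.toReal_nonneg) (fun x => ENNReal.toReal_nonneg)
        ?_ ?_ ?_
      · intro x hx
        have : QX x = 0 := by
          rcases ENNReal.toReal_eq_zero_iff _ |>.1 hx with h | h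
          · exact h
          · exact absurd h (hQXtop x)
        rw [hQX0 x this]
        simp
      · rw [← ENNReal.toReal_sum (fun x _ => hPmtop x), hPmsum, ENNReal.toReal_one]
      · rw [← ENNReal.toReal_sum (fun x _ => hQXtop x), hQX, ENNReal.toReal_one]
    -- mixture decomposition for toReal
    have hmixR : ∀ x, (Pm x).toReal = l * (PX1 x).toReal + (1 - l) * (PX2 x).toReal := by
      intro x
      show ((ENNReal.ofReal l * PX1 x + ENNReal.ofReal (1 - l) * PX2 x)).toReal = _
      rw [ENNReal.toReal_add (ENNReal.mul_ne_top ENNReal.ofReal_ne_top (hP1top x))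
          (ENNReal.mul_ne_top ENNReal.ofReal_ne_top (hP2top x)),
        ENNReal.toReal_mul, ENNReal.toReal_mul, ENNReal.toReal_ofReal hl0.le,
        ENNReal.toReal_ofReal hl1'.le]
    have hmixsum : ∑ x, (Pm x).toReal * d x
        = l * ∑ x, (PX1 x).toReal * d x + (1 - l) * ∑ x, (PX2 x).toReal * d x := by
      rw [Finset.mul_sum, Finset.mul_sum, ← Finset.sum_add_distrib]
      refine Finset.sum_congr rfl fun x _ => ?_
      rw [hmixR x]
      ring
    -- bounds on J_1 and J_2
    have hbound : ∀ P : X → ℝ≥0∞, (∑ x, P x = 1) → (∀ x, P x ≠ 0 → Pm x ≠ 0) →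
        Jalpha 1 (fun p : X × Y => P p.1 * W p.1 p.2) ≤
          ((∑ x, (P x).toReal * d x : ℝ) : EReal) := by
      intro P hP hPPm
      have hPtop : ∀ x, P x ≠ ⊤ := pmf_ne_top_s13 hP
      have hJle : Jalpha 1 (fun p : X × Y => P p.1 * W p.1 p.2) ≤
          renyiDiv 1 (fun p : X × Y => P p.1 * W p.1 p.2) (fun p => P p.1 * QY p.2) :=
        iInf_le _ ((⟨⟨P, hP⟩, ⟨QY, hQY⟩⟩ : PMFon X × PMFon Y))
      refine hJle.trans ?_
      have haci : ∀ p : X × Y, P p.1 * QY p.2 = 0 → P p.1 * W p.1 p.2 = 0 := by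
        rintro ⟨x, y⟩ h
        rcases mul_eq_zero.1 h with h | h
        · simp [h]
        · rcases eq_or_ne (P x) 0 with h0 | h0
          · simp [h0]
          · rcases eq_or_ne (W x y) 0 with hw | hw
            · simp [hw]
            · exact absurd h (hQY0 x y (hPPm x h0) hw)
      have e1 : renyiDiv (1:ℝ) (fun p : X × Y => P p.1 * W p.1 p.2)
          (fun p => P p.1 * QY p.2)
          = klDiv (fun p : X × Y => P p.1 * W p.1 p.2) (fun p => P p.1 * QY p.2) := if_pos rfl
      have e2 : klDiv (fun p : X × Y => P p.1 * W p.1 p.2) (fun p => P p.1 * QY p.2)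
          = ((∑ p : X × Y, (P p.1 * W p.1 p.2).toReal *
              Real.log ((P p.1 * W p.1 p.2).toReal / (P p.1 * QY p.2).toReal) : ℝ) : EReal) :=
        if_pos haci
      rw [e1, e2, hkl_i P hPtop hPPm]
    have hJ1 := hbound PX1 hPX1 (fun x h => hPmne x (Or.inl h))
    have hJ2 := hbound PX2 hPX2 (fun x h => hPmne x (Or.inr h))
    calc ((l : ℝ) : EReal) * Jalpha 1 (fun p : X × Y => PX1 p.1 * W p.1 p.2)
          + ((1 - l : ℝ) : EReal) * Jalpha 1 (fun p : X × Y => PX2 p.1 * W p.1 p.2)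
        ≤ ((l : ℝ) : EReal) * ((∑ x, (PX1 x).toReal * d x : ℝ) : EReal)
          + ((1 - l : ℝ) : EReal) * ((∑ x, (PX2 x).toReal * d x : ℝ) : EReal) :=
          add_le_add (mul_le_mul_of_nonneg_left hJ1 (EReal.coe_nonneg.2 hl0.le))
            (mul_le_mul_of_nonneg_left hJ2 (EReal.coe_nonneg.2 hl1'.le))
      _ = (((l * ∑ x, (PX1 x).toReal * d x + (1 - l) * ∑ x, (PX2 x).toReal * d x) : ℝ) : EReal) := by
          norm_cast
      _ ≤ ((∑ p : X × Y, (Pm p.1 * W p.1 p.2).toReal *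
            Real.log ((Pm p.1 * W p.1 p.2).toReal / (QX p.1 * QY p.2).toReal) : ℝ) : EReal) :=
          EReal.coe_le_coe_iff.2 (by rw [hklmix, hmixsum]; linarith)
      _ = klDiv (fun p : X × Y => Pm p.1 * W p.1 p.2) (fun p => QX p.1 * QY p.2) :=
          (if_pos hac).symm
  · -- 1 < α
    have hα0 : (0:ℝ) < α := by linarith
    have hαne : α ≠ 1 := by intro h; rw [h] at hα1; exact lt_irrefl 1 hα1
    have h1a : ¬ ((0:ℝ) < 1 - α) := by simp; linarith
    have h1a' : (1:ℝ) - α < 0 := by linarith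
    set b : X → ℝ≥0∞ := fun x => ∑ y, W x y ^ α * QY y ^ (1 - α) with hbdef
    set c : X → ℝ≥0∞ := fun x => b x ^ α⁻¹ with hcdef
    have hbne0 : ∀ x, b x ≠ 0 := by
      intro x
      obtain ⟨y, _, hy⟩ := Finset.exists_ne_zero_of_sum_ne_zero
        (by rw [hW x]; exact one_ne_zero : ∑ y, W x y ≠ 0)
      have hterm : W x y ^ α * QY y ^ (1 - α) ≠ 0 := by
        apply mul_ne_zero
        · simp [ENNReal.rpow_eq_zero_iff, hy, hWtop x y]
        · simp [ENNReal.rpow_eq_zero_iff, hQYtop y, h1a]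
      intro h0
      have hle : W x y ^ α * QY y ^ (1 - α) ≤ b x :=
        Finset.single_le_sum (f := fun y => W x y ^ α * QY y ^ (1 - α))
          (fun _ _ => zero_le) (mem_univ y)
      rw [h0] at hle
      exact hterm (le_zero_iff.1 hle)
    have hcne0 : ∀ x, c x ≠ 0 := by
      intro x
      simp [hcdef, ENNReal.rpow_eq_zero_iff, hbne0 x, inv_pos.2 hα0, not_lt.2 (inv_pos.2 hα0).le]
    have hctop : ∀ x, b x ≠ ⊤ → c x ≠ ⊤ := by
      intro x h
      simp [hcdef, ENNReal.rpow_eq_top_iff, h, hbne0 x, not_lt.2 (inv_pos.2 hα0).le]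
    have hcb : ∀ x, c x ^ α = b x := by
      intro x
      show (b x ^ α⁻¹) ^ α = b x
      rw [← ENNReal.rpow_mul, inv_mul_cancel₀ (ne_of_gt hα0), ENNReal.rpow_one]
    have key : ∀ (R QX' : X → ℝ≥0∞), (∀ x, R x ≠ ⊤) → (∀ x, QX' x ≠ ⊤) →
        ∑ p : X × Y, (R p.1 * W p.1 p.2) ^ α * (QX' p.1 * QY p.2) ^ (1 - α)
          = ∑ x, R x ^ α * QX' x ^ (1 - α) * b x := by
      intro R QX' hR hQ
      rw [Fintype.sum_prod_type]
      refine Finset.sum_congr rfl fun x _ => ?_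
      show _ = R x ^ α * QX' x ^ (1 - α) * ∑ y, W x y ^ α * QY y ^ (1 - α)
      rw [Finset.mul_sum]
      refine Finset.sum_congr rfl fun y _ => ?_
      rw [ENNReal.mul_rpow_of_ne_top (hR x) (hWtop x y),
        ENNReal.mul_rpow_of_ne_top (hQ x) (hQYtop y)]
      ring
    simp only [renyiDiv, if_neg hαne]
    rw [key Pm QX hPmtop hQXtop]
    by_cases hdeg : ∃ x, Pm x ≠ 0 ∧ (QX x = 0 ∨ b x = ⊤)
    · -- degenerate : RHS = ⊤
      obtain ⟨x0, hx0, hcase⟩ := hdeg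
      have hTtop : ∑ x, Pm x ^ α * QX x ^ (1 - α) * b x = ⊤ := by
        refine ENNReal.sum_eq_top.2 ⟨x0, mem_univ _, ?_⟩
        have hPma : Pm x0 ^ α ≠ 0 := by
          simp [ENNReal.rpow_eq_zero_iff, hx0, hPmtop x0]
        rcases hcase with h0 | htop
        · rw [h0]
          have hz : (0:ℝ≥0∞) ^ (1 - α) = ⊤ := by
            simp [ENNReal.rpow_eq_top_iff, h1a']
          rw [hz, ENNReal.mul_top hPma, ENNReal.top_mul (hbne0 x0)]
        · have hQa : QX x0 ^ (1 - α) ≠ 0 := by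
            simp [ENNReal.rpow_eq_zero_iff, hQXtop x0, h1a]
          rw [htop, ENNReal.mul_top (mul_ne_zero hPma hQa)]
      rw [hTtop, ENNReal.log_top, EReal.coe_mul_top_of_pos (inv_pos.2 (by linarith : (0:ℝ) < α - 1))]
      exact le_top
    · push_neg at hdeg
      have hbc : ∀ x, Pm x ≠ 0 → c x ≠ ⊤ := fun x h => hctop x (hdeg x h).2
      have hc1 : ∀ x, PX1 x ≠ 0 → c x ≠ ⊤ := fun x h =>
        hbc x (fun h0 => h ((hPmzero x).1 h0).1)
      have hc2 : ∀ x, PX2 x ≠ 0 → c x ≠ ⊤ := fun x h =>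
        hbc x (fun h0 => h ((hPmzero x).1 h0).2)
      have main : ∀ P : X → ℝ≥0∞, (∑ x, P x = 1) → (∀ x, P x ≠ 0 → c x ≠ ⊤) →
          ((∑ x, P x * c x) ≠ 0 ∧ (∑ x, P x * c x) ≠ ⊤) ∧
          Jalpha α (fun p : X × Y => P p.1 * W p.1 p.2) ≤
            (((α - 1)⁻¹ * (α * Real.log (∑ x, P x * c x).toReal) : ℝ) : EReal) := by
        intro P hP hPc
        have hPtop : ∀ x, P x ≠ ⊤ := pmf_ne_top_s13 hP
        have hS0 : (∑ x, P x * c x) ≠ 0 := by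
          obtain ⟨x0, hx0⟩ := pmf_exists_ne_zero hP
          intro h0
          have hterm : P x0 * c x0 ≠ 0 := mul_ne_zero hx0 (hcne0 x0)
          have hle : P x0 * c x0 ≤ ∑ x, P x * c x :=
            Finset.single_le_sum (f := fun x => P x * c x) (fun _ _ => zero_le) (mem_univ x0)
          rw [h0] at hle
          exact hterm (le_zero_iff.1 hle)
        have hStop : (∑ x, P x * c x) ≠ ⊤ := by
          refine (ENNReal.sum_lt_top.2 fun x _ => ?_).ne
          rcases eq_or_ne (P x) 0 with h | h
          · simp [h]
          · exact ENNReal.mul_lt_top (hPtop x).lt_top (hPc x h).lt_top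
        refine ⟨⟨hS0, hStop⟩, ?_⟩
        set S := ∑ x, P x * c x with hSdef
        set QP : X → ℝ≥0∞ := fun x => P x * c x * S⁻¹ with hQPdef
        have hQPsum : ∑ x, QP x = 1 := by
          rw [hQPdef, ← Finset.sum_mul, ← hSdef, ENNReal.mul_inv_cancel hS0 hStop]
        have hQPtop : ∀ x, QP x ≠ ⊤ := by
          intro x
          rcases eq_or_ne (P x) 0 with h | h
          · simp [hQPdef, h]
          · exact ENNReal.mul_ne_top (ENNReal.mul_ne_top (hPtop x) (hPc x h))
              (ENNReal.inv_ne_top.2 hS0)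
        have hJle : Jalpha α (fun p : X × Y => P p.1 * W p.1 p.2) ≤
            renyiDiv α (fun p : X × Y => P p.1 * W p.1 p.2) (fun p => QP p.1 * QY p.2) :=
          iInf_le _ ((⟨⟨QP, hQPsum⟩, ⟨QY, hQY⟩⟩ : PMFon X × PMFon Y))
        refine hJle.trans ?_
        simp only [renyiDiv, if_neg hαne]
        rw [key P QP hPtop hQPtop]
        have hperx : ∀ x, P x ^ α * QP x ^ (1 - α) * b x = P x * c x * S ^ (α - 1) := by
          intro x
          rcases eq_or_ne (P x) 0 with h | h
          · simp [hQPdef, h, ENNReal.zero_rpow_of_pos hα0]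
          · have hcx : c x ≠ ⊤ := hPc x h
            have e1 : QP x ^ (1 - α) = P x ^ (1 - α) * c x ^ (1 - α) * S ^ (α - 1) := by
              rw [hQPdef]
              show (P x * c x * S⁻¹) ^ (1 - α) = _
              have hSinv : (S⁻¹ : ℝ≥0∞) ^ (1 - α) = S ^ (α - 1) := by
                rw [← ENNReal.rpow_neg_one S, ← ENNReal.rpow_mul]
                congr 1
                ring
              rw [ENNReal.mul_rpow_of_ne_top (ENNReal.mul_ne_top (hPtop x) hcx)
                    (ENNReal.inv_ne_top.2 hS0),
                ENNReal.mul_rpow_of_ne_top (hPtop x) hcx, hSinv]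
            rw [e1, ← hcb x]
            have e2 : P x ^ α * P x ^ (1 - α) = P x := by
              rw [← ENNReal.rpow_add _ _ h (hPtop x)]
              norm_num
            have e3 : c x ^ (1 - α) * c x ^ α = c x := by
              rw [← ENNReal.rpow_add _ _ (hcne0 x) hcx]
              norm_num
            calc P x ^ α * (P x ^ (1 - α) * c x ^ (1 - α) * S ^ (α - 1)) * c x ^ α
                = (P x ^ α * P x ^ (1 - α)) * (c x ^ (1 - α) * c x ^ α) * S ^ (α - 1) := by
                  ring
              _ = P x * c x * S ^ (α - 1) := by rw [e2, e3]
        rw [Finset.sum_congr rfl (fun x _ => hperx x), ← Finset.sum_mul, ← hSdef]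
        have hSS : S * S ^ (α - 1) = S ^ α := by
          calc S * S ^ (α - 1) = S ^ (1:ℝ) * S ^ (α - 1) := by rw [ENNReal.rpow_one]
            _ = S ^ (1 + (α - 1)) := (ENNReal.rpow_add _ _ hS0 hStop).symm
            _ = S ^ α := by norm_num
        rw [hSS, ENNReal.log_rpow, ENNReal.log_pos_real hS0 hStop]
        norm_cast
      obtain ⟨⟨hS1_0, hS1_top⟩, hJ1⟩ := main PX1 hPX1 hc1
      obtain ⟨⟨hS2_0, hS2_top⟩, hJ2⟩ := main PX2 hPX2 hc2
      have hMsplit : ∑ x, Pm x * c x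
          = ENNReal.ofReal l * (∑ x, PX1 x * c x) + ENNReal.ofReal (1 - l) * (∑ x, PX2 x * c x) := by
        rw [Finset.mul_sum, Finset.mul_sum, ← Finset.sum_add_distrib]
        refine Finset.sum_congr rfl fun x _ => ?_
        show (ENNReal.ofReal l * PX1 x + ENNReal.ofReal (1 - l) * PX2 x) * c x = _
        ring
      have hM0 : (∑ x, Pm x * c x) ≠ 0 := by
        rw [hMsplit]
        intro h
        exact hS1_0 ((mul_eq_zero.1 (add_eq_zero.1 h).1).resolve_left hofl)
      have hMtop : (∑ x, Pm x * c x) ≠ ⊤ := by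
        rw [hMsplit]
        exact ENNReal.add_ne_top.2 ⟨ENNReal.mul_ne_top ENNReal.ofReal_ne_top hS1_top,
          ENNReal.mul_ne_top ENNReal.ofReal_ne_top hS2_top⟩
      have hJen : (∑ x, Pm x * c x) ^ α ≤ ∑ x, Pm x ^ α * QX x ^ (1 - α) * b x := by
        have h1 : ∑ x, Pm x * c x = ∑ x, QX x * ((QX x)⁻¹ * (Pm x * c x)) := by
          refine Finset.sum_congr rfl fun x _ => ?_
          rcases eq_or_ne (Pm x) 0 with h | h
          · simp [h]
          · rw [← mul_assoc, ENNReal.mul_inv_cancel (hdeg x h).1 (hQXtop x), one_mul]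
        have h2 : ∀ x, QX x * ((QX x)⁻¹ * (Pm x * c x)) ^ α
            = Pm x ^ α * QX x ^ (1 - α) * b x := by
          intro x
          rcases eq_or_ne (Pm x) 0 with h | h
          · simp [h, ENNReal.zero_rpow_of_pos hα0]
          · have hq := (hdeg x h).1
            have hcx := hbc x h
            have hQinv : ((QX x)⁻¹ : ℝ≥0∞) ^ α = (QX x) ^ (-α) := by
              rw [← ENNReal.rpow_neg_one (QX x), ← ENNReal.rpow_mul]
              congr 1
              ring
            have e1 : ((QX x)⁻¹ * (Pm x * c x)) ^ α = QX x ^ (-α) * (Pm x ^ α * b x) := by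
              rw [ENNReal.mul_rpow_of_ne_top (ENNReal.inv_ne_top.2 hq)
                    (ENNReal.mul_ne_top (hPmtop x) hcx),
                ENNReal.mul_rpow_of_ne_top (hPmtop x) hcx, hQinv, hcb x]
            have e2 : QX x * QX x ^ (-α) = QX x ^ (1 - α) := by
              rw [show (1:ℝ) - α = 1 + (-α) by ring, ENNReal.rpow_add _ _ hq (hQXtop x),
                ENNReal.rpow_one]
            calc QX x * ((QX x)⁻¹ * (Pm x * c x)) ^ α
                = QX x * QX x ^ (-α) * (Pm x ^ α * b x) := by rw [e1]; ring
              _ = Pm x ^ α * QX x ^ (1 - α) * b x := by rw [e2]; ring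
        calc (∑ x, Pm x * c x) ^ α
            = (∑ x, QX x * ((QX x)⁻¹ * (Pm x * c x))) ^ α := by rw [← h1]
          _ ≤ ∑ x, QX x * ((QX x)⁻¹ * (Pm x * c x)) ^ α :=
              ENNReal.rpow_arith_mean_le_arith_mean_rpow univ _ _ hQX hα
          _ = ∑ x, Pm x ^ α * QX x ^ (1 - α) * b x := Finset.sum_congr rfl fun x _ => h2 x
      have hs1 : 0 < (∑ x, PX1 x * c x).toReal := ENNReal.toReal_pos hS1_0 hS1_top
      have hs2 : 0 < (∑ x, PX2 x * c x).toReal := ENNReal.toReal_pos hS2_0 hS2_top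
      have hm : (∑ x, Pm x * c x).toReal
          = l * (∑ x, PX1 x * c x).toReal + (1 - l) * (∑ x, PX2 x * c x).toReal := by
        rw [hMsplit, ENNReal.toReal_add (ENNReal.mul_ne_top ENNReal.ofReal_ne_top hS1_top)
            (ENNReal.mul_ne_top ENNReal.ofReal_ne_top hS2_top),
          ENNReal.toReal_mul, ENNReal.toReal_mul, ENNReal.toReal_ofReal hl0.le,
          ENNReal.toReal_ofReal hl1'.le]
      have hreal : l * ((α - 1)⁻¹ * (α * Real.log (∑ x, PX1 x * c x).toReal))
            + (1 - l) * ((α - 1)⁻¹ * (α * Real.log (∑ x, PX2 x * c x).toReal))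
          ≤ (α - 1)⁻¹ * (α * Real.log (∑ x, Pm x * c x).toReal) := by
        have hlog := log_concave_mix hs1 hs2 hl0 hl1
        have hC : (0:ℝ) ≤ (α - 1)⁻¹ * α := mul_nonneg (inv_nonneg.2 (by linarith)) hα0.le
        calc l * ((α - 1)⁻¹ * (α * Real.log (∑ x, PX1 x * c x).toReal))
              + (1 - l) * ((α - 1)⁻¹ * (α * Real.log (∑ x, PX2 x * c x).toReal))
            = ((α - 1)⁻¹ * α) * (l * Real.log (∑ x, PX1 x * c x).toReal
                + (1 - l) * Real.log (∑ x, PX2 x * c x).toReal) := by ring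
          _ ≤ ((α - 1)⁻¹ * α) * Real.log (l * (∑ x, PX1 x * c x).toReal
                + (1 - l) * (∑ x, PX2 x * c x).toReal) := mul_le_mul_of_nonneg_left hlog hC
          _ = (α - 1)⁻¹ * (α * Real.log (∑ x, Pm x * c x).toReal) := by rw [hm]; ring
      have hlogle : ((α : ℝ) : EReal) * ((Real.log (∑ x, Pm x * c x).toReal : ℝ) : EReal)
          ≤ ENNReal.log (∑ x, Pm x ^ α * QX x ^ (1 - α) * b x) := by
        have h := ENNReal.log_le_log_iff.2 hJen
        rwa [ENNReal.log_rpow, ENNReal.log_pos_real hM0 hMtop] at h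
      have hfinal : (((α - 1)⁻¹ * (α * Real.log (∑ x, Pm x * c x).toReal) : ℝ) : EReal)
          ≤ (((α - 1)⁻¹ : ℝ) : EReal) * ENNReal.log (∑ x, Pm x ^ α * QX x ^ (1 - α) * b x) := by
        calc (((α - 1)⁻¹ * (α * Real.log (∑ x, Pm x * c x).toReal) : ℝ) : EReal)
            = (((α - 1)⁻¹ : ℝ) : EReal) * (((α : ℝ) : EReal)
                * ((Real.log (∑ x, Pm x * c x).toReal : ℝ) : EReal)) := by norm_cast
          _ ≤ _ := mul_le_mul_of_nonneg_left hlogle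
                (EReal.coe_nonneg.2 (inv_nonneg.2 (by linarith)))
      calc ((l : ℝ) : EReal) * Jalpha α (fun p : X × Y => PX1 p.1 * W p.1 p.2)
            + ((1 - l : ℝ) : EReal) * Jalpha α (fun p : X × Y => PX2 p.1 * W p.1 p.2)
          ≤ ((l : ℝ) : EReal)
              * (((α - 1)⁻¹ * (α * Real.log (∑ x, PX1 x * c x).toReal) : ℝ) : EReal)
            + ((1 - l : ℝ) : EReal)
              * (((α - 1)⁻¹ * (α * Real.log (∑ x, PX2 x * c x).toReal) : ℝ) : EReal) :=
            add_le_add (mul_le_mul_of_nonneg_left hJ1 (EReal.coe_nonneg.2 hl0.le))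
              (mul_le_mul_of_nonneg_left hJ2 (EReal.coe_nonneg.2 hl1'.le))
        _ = (((l * ((α - 1)⁻¹ * (α * Real.log (∑ x, PX1 x * c x).toReal))
              + (1 - l) * ((α - 1)⁻¹ * (α * Real.log (∑ x, PX2 x * c x).toReal))) : ℝ) : EReal) := by
            norm_cast
        _ ≤ (((α - 1)⁻¹ * (α * Real.log (∑ x, Pm x * c x).toReal) : ℝ) : EReal) :=
            EReal.coe_le_coe_iff.2 hreal
        _ ≤ _ := hfinal
end

section
/- For a finite random variable X, J_α(X;X) = H_{α/(2α−1)}(X) if α > 1/2, and J_α(X;X) = (α/(1−α)) H_∞(X) if α ∈ (0, 1/2], where J_α(X;X) is computed for the joint PMF P_XY(x,y) = P_X(x) 1{x=y}. -/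
open scoped ENNReal BigOperators
open Finset

set_option linter.unusedSectionVars false
set_option maxHeartbeats 1000000

section Helpers
variable {X : Type*} [Fintype X]




/-- two-term weighted Hölder in ENNReal. -/
lemma wHolder2 {w : ℝ} (hw : 0 < w) (hw1 : w < 1) (a b : X → ℝ≥0∞) :
    ∑ x, a x ^ w * b x ^ (1 - w) ≤ (∑ x, a x) ^ w * (∑ x, b x) ^ (1 - w) := by
  have hw1' : 0 < 1 - w := by linarith
  have hpq : (1/w).HolderConjugate (1/(1-w)) := by
    constructor
    · simp only [one_div, inv_inv]; ring
    · positivity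
    · positivity
  have h := ENNReal.inner_le_Lp_mul_Lq Finset.univ (fun x => a x ^ w) (fun x => b x ^ (1-w)) hpq
  simp only [one_div_one_div] at h
  calc ∑ x, a x ^ w * b x ^ (1 - w)
      ≤ (∑ x, (a x ^ w) ^ (1/w)) ^ w * (∑ x, (b x ^ (1-w)) ^ (1/(1-w))) ^ (1-w) := h
    _ = (∑ x, a x) ^ w * (∑ x, b x) ^ (1 - w) := by
        congr 1
        · congr 1; apply Finset.sum_congr rfl; intro x _
          rw [← ENNReal.rpow_mul, mul_one_div, div_self hw.ne', ENNReal.rpow_one]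
        · congr 1; apply Finset.sum_congr rfl; intro x _
          rw [← ENNReal.rpow_mul, mul_one_div, div_self hw1'.ne', ENNReal.rpow_one]

/-- three-term weighted Hölder in ENNReal. -/
lemma wHolder3 {p q r : ℝ} (hp : 0 < p) (hq : 0 < q) (hr : 0 < r) (hpqr : p + q + r = 1)
    (a b c : X → ℝ≥0∞) :
    ∑ x, a x ^ p * b x ^ q * c x ^ r ≤ (∑ x, a x) ^ p * (∑ x, b x) ^ q * (∑ x, c x) ^ r := by
  set s := q + r with hs
  have hs0 : 0 < s := by positivity
  have hs1 : s < 1 := by simp only [hs]; linarith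
  have hps : p = 1 - s := by simp only [hs]; linarith
  have hd : ∀ x, a x ^ p * b x ^ q * c x ^ r
      = a x ^ p * (b x ^ (q/s) * c x ^ (r/s)) ^ s := by
    intro x
    rw [ENNReal.mul_rpow_of_nonneg _ _ hs0.le, ← ENNReal.rpow_mul, ← ENNReal.rpow_mul,
      div_mul_cancel₀ _ hs0.ne', div_mul_cancel₀ _ hs0.ne', mul_assoc]
  have h1 : ∑ x, a x ^ p * (b x ^ (q/s) * c x ^ (r/s)) ^ s
      ≤ (∑ x, a x) ^ p * (∑ x, b x ^ (q/s) * c x ^ (r/s)) ^ s := by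
    have := wHolder2 (w := 1 - s) (by linarith) (by linarith) a
      (fun x => b x ^ (q/s) * c x ^ (r/s))
    simp only [sub_sub_cancel] at this
    rw [hps]; exact this
  have h2 : ∑ x, b x ^ (q/s) * c x ^ (r/s) ≤ (∑ x, b x) ^ (q/s) * (∑ x, c x) ^ (r/s) := by
    have hqs : 0 < q/s := by positivity
    have hqs1 : q/s < 1 := by rw [div_lt_one hs0]; simp only [hs]; linarith
    have hrs : r/s = 1 - q/s := by
      field_simp
      simp only [hs]; ring
    rw [hrs]
    exact wHolder2 hqs hqs1 b c
  calc ∑ x, a x ^ p * b x ^ q * c x ^ r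
      = ∑ x, a x ^ p * (b x ^ (q/s) * c x ^ (r/s)) ^ s := by
        exact Finset.sum_congr rfl fun x _ => hd x
    _ ≤ (∑ x, a x) ^ p * (∑ x, b x ^ (q/s) * c x ^ (r/s)) ^ s := h1
    _ ≤ (∑ x, a x) ^ p * ((∑ x, b x) ^ (q/s) * (∑ x, c x) ^ (r/s)) ^ s := by
        exact mul_le_mul_right (ENNReal.rpow_le_rpow h2 hs0.le) _
    _ = (∑ x, a x) ^ p * (∑ x, b x) ^ q * (∑ x, c x) ^ r := by
        rw [ENNReal.mul_rpow_of_nonneg _ _ hs0.le, ← ENNReal.rpow_mul, ← ENNReal.rpow_mul,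
          div_mul_cancel₀ _ hs0.ne', div_mul_cancel₀ _ hs0.ne', mul_assoc]

/-- superadditivity of rpow on sums, r ≥ 1 -/
lemma sum_rpow_le_rpow_sum {r : ℝ} (hr : 1 ≤ r) (f : X → ℝ≥0∞) :
    ∑ x, f x ^ r ≤ (∑ x, f x) ^ r := by
  classical
  induction (Finset.univ : Finset X) using Finset.induction_on with
  | empty => simp [ENNReal.zero_rpow_of_pos (by linarith : (0:ℝ) < r)]
  | insert _ _ hx ih =>
      rw [Finset.sum_insert hx, Finset.sum_insert hx]
      calc _ ≤ _ ^ r + (∑ x ∈ _, f x) ^ r := by gcongr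
        _ ≤ _ := ENNReal.add_rpow_le_rpow_add _ _ hr

lemma infLogPos {ι : Type*} [Nonempty ι] {c : ℝ} (hc : 0 < c) (g : ι → ℝ≥0∞) {V : ℝ≥0∞}
    (hV0 : V ≠ 0) (hVt : V ≠ ⊤) (hlb : ∀ i, V ≤ g i) (hw : ∃ i, g i = V) :
    ⨅ i, (c : EReal) * ENNReal.log (g i) = (c : EReal) * ENNReal.log V := by
  apply le_antisymm
  · obtain ⟨i, hi⟩ := hw
    exact iInf_le_of_le i (by rw [hi])
  · refine le_iInf fun i => ?_
    rcases eq_or_ne (g i) ⊤ with h | h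
    · rw [h, ENNReal.log_top, EReal.coe_mul_top_of_pos hc]; exact le_top
    · have hgi0 : g i ≠ 0 := fun h0 => hV0 (le_antisymm (h0 ▸ hlb i) zero_le)
      rw [ENNReal.log_pos_real hV0 hVt, ENNReal.log_pos_real hgi0 h,
        ← EReal.coe_mul, ← EReal.coe_mul, EReal.coe_le_coe_iff]
      apply mul_le_mul_of_nonneg_left _ hc.le
      apply Real.log_le_log (ENNReal.toReal_pos hV0 hVt)
      exact ENNReal.toReal_le_toReal hVt h |>.2 (hlb i)

lemma infLogNeg {ι : Type*} [Nonempty ι] {c : ℝ} (hc : c < 0) (g : ι → ℝ≥0∞) {V : ℝ≥0∞}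
    (hV0 : V ≠ 0) (hVt : V ≠ ⊤) (hub : ∀ i, g i ≤ V) (hw : ∃ i, g i = V) :
    ⨅ i, (c : EReal) * ENNReal.log (g i) = (c : EReal) * ENNReal.log V := by
  apply le_antisymm
  · obtain ⟨i, hi⟩ := hw
    exact iInf_le_of_le i (by rw [hi])
  · refine le_iInf fun i => ?_
    rcases eq_or_ne (g i) 0 with h | h
    · rw [h, ENNReal.log_zero, EReal.coe_mul_bot_of_neg hc]; exact le_top
    · have hgit : g i ≠ ⊤ := fun h0 => hVt (top_le_iff.1 (h0 ▸ hub i))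
      rw [ENNReal.log_pos_real hV0 hVt, ENNReal.log_pos_real h hgit,
        ← EReal.coe_mul, ← EReal.coe_mul, EReal.coe_le_coe_iff]
      apply mul_le_mul_of_nonpos_left _ hc.le
      apply Real.log_le_log (ENNReal.toReal_pos h hgit)
      exact ENNReal.toReal_le_toReal hgit hVt |>.2 (hub i)

lemma gibbs (p q : X → ℝ) (hp : ∀ x, 0 ≤ p x) (hq : ∀ x, 0 ≤ q x) (hps : ∑ x, p x = 1)
    (hqs : ∑ x, q x ≤ 1) (hac : ∀ x, q x = 0 → p x = 0) :
    0 ≤ ∑ x, p x * Real.log (p x / q x) := by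
  have key : ∑ x, p x * Real.log (q x / p x) ≤ 0 := by
    calc ∑ x, p x * Real.log (q x / p x) ≤ ∑ x, (q x - p x) := by
          apply Finset.sum_le_sum
          intro x _
          rcases eq_or_lt_of_le (hp x) with h | h
          · simp [← h]; exact hq x
          · have hqx : 0 < q x := by
              rcases eq_or_lt_of_le (hq x) with h' | h'
              · exact absurd (hac x h'.symm) h.ne'
              · exact h'
            have := Real.log_le_sub_one_of_pos (div_pos hqx h)
            calc p x * Real.log (q x / p x) ≤ p x * (q x / p x - 1) := by
                  exact mul_le_mul_of_nonneg_left this h.le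
              _ = q x - p x := by field_simp
      _ ≤ 0 := by rw [Finset.sum_sub_distrib, hps]; linarith
  have heq : ∑ x, p x * Real.log (p x / q x) = -∑ x, p x * Real.log (q x / p x) := by
    rw [← Finset.sum_neg_distrib]
    apply Finset.sum_congr rfl
    intro x _
    rcases eq_or_lt_of_le (hp x) with h | h
    · simp [← h]
    · rw [← inv_div (q x) (p x), Real.log_inv, mul_neg]
  rw [heq]; linarith


variable [DecidableEq X]

lemma diag_sum {α : ℝ} (hα : 0 < α) (P Q1 Q2 : X → ℝ≥0∞) :
    ∑ p : X × X, (if p.1 = p.2 then P p.1 else 0) ^ α * (Q1 p.1 * Q2 p.2) ^ (1-α)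
    = ∑ x, P x ^ α * (Q1 x * Q2 x) ^ (1-α) := by
  rw [Fintype.sum_prod_type]
  apply Finset.sum_congr rfl
  intro x _
  rw [Finset.sum_eq_single x]
  · simp
  · intro y _ hy
    simp only []
    rw [if_neg (fun h : x = y => hy h.symm), ENNReal.zero_rpow_of_pos hα, zero_mul]
  · intro h; exact absurd (Finset.mem_univ x) h

section withP
variable {P : X → ℝ≥0∞} (hP : ∑ x, P x = 1)

include hP

lemma P_le_one : ∀ x, P x ≤ 1 := fun x =>
  hP ▸ Finset.single_le_sum (fun i _ => zero_le) (Finset.mem_univ x)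

lemma P_ne_top : ∀ x, P x ≠ ⊤ := fun x => ne_top_of_le_ne_top ENNReal.one_ne_top (P_le_one hP x)

lemma P_exists_ne : ∃ x, P x ≠ 0 := by
  by_contra h
  push_neg at h
  rw [Finset.sum_congr rfl (fun x _ => h x)] at hP
  simp at hP

lemma X_nonempty : Nonempty X := by
  rcases P_exists_ne hP with ⟨x, _⟩; exact ⟨x⟩

lemma T_ne_zero {β : ℝ} (hβ : 0 < β) : (∑ x, P x ^ β) ≠ 0 := by
  rcases P_exists_ne hP with ⟨x, hx⟩
  intro h
  rw [Finset.sum_eq_zero_iff] at h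
  have := h x (Finset.mem_univ x)
  rw [ENNReal.rpow_eq_zero_iff] at this
  rcases this with ⟨h1, _⟩ | ⟨h1, h2⟩
  · exact hx h1
  · exact P_ne_top hP x h1

lemma T_ne_top {β : ℝ} (hβ : 0 < β) : (∑ x, P x ^ β) ≠ ⊤ := by
  refine (lt_of_le_of_lt (Finset.sum_le_sum (fun x _ => ?_)) (by simp : (∑ _x : X, (1:ℝ≥0∞)) < ⊤)).ne
  exact ENNReal.rpow_le_one (P_le_one hP x) hβ.le

lemma optQ_sum {β : ℝ} (hβ : 0 < β) :
    ∑ x, P x ^ β * (∑ y, P y ^ β)⁻¹ = 1 := by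
  rw [← Finset.sum_mul]
  exact ENNReal.mul_inv_cancel (T_ne_zero hP hβ) (T_ne_top hP hβ)

lemma optQ_S {α : ℝ} (hα2 : 1/2 < α) (hα1 : α ≠ 1) :
    ∑ x, P x ^ α * ((P x ^ (α/(2*α-1)) * (∑ y, P y ^ (α/(2*α-1)))⁻¹) *
        (P x ^ (α/(2*α-1)) * (∑ y, P y ^ (α/(2*α-1)))⁻¹)) ^ (1-α)
    = (∑ x, P x ^ (α/(2*α-1))) ^ (2*α-1) := by
  have h2a : (0:ℝ) < 2*α - 1 := by linarith
  have hβ : 0 < α/(2*α-1) := div_pos (by linarith) h2a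
  set β := α/(2*α-1) with hβdef
  set T := ∑ y, P y ^ β with hT
  have hT0 : T ≠ 0 := T_ne_zero hP hβ
  have hTt : T ≠ ⊤ := T_ne_top hP hβ
  have key : ∀ x, P x ^ α * ((P x ^ β * T⁻¹) * (P x ^ β * T⁻¹)) ^ (1-α)
      = P x ^ β * T ^ (2*α-2) := by
    intro x
    rcases eq_or_ne (P x) 0 with h | h
    · rw [h, ENNReal.zero_rpow_of_pos (by linarith : (0:ℝ) < α),
        ENNReal.zero_rpow_of_pos hβ, zero_mul, zero_mul]
    · have hPt : P x ≠ ⊤ := P_ne_top hP x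
      have hb0 : P x ^ β ≠ 0 := by
        simp [ENNReal.rpow_eq_zero_iff, h, hPt, hβ, hβ.not_gt]
      have hbt : P x ^ β ≠ ⊤ := by
        simp [ENNReal.rpow_eq_top_iff, h, hPt, hβ, hβ.not_gt]
      have hi0 : T⁻¹ ≠ 0 := ENNReal.inv_ne_zero.2 hTt
      have hit : T⁻¹ ≠ ⊤ := ENNReal.inv_ne_top.2 hT0
      have hq0 : P x ^ β * T⁻¹ ≠ 0 := mul_ne_zero hb0 hi0
      have hqt : P x ^ β * T⁻¹ ≠ ⊤ := ENNReal.mul_ne_top hbt hit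
      have e1 : (P x ^ β * T⁻¹) ^ (1-α) = P x ^ (β*(1-α)) * T ^ (α-1) := by
        rw [ENNReal.mul_rpow_of_ne_top hbt hit, ← ENNReal.rpow_mul, ENNReal.inv_rpow,
          ← ENNReal.rpow_neg, neg_sub]
      have e2 : P x ^ β = P x ^ α * P x ^ (β*(1-α)) * P x ^ (β*(1-α)) := by
        rw [← ENNReal.rpow_add _ _ h hPt, ← ENNReal.rpow_add _ _ h hPt]
        congr 1
        rw [hβdef]
        linear_combination div_mul_cancel₀ α h2a.ne'
      have e3 : T ^ (2*α-2) = T ^ (α-1) * T ^ (α-1) := by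
        rw [← ENNReal.rpow_add _ _ hT0 hTt]; congr 1; ring
      rw [ENNReal.mul_rpow_of_ne_top hqt hqt, e1, e2, e3]; ring
  rw [Finset.sum_congr rfl (fun x _ => key x), ← Finset.sum_mul, ← hT]
  calc T * T ^ (2*α-2) = T ^ (1:ℝ) * T ^ (2*α-2) := by rw [ENNReal.rpow_one]
    _ = T ^ (1+(2*α-2)) := (ENNReal.rpow_add _ _ hT0 hTt).symm
    _ = T ^ (2*α-1) := by congr 1; ring


lemma S_ub_mid {α : ℝ} (hα2 : 1/2 < α) (hα1 : α < 1) (Q1 Q2 : X → ℝ≥0∞)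
    (hQ1 : ∑ x, Q1 x = 1) (hQ2 : ∑ x, Q2 x = 1) :
    ∑ x, P x ^ α * (Q1 x * Q2 x) ^ (1-α) ≤ (∑ x, P x ^ (α/(2*α-1))) ^ (2*α-1) := by
  have h2a : (0:ℝ) < 2*α - 1 := by linarith
  set β := α/(2*α-1) with hβdef
  have key : ∀ x, P x ^ α * (Q1 x * Q2 x) ^ (1-α)
      = (P x ^ β) ^ (2*α-1) * Q1 x ^ (1-α) * Q2 x ^ (1-α) := by
    intro x
    rw [← ENNReal.rpow_mul, ENNReal.mul_rpow_of_nonneg _ _ (by linarith : (0:ℝ) ≤ 1-α),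
      show β * (2*α-1) = α by rw [hβdef]; exact div_mul_cancel₀ _ h2a.ne', mul_assoc]
  rw [Finset.sum_congr rfl fun x _ => key x]
  calc ∑ x, (P x ^ β) ^ (2*α-1) * Q1 x ^ (1-α) * Q2 x ^ (1-α)
      ≤ (∑ x, P x ^ β) ^ (2*α-1) * (∑ x, Q1 x) ^ (1-α) * (∑ x, Q2 x) ^ (1-α) :=
        wHolder3 h2a (by linarith) (by linarith) (by ring) _ _ _
    _ = (∑ x, P x ^ β) ^ (2*α-1) := by rw [hQ1, hQ2, ENNReal.one_rpow, mul_one, mul_one]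

lemma S_lb_hi {α : ℝ} (hα : 1 < α) (Q1 Q2 : X → ℝ≥0∞)
    (hQ1 : ∑ x, Q1 x = 1) (hQ2 : ∑ x, Q2 x = 1) :
    (∑ x, P x ^ (α/(2*α-1))) ^ (2*α-1) ≤ ∑ x, P x ^ α * (Q1 x * Q2 x) ^ (1-α) := by
  have h2a : (0:ℝ) < 2*α - 1 := by linarith
  set β := α/(2*α-1) with hβdef
  set f : X → ℝ≥0∞ := fun x => P x ^ α * (Q1 x * Q2 x) ^ (1-α) with hf
  by_cases hz : ∃ x, P x ≠ 0 ∧ (Q1 x = 0 ∨ Q2 x = 0)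
  · obtain ⟨x, hx, hq⟩ := hz
    have hfx : f x = ⊤ := by
      have h1 : Q1 x * Q2 x = 0 := by rcases hq with h | h <;> simp [h]
      rw [hf]
      simp only []
      rw [h1, ENNReal.zero_rpow_of_neg (by linarith : (1:ℝ)-α < 0), ENNReal.mul_top]
      simp [ENNReal.rpow_eq_zero_iff, hx, P_ne_top hP x, (by linarith : (0:ℝ) < α),
        (by linarith : ¬ α < 0)]
    rw [show ∑ x, P x ^ α * (Q1 x * Q2 x) ^ (1-α) = ∑ x, f x from rfl]
    rw [ENNReal.sum_eq_top.2 ⟨x, Finset.mem_univ x, hfx⟩]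
    exact le_top
  · push_neg at hz
    set p0 := (2*α-1)⁻¹ with hp0
    set q0 := (α-1)/(2*α-1) with hq0
    have hp0p : 0 < p0 := by positivity
    have hq0p : 0 < q0 := div_pos (by linarith) h2a
    have key : ∀ x, f x ^ p0 * Q1 x ^ q0 * Q2 x ^ q0 = P x ^ β := by
      intro x
      rcases eq_or_ne (P x) 0 with h | h
      · rw [hf]
        simp only [h, ENNReal.zero_rpow_of_pos (by linarith : (0:ℝ) < α), zero_mul,
          ENNReal.zero_rpow_of_pos hp0p, zero_mul,
          ENNReal.zero_rpow_of_pos (show (0:ℝ) < β from div_pos (by linarith : (0:ℝ) < α) h2a)]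
      · obtain ⟨hq1, hq2⟩ := hz x h
        have hPt := P_ne_top hP x
        have hq1t : Q1 x ≠ ⊤ := ne_top_of_le_ne_top ENNReal.one_ne_top
          (hQ1 ▸ Finset.single_le_sum (fun i _ => zero_le) (Finset.mem_univ x))
        have hq2t : Q2 x ≠ ⊤ := ne_top_of_le_ne_top ENNReal.one_ne_top
          (hQ2 ▸ Finset.single_le_sum (fun i _ => zero_le) (Finset.mem_univ x))
        have hPa : P x ^ α ≠ ⊤ := by simp [ENNReal.rpow_eq_top_iff, h, hPt]
        have hqq0 : Q1 x * Q2 x ≠ 0 := mul_ne_zero hq1 hq2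
        have hqqt : Q1 x * Q2 x ≠ ⊤ := ENNReal.mul_ne_top hq1t hq2t
        have hQa : (Q1 x * Q2 x) ^ (1-α) ≠ ⊤ := by
          simp [ENNReal.rpow_eq_top_iff, hqq0, hqqt]
        have e1 : f x ^ p0 = P x ^ (α*p0) * (Q1 x ^ ((1-α)*p0) * Q2 x ^ ((1-α)*p0)) := by
          rw [hf]
          simp only []
          rw [ENNReal.mul_rpow_of_ne_top hPa hQa, ← ENNReal.rpow_mul,
            ENNReal.mul_rpow_of_ne_top hq1t hq2t,
            ENNReal.mul_rpow_of_ne_top (x := Q1 x ^ (1-α)) (by simp [ENNReal.rpow_eq_top_iff, hq1, hq1t]) (by simp [ENNReal.rpow_eq_top_iff, hq2, hq2t]),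
            ← ENNReal.rpow_mul, ← ENNReal.rpow_mul]
        have hexp : (1-α)*p0 + q0 = 0 := by rw [hp0, hq0]; field_simp; ring
        have e2 : Q1 x ^ ((1-α)*p0) * Q1 x ^ q0 = 1 := by
          rw [← ENNReal.rpow_add _ _ hq1 hq1t, hexp, ENNReal.rpow_zero]
        have e3 : Q2 x ^ ((1-α)*p0) * Q2 x ^ q0 = 1 := by
          rw [← ENNReal.rpow_add _ _ hq2 hq2t, hexp, ENNReal.rpow_zero]
        calc f x ^ p0 * Q1 x ^ q0 * Q2 x ^ q0
            = P x ^ (α*p0) * ((Q1 x ^ ((1-α)*p0) * Q1 x ^ q0) * (Q2 x ^ ((1-α)*p0) * Q2 x ^ q0)) := by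
              rw [e1]; ring
          _ = P x ^ (α*p0) := by rw [e2, e3, mul_one, mul_one]
          _ = P x ^ β := by congr 1
    have holder := wHolder3 hp0p hq0p hq0p
      (by rw [hp0, hq0, inv_eq_one_div, ← add_div, ← add_div, div_eq_one_iff_eq h2a.ne']; ring) f Q1 Q2
    rw [Finset.sum_congr rfl (fun x _ => key x), hQ1, hQ2, ENNReal.one_rpow,
      mul_one, mul_one] at holder
    calc (∑ x, P x ^ β) ^ (2*α-1) ≤ ((∑ x, f x) ^ p0) ^ (2*α-1) :=
          ENNReal.rpow_le_rpow holder h2a.le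
      _ = ∑ x, f x := by
          rw [← ENNReal.rpow_mul, hp0, inv_mul_cancel₀ h2a.ne', ENNReal.rpow_one]

lemma S_ub_low {α : ℝ} (hα0 : 0 < α) (hα : α ≤ 1/2) (Q1 Q2 : X → ℝ≥0∞)
    (hQ1 : ∑ x, Q1 x = 1) (hQ2 : ∑ x, Q2 x = 1) :
    ∑ x, P x ^ α * (Q1 x * Q2 x) ^ (1-α) ≤ (⨆ x, P x) ^ α := by
  set M := ⨆ x, P x with hM
  set u : X → ℝ≥0∞ := fun x => Q1 x ^ (1/2:ℝ) * Q2 x ^ (1/2:ℝ) with hu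
  have hr1 : (1:ℝ) ≤ 2*(1-α) := by linarith
  have key : ∀ x, P x ^ α * (Q1 x * Q2 x) ^ (1-α) ≤ M ^ α * u x ^ (2*(1-α)) := by
    intro x
    have e : u x ^ (2*(1-α)) = (Q1 x * Q2 x) ^ (1-α) := by
      rw [hu]
      simp only []
      rw [ENNReal.mul_rpow_of_nonneg _ _ (by linarith : (0:ℝ) ≤ 2*(1-α)),
        ← ENNReal.rpow_mul, ← ENNReal.rpow_mul,
        show (1/2:ℝ) * (2*(1-α)) = 1-α by ring,
        ← ENNReal.mul_rpow_of_nonneg _ _ (by linarith : (0:ℝ) ≤ 1-α)]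
    rw [e]
    exact mul_le_mul_left (ENNReal.rpow_le_rpow (le_iSup P x) hα0.le) _
  calc ∑ x, P x ^ α * (Q1 x * Q2 x) ^ (1-α) ≤ ∑ x, M ^ α * u x ^ (2*(1-α)) :=
        Finset.sum_le_sum fun x _ => key x
    _ = M ^ α * ∑ x, u x ^ (2*(1-α)) := by rw [Finset.mul_sum]
    _ ≤ M ^ α * 1 := by
        apply mul_le_mul_right
        calc ∑ x, u x ^ (2*(1-α)) ≤ (∑ x, u x) ^ (2*(1-α)) := sum_rpow_le_rpow_sum hr1 u
          _ ≤ (1:ℝ≥0∞) ^ (2*(1-α)) := by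
              apply ENNReal.rpow_le_rpow _ (by linarith : (0:ℝ) ≤ 2*(1-α))
              have := wHolder2 (by norm_num : (0:ℝ) < 1/2) (by norm_num : (1/2:ℝ) < 1) Q1 Q2
              rw [hQ1, hQ2, ENNReal.one_rpow, ENNReal.one_rpow, one_mul] at this
              calc ∑ x, u x = ∑ x, Q1 x ^ (1/2:ℝ) * Q2 x ^ (1-(1/2):ℝ) := by
                    apply Finset.sum_congr rfl; intro x _; rw [hu]; norm_num
                _ ≤ 1 := this
          _ = 1 := ENNReal.one_rpow _
    _ = M ^ α := mul_one _

lemma delta_S {α : ℝ} (hα0 : 0 < α) (hα : α < 1) (x0 : X) :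
    ∑ x, P x ^ α * ((if x = x0 then (1:ℝ≥0∞) else 0) * (if x = x0 then (1:ℝ≥0∞) else 0)) ^ (1-α)
    = P x0 ^ α := by
  rw [Finset.sum_eq_single x0]
  · simp
  · intro y _ hy
    rw [if_neg hy, zero_mul, ENNReal.zero_rpow_of_pos (by linarith : (0:ℝ) < 1-α), mul_zero]
  · intro h; exact absurd (Finset.mem_univ x0) h


end withP


lemma diag_sum_real (P : X → ℝ≥0∞) (F : X × X → ℝ) :
    ∑ pp : X × X, ((if pp.1 = pp.2 then P pp.1 else 0).toReal) * F pp
    = ∑ x, (P x).toReal * F (x, x) := by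
  rw [Fintype.sum_prod_type]
  apply Finset.sum_congr rfl
  intro x _
  rw [Finset.sum_eq_single x]
  · simp
  · intro y _ hy
    simp only []
    rw [if_neg (fun h : x = y => hy h.symm), ENNReal.toReal_zero, zero_mul]
  · intro h; exact absurd (Finset.mem_univ x) h

lemma kl_real_lb (p q1 q2 : X → ℝ) (hp0 : ∀ x, 0 ≤ p x) (hq10 : ∀ x, 0 ≤ q1 x)
    (hq20 : ∀ x, 0 ≤ q2 x) (hps : ∑ x, p x = 1) (hq1s : ∑ x, q1 x ≤ 1)
    (hq2s : ∑ x, q2 x ≤ 1) (hac1 : ∀ x, q1 x = 0 → p x = 0) (hac2 : ∀ x, q2 x = 0 → p x = 0) :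
    ∑ x, p x * Real.log (p x)⁻¹ ≤ ∑ x, p x * Real.log (p x / (q1 x * q2 x)) := by
  have key : ∀ x, p x * Real.log (p x / (q1 x * q2 x)) - p x * Real.log (p x)⁻¹
      = p x * Real.log (p x / q1 x) + p x * Real.log (p x / q2 x) := by
    intro x
    rcases eq_or_lt_of_le (hp0 x) with h | h
    · simp [← h]
    · have hq1 : 0 < q1 x := by
        rcases eq_or_lt_of_le (hq10 x) with h' | h'
        · exact absurd (hac1 x h'.symm) h.ne'
        · exact h'
      have hq2 : 0 < q2 x := by
        rcases eq_or_lt_of_le (hq20 x) with h' | h'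
        · exact absurd (hac2 x h'.symm) h.ne'
        · exact h'
      rw [Real.log_div h.ne' (mul_ne_zero hq1.ne' hq2.ne'), Real.log_mul hq1.ne' hq2.ne',
        Real.log_inv, Real.log_div h.ne' hq1.ne', Real.log_div h.ne' hq2.ne']
      ring
  have e : ∑ x, (p x * Real.log (p x / (q1 x * q2 x)) - p x * Real.log (p x)⁻¹)
      = ∑ x, (p x * Real.log (p x / q1 x) + p x * Real.log (p x / q2 x)) :=
    Finset.sum_congr rfl fun x _ => key x
  rw [Finset.sum_sub_distrib, Finset.sum_add_distrib] at e
  have g1 := gibbs p q1 hp0 hq10 hps hq1s hac1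
  have g2 := gibbs p q2 hp0 hq20 hps hq2s hac2
  linarith

end Helpers

/-- `J_α(X;X) = H_{α/(2α-1)}(X)` for `α > 1/2` and
`J_α(X;X) = (α/(1-α)) H_∞(X)` for `α ∈ (0, 1/2]`. -/
theorem stmt14 {X : Type*} [Fintype X] [DecidableEq X] (P : X → ℝ≥0∞) (hP : ∑ x, P x = 1) (α : ℝ) :
    (1/2 < α →
      Jalpha α (fun p : X × X => if p.1 = p.2 then P p.1 else 0) =
        renyiEnt (α / (2*α - 1)) P) ∧
    (0 < α → α ≤ 1/2 →
      Jalpha α (fun p : X × X => if p.1 = p.2 then P p.1 else 0) =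
        ((α / (1 - α) : ℝ) : EReal) * minEnt P) := by
  classical
  have hXne : Nonempty X := X_nonempty hP
  haveI hNe : Nonempty (PMFon X × PMFon X) := ⟨(⟨P, hP⟩, ⟨P, hP⟩)⟩
  have hPtop := P_ne_top hP
  constructor
  · intro hα2
    by_cases hα1 : α = 1
    · -- Shannon case
      subst hα1
      rw [show (1:ℝ)/(2*1-1) = 1 from by norm_num]
      have hps : ∑ x, (P x).toReal = 1 := by
        rw [← ENNReal.toReal_sum (fun a _ => hPtop a), hP, ENNReal.toReal_one]
      have hJ : Jalpha 1 (fun p : X × X => if p.1 = p.2 then P p.1 else 0)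
          = ⨅ Q : PMFon X × PMFon X, klDiv (fun p : X × X => if p.1 = p.2 then P p.1 else 0)
              (fun p => Q.1.1 p.1 * Q.2.1 p.2) := by
        unfold Jalpha
        apply iInf_congr
        intro Q
        unfold renyiDiv
        rw [if_pos rfl]
      rw [hJ]
      unfold renyiEnt
      rw [if_pos rfl]
      apply le_antisymm
      · apply iInf_le_of_le (⟨P, hP⟩, ⟨P, hP⟩)
        have hac : ∀ pp : X × X, P pp.1 * P pp.2 = 0 →
            (if pp.1 = pp.2 then P pp.1 else 0) = 0 := by
          intro pp h
          by_cases hd : pp.1 = pp.2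
          · rw [if_pos hd]
            rcases mul_eq_zero.1 h with h' | h'
            · exact h'
            · rw [hd]; exact h'
          · rw [if_neg hd]
        unfold klDiv
        rw [if_pos hac]
        apply le_of_eq
        rw [EReal.coe_eq_coe_iff]
        rw [diag_sum_real]
        apply Finset.sum_congr rfl
        intro x _
        simp only [eq_self_iff_true, if_true]
        rcases eq_or_ne (P x) 0 with h | h
        · rw [h]; simp
        · have hpx : 0 < (P x).toReal := ENNReal.toReal_pos h (hPtop x)
          rw [ENNReal.toReal_mul, div_mul_eq_div_div, div_self hpx.ne', one_div]
      · apply le_iInf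
        intro Q
        unfold klDiv
        split_ifs with hac
        · rw [EReal.coe_le_coe_iff, diag_sum_real]
          have hq1t : ∀ x, Q.1.1 x ≠ ⊤ := by
            intro x
            apply ne_top_of_le_ne_top ENNReal.one_ne_top
            calc Q.1.1 x ≤ ∑ y, Q.1.1 y :=
                  Finset.single_le_sum (fun i _ => zero_le) (Finset.mem_univ x)
              _ = 1 := Q.1.2
          have hq2t : ∀ x, Q.2.1 x ≠ ⊤ := by
            intro x
            apply ne_top_of_le_ne_top ENNReal.one_ne_top
            calc Q.2.1 x ≤ ∑ y, Q.2.1 y :=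
                  Finset.single_le_sum (fun i _ => zero_le) (Finset.mem_univ x)
              _ = 1 := Q.2.2
          have hq1s : ∑ x, (Q.1.1 x).toReal = 1 := by
            rw [← ENNReal.toReal_sum (fun a _ => hq1t a), Q.1.2, ENNReal.toReal_one]
          have hq2s : ∑ x, (Q.2.1 x).toReal = 1 := by
            rw [← ENNReal.toReal_sum (fun a _ => hq2t a), Q.2.2, ENNReal.toReal_one]
          have hacd : ∀ x, Q.1.1 x * Q.2.1 x = 0 → P x = 0 := by
            intro x h
            have h2 := hac (x, x) h
            simpa using h2
          have hac1 : ∀ x, (Q.1.1 x).toReal = 0 → (P x).toReal = 0 := by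
            intro x h
            have h0 : Q.1.1 x = 0 := by
              rcases (ENNReal.toReal_eq_zero_iff _).1 h with h' | h'
              · exact h'
              · exact absurd h' (hq1t x)
            rw [hacd x (by rw [h0, zero_mul]), ENNReal.toReal_zero]
          have hac2 : ∀ x, (Q.2.1 x).toReal = 0 → (P x).toReal = 0 := by
            intro x h
            have h0 : Q.2.1 x = 0 := by
              rcases (ENNReal.toReal_eq_zero_iff _).1 h with h' | h'
              · exact h'
              · exact absurd h' (hq2t x)
            rw [hacd x (by rw [h0, mul_zero]), ENNReal.toReal_zero]
          have hmain := kl_real_lb (fun x => (P x).toReal) (fun x => (Q.1.1 x).toReal)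
            (fun x => (Q.2.1 x).toReal) (fun x => ENNReal.toReal_nonneg)
            (fun x => ENNReal.toReal_nonneg) (fun x => ENNReal.toReal_nonneg)
            hps hq1s.le hq2s.le hac1 hac2
          calc ∑ x, (P x).toReal * Real.log (P x).toReal⁻¹
              ≤ ∑ x, (P x).toReal * Real.log ((P x).toReal /
                  ((Q.1.1 x).toReal * (Q.2.1 x).toReal)) := hmain
            _ = ∑ x, (P x).toReal *
                  Real.log ((if x = x then P x else 0).toReal / (Q.1.1 x * Q.2.1 x).toReal) := by
                apply Finset.sum_congr rfl
                intro x _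
                rw [if_pos rfl, ENNReal.toReal_mul]
        · exact le_top
    · -- α ≠ 1, α > 1/2
      have hα0 : (0:ℝ) < α := by linarith
      have h2a : (0:ℝ) < 2*α-1 := by linarith
      have hβpos : 0 < α/(2*α-1) := div_pos hα0 h2a
      have hβ1 : α/(2*α-1) ≠ 1 := by
        intro h
        rw [div_eq_one_iff_eq h2a.ne'] at h
        apply hα1; linarith
      have hT0 : (∑ x, P x ^ (α/(2*α-1))) ≠ 0 := T_ne_zero hP hβpos
      have hTt : (∑ x, P x ^ (α/(2*α-1))) ≠ ⊤ := T_ne_top hP hβpos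
      have hV0 : (∑ x, P x ^ (α/(2*α-1))) ^ (2*α-1) ≠ 0 := by
        simp [ENNReal.rpow_eq_zero_iff, hT0, hTt]
      have hVt : (∑ x, P x ^ (α/(2*α-1))) ^ (2*α-1) ≠ ⊤ := by
        simp [ENNReal.rpow_eq_top_iff, hT0, hTt]
      have hJ : Jalpha α (fun p : X × X => if p.1 = p.2 then P p.1 else 0)
          = ⨅ Q : PMFon X × PMFon X, (((α-1)⁻¹ : ℝ) : EReal) *
              ENNReal.log (∑ x, P x ^ α * (Q.1.1 x * Q.2.1 x) ^ (1-α)) := by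
        unfold Jalpha
        apply iInf_congr
        intro Q
        unfold renyiDiv
        rw [if_neg hα1, diag_sum hα0]
      have hRHS : renyiEnt (α/(2*α-1)) P = (((α-1)⁻¹ : ℝ) : EReal) *
          ENNReal.log ((∑ x, P x ^ (α/(2*α-1))) ^ (2*α-1)) := by
        unfold renyiEnt
        rw [if_neg hβ1, ENNReal.log_rpow, ENNReal.log_pos_real hT0 hTt,
          ← EReal.coe_mul, ← EReal.coe_mul, ← EReal.coe_mul, EReal.coe_eq_coe_iff]
        have hα1' : α - 1 ≠ 0 := sub_ne_zero.2 hα1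
        have e : (1 - α/(2*α-1))⁻¹ = (2*α-1) * (α-1)⁻¹ := by
          rw [show 1 - α/(2*α-1) = (α-1)/(2*α-1) by rw [eq_div_iff h2a.ne', sub_mul, div_mul_cancel₀ _ h2a.ne']; ring, inv_div, div_eq_mul_inv]
        rw [e]
        ring
      rw [hJ, hRHS]
      rcases lt_or_gt_of_ne hα1 with hlt | hgt
      · have hc : ((α-1)⁻¹ : ℝ) < 0 := inv_lt_zero.2 (by linarith)
        apply infLogNeg hc _ hV0 hVt
        · intro Q
          exact S_ub_mid hP hα2 hlt Q.1.1 Q.2.1 Q.1.2 Q.2.2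
        · exact ⟨(⟨_, optQ_sum hP hβpos⟩, ⟨_, optQ_sum hP hβpos⟩), optQ_S hP hα2 hα1⟩
      · have hc : (0:ℝ) < (α-1)⁻¹ := inv_pos.2 (by linarith)
        apply infLogPos hc _ hV0 hVt
        · intro Q
          exact S_lb_hi hP hgt Q.1.1 Q.2.1 Q.1.2 Q.2.2
        · exact ⟨(⟨_, optQ_sum hP hβpos⟩, ⟨_, optQ_sum hP hβpos⟩), optQ_S hP hα2 hα1⟩
  · intro hα0 hαh
    have hα1 : α ≠ 1 := by intro h; rw [h] at hαh; linarith
    have hc : ((α-1)⁻¹ : ℝ) < 0 := inv_lt_zero.2 (by linarith)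
    obtain ⟨x0, hx0⟩ := Finite.exists_max P
    have hM : (⨆ x, P x) = P x0 := le_antisymm (iSup_le hx0) (le_iSup P x0)
    have hM0 : (⨆ x, P x) ≠ 0 := by
      obtain ⟨x1, hx1⟩ := P_exists_ne hP
      exact fun h => hx1 (le_antisymm (h ▸ le_iSup P x1) zero_le)
    have hMt : (⨆ x, P x) ≠ ⊤ :=
      ne_top_of_le_ne_top ENNReal.one_ne_top (iSup_le (P_le_one hP))
    have hV0 : (⨆ x, P x) ^ α ≠ 0 := by simp [ENNReal.rpow_eq_zero_iff, hM0, hMt]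
    have hVt : (⨆ x, P x) ^ α ≠ ⊤ := by simp [ENNReal.rpow_eq_top_iff, hM0, hMt]
    have hJ : Jalpha α (fun p : X × X => if p.1 = p.2 then P p.1 else 0)
        = ⨅ Q : PMFon X × PMFon X, (((α-1)⁻¹ : ℝ) : EReal) *
            ENNReal.log (∑ x, P x ^ α * (Q.1.1 x * Q.2.1 x) ^ (1-α)) := by
      unfold Jalpha
      apply iInf_congr
      intro Q
      unfold renyiDiv
      rw [if_neg hα1, diag_sum hα0]
    have hRHS : ((α / (1 - α) : ℝ) : EReal) * minEnt P = (((α-1)⁻¹ : ℝ) : EReal) *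
        ENNReal.log ((⨆ x, P x) ^ α) := by
      unfold minEnt
      rw [ENNReal.log_rpow, ENNReal.log_pos_real hM0 hMt, ← EReal.coe_neg,
        ← EReal.coe_mul, ← EReal.coe_mul, ← EReal.coe_mul, EReal.coe_eq_coe_iff]
      have h1 : (1:ℝ) - α ≠ 0 := by intro h; linarith
      have h2 : α - 1 ≠ 0 := sub_ne_zero.2 hα1
      rw [show (1:ℝ) - α = -(α-1) by ring, div_neg, neg_mul, mul_neg, neg_neg,
        div_eq_mul_inv]
      ring
    rw [hJ, hRHS]
    apply infLogNeg hc _ hV0 hVt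
    · intro Q
      exact S_ub_low hP hα0 hαh Q.1.1 Q.2.1 Q.1.2 Q.2.2
    · refine ⟨(⟨fun x => if x = x0 then 1 else 0, by simp⟩,
        ⟨fun x => if x = x0 then 1 else 0, by simp⟩), ?_⟩
      rw [hM]
      exact delta_S hP hα0 (by linarith) x0
end

section
/- For α ≥ 1/2, the map (Q_X, Q_Y) ↦ D_α(P_XY||Q_X Q_Y) is jointly convex in the pair (Q_X, Q_Y): for λ ∈ (0,1), D_α(P_XY||(λQ_{X1}+(1−λ)Q_{X2})(λQ_{Y1}+(1−λ)Q_{Y2})) ≤ λ D_α(P_XY||Q_{X1}Q_{Y1}) + (1−λ) D_α(P_XY||Q_{X2}Q_{Y2}). -/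
open scoped ENNReal BigOperators
open Finset

lemma aux_le_one {ι : Type*} [Fintype ι] {Q : ι → ℝ≥0∞} (h : ∑ x, Q x = 1) (x : ι) : Q x ≤ 1 :=
  h ▸ Finset.single_le_sum (fun _ _ => zero_le) (mem_univ x)

lemma aux_rpow_anti {x y : ℝ≥0∞} (h : x ≤ y) {z : ℝ} (hz : z ≤ 0) : y ^ z ≤ x ^ z := by
  rw [← neg_neg z, ENNReal.rpow_neg y, ENNReal.rpow_neg x]
  exact ENNReal.inv_le_inv.2 (ENNReal.rpow_le_rpow h (by linarith))

lemma aux_amgm {a b : ℝ≥0∞} (ha : a ≠ ⊤) (hb : b ≠ ⊤) {w : ℝ} (h0 : 0 ≤ w) (h1 : w ≤ 1) :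
    a ^ w * b ^ (1 - w) ≤ ENNReal.ofReal w * a + ENNReal.ofReal (1 - w) * b := by
  have hw2 : (0:ℝ) ≤ 1 - w := by linarith
  have hX : a ^ w * b ^ (1 - w) ≠ ⊤ :=
    ENNReal.mul_ne_top (ENNReal.rpow_ne_top_of_nonneg h0 ha)
      (ENNReal.rpow_ne_top_of_nonneg hw2 hb)
  have hY : ENNReal.ofReal w * a + ENNReal.ofReal (1 - w) * b ≠ ⊤ :=
    ENNReal.add_ne_top.2 ⟨ENNReal.mul_ne_top ENNReal.ofReal_ne_top ha,
      ENNReal.mul_ne_top ENNReal.ofReal_ne_top hb⟩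
  rw [← ENNReal.toReal_le_toReal hX hY]
  rw [ENNReal.toReal_mul, ENNReal.toReal_add (ENNReal.mul_ne_top ENNReal.ofReal_ne_top ha)
    (ENNReal.mul_ne_top ENNReal.ofReal_ne_top hb), ENNReal.toReal_mul, ENNReal.toReal_mul,
    ← ENNReal.toReal_rpow, ← ENNReal.toReal_rpow, ENNReal.toReal_ofReal h0,
    ENNReal.toReal_ofReal hw2]
  exact Real.geom_mean_le_arith_mean2_weighted h0 hw2 ENNReal.toReal_nonneg
    ENNReal.toReal_nonneg (by ring)

lemma aux_holder {ι : Type*} [Fintype ι] (A B : ι → ℝ≥0∞) {l : ℝ} (hl0 : 0 < l) (hl1 : l < 1) :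
    ∑ i, A i ^ l * B i ^ (1 - l) ≤ (∑ i, A i) ^ l * (∑ i, B i) ^ (1 - l) := by
  have hm : (0:ℝ) < 1 - l := by linarith
  have hpq : (1/l).HolderConjugate (1/(1-l)) := by
    constructor
    · rw [one_div, inv_inv, one_div, inv_inv, inv_one]; ring
    · positivity
    · positivity
  have h := ENNReal.inner_le_Lp_mul_Lq univ (fun i => A i ^ l) (fun i => B i ^ (1-l)) hpq
  simpa only [← ENNReal.rpow_mul, one_div_one_div, mul_one_div_cancel hl0.ne',
    mul_one_div_cancel hm.ne', ENNReal.rpow_one] using h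

lemma aux_concave2 {u v l p : ℝ} (hu : 0 ≤ u) (hv : 0 ≤ v) (hl0 : 0 ≤ l) (hl1 : l ≤ 1)
    (hp0 : 0 < p) (hp1 : p ≤ 1) :
    l * u ^ p + (1 - l) * v ^ p ≤ (l * u + (1 - l) * v) ^ p := by
  have h := Real.arith_mean_le_rpow_mean (univ : Finset (Fin 2)) ![l, 1-l] ![u ^ p, v ^ p]
    (by intro i _; fin_cases i <;> simp <;> linarith)
    (by simp) (by intro i _; fin_cases i <;> simp [Real.rpow_nonneg, hu, hv])
    (p := 1/p) (by rw [le_div_iff₀ hp0]; linarith)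
  simp only [Fin.sum_univ_two, Matrix.cons_val_zero, Matrix.cons_val_one, Matrix.head_cons] at h
  rw [← Real.rpow_mul hu, ← Real.rpow_mul hv, mul_one_div_cancel hp0.ne', Real.rpow_one,
    Real.rpow_one, one_div_one_div] at h
  exact h

lemma aux_cs_key {a1 b1 a2 b2 l p : ℝ} (ha1 : 0 ≤ a1) (hb1 : 0 ≤ b1) (ha2 : 0 ≤ a2)
    (hb2 : 0 ≤ b2) (hl0 : 0 ≤ l) (hl1 : l ≤ 1) (hp0 : 0 < p) (hp2 : 2 * p ≤ 1) :
    l * (a1 * b1) ^ p + (1 - l) * (a2 * b2) ^ p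
      ≤ ((l * a1 + (1 - l) * a2) * (l * b1 + (1 - l) * b2)) ^ p := by
  set x1 := (a1 * b1) ^ ((1:ℝ)/2) with hx1def
  set x2 := (a2 * b2) ^ ((1:ℝ)/2) with hx2def
  have hab1 : (0:ℝ) ≤ a1 * b1 := mul_nonneg ha1 hb1
  have hab2 : (0:ℝ) ≤ a2 * b2 := mul_nonneg ha2 hb2
  have hx1 : 0 ≤ x1 := Real.rpow_nonneg hab1 _
  have hx2 : 0 ≤ x2 := Real.rpow_nonneg hab2 _
  have e1 : (a1 * b1) ^ p = x1 ^ (2 * p) := by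
    rw [hx1def, ← Real.rpow_mul hab1]
    congr 1; ring
  have e2 : (a2 * b2) ^ p = x2 ^ (2 * p) := by
    rw [hx2def, ← Real.rpow_mul hab2]
    congr 1; ring
  have step2 : l * x1 ^ (2*p) + (1 - l) * x2 ^ (2*p) ≤ (l * x1 + (1 - l) * x2) ^ (2*p) :=
    aux_concave2 hx1 hx2 hl0 hl1 (by linarith) hp2
  have step3 : (l * x1 + (1 - l) * x2) ^ (2*p) = ((l * x1 + (1 - l) * x2) ^ (2:ℕ)) ^ p := by
    have hs : 0 ≤ l * x1 + (1 - l) * x2 := by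
      have : 0 ≤ (1 - l) := by linarith
      positivity
    rw [← Real.rpow_natCast (l * x1 + (1 - l) * x2) 2, ← Real.rpow_mul hs]
    norm_num
  have step4 : (l * x1 + (1 - l) * x2) ^ (2:ℕ) ≤ (l*a1+(1-l)*a2) * (l*b1+(1-l)*b2) := by
    set y1 := (a1 * b2) ^ ((1:ℝ)/2) with hy1def
    set y2 := (a2 * b1) ^ ((1:ℝ)/2) with hy2def
    have h1 : x1 * x1 = a1 * b1 := by
      rw [hx1def, ← Real.rpow_add_of_nonneg hab1 (by norm_num) (by norm_num)]; norm_num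
    have h2 : x2 * x2 = a2 * b2 := by
      rw [hx2def, ← Real.rpow_add_of_nonneg hab2 (by norm_num) (by norm_num)]; norm_num
    have hy1 : y1 * y1 = a1 * b2 := by
      rw [hy1def, ← Real.rpow_add_of_nonneg (mul_nonneg ha1 hb2) (by norm_num) (by norm_num)]
      norm_num
    have hy2 : y2 * y2 = a2 * b1 := by
      rw [hy2def, ← Real.rpow_add_of_nonneg (mul_nonneg ha2 hb1) (by norm_num) (by norm_num)]
      norm_num
    have hx : x1 * x2 = y1 * y2 := by
      rw [hx1def, hx2def, hy1def, hy2def, ← Real.mul_rpow hab1 hab2,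
        ← Real.mul_rpow (mul_nonneg ha1 hb2) (mul_nonneg ha2 hb1)]
      ring_nf
    have hll : 0 ≤ l * (1 - l) := mul_nonneg hl0 (by linarith)
    nlinarith [sq_nonneg (y1 - y2), hll, h1, h2, hx, hy1, hy2]
  calc l * (a1 * b1) ^ p + (1 - l) * (a2 * b2) ^ p
      = l * x1 ^ (2*p) + (1 - l) * x2 ^ (2*p) := by rw [e1, e2]
    _ ≤ (l * x1 + (1 - l) * x2) ^ (2*p) := step2
    _ = ((l * x1 + (1 - l) * x2) ^ (2:ℕ)) ^ p := step3
    _ ≤ ((l*a1+(1-l)*a2) * (l*b1+(1-l)*b2)) ^ p :=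
        Real.rpow_le_rpow (by positivity) step4 hp0.le

lemma aux_ptwise_lt {a1 a2 b1 b2 : ℝ≥0∞} (ha1 : a1 ≠ ⊤) (ha2 : a2 ≠ ⊤) (hb1 : b1 ≠ ⊤)
    (hb2 : b2 ≠ ⊤) {l p : ℝ} (hl0 : 0 ≤ l) (hl1 : l ≤ 1) (hp0 : 0 < p) (hp2 : 2 * p ≤ 1) :
    ENNReal.ofReal l * (a1 * b1) ^ p + ENNReal.ofReal (1 - l) * (a2 * b2) ^ p ≤
      ((ENNReal.ofReal l * a1 + ENNReal.ofReal (1 - l) * a2) *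
        (ENNReal.ofReal l * b1 + ENNReal.ofReal (1 - l) * b2)) ^ p := by
  have hm0 : (0:ℝ) ≤ 1 - l := by linarith
  obtain ⟨A1, hA1, rfl⟩ : ∃ A, 0 ≤ A ∧ a1 = ENNReal.ofReal A :=
    ⟨a1.toReal, ENNReal.toReal_nonneg, (ENNReal.ofReal_toReal ha1).symm⟩
  obtain ⟨A2, hA2, rfl⟩ : ∃ A, 0 ≤ A ∧ a2 = ENNReal.ofReal A :=
    ⟨a2.toReal, ENNReal.toReal_nonneg, (ENNReal.ofReal_toReal ha2).symm⟩
  obtain ⟨B1, hB1, rfl⟩ : ∃ A, 0 ≤ A ∧ b1 = ENNReal.ofReal A :=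
    ⟨b1.toReal, ENNReal.toReal_nonneg, (ENNReal.ofReal_toReal hb1).symm⟩
  obtain ⟨B2, hB2, rfl⟩ : ∃ A, 0 ≤ A ∧ b2 = ENNReal.ofReal A :=
    ⟨b2.toReal, ENNReal.toReal_nonneg, (ENNReal.ofReal_toReal hb2).symm⟩
  have e1 : ENNReal.ofReal l * (ENNReal.ofReal A1 * ENNReal.ofReal B1) ^ p
      + ENNReal.ofReal (1 - l) * (ENNReal.ofReal A2 * ENNReal.ofReal B2) ^ p
      = ENNReal.ofReal (l * (A1 * B1) ^ p + (1 - l) * (A2 * B2) ^ p) := by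
    rw [← ENNReal.ofReal_mul hA1, ← ENNReal.ofReal_mul hA2,
      ENNReal.ofReal_rpow_of_nonneg (by positivity) hp0.le,
      ENNReal.ofReal_rpow_of_nonneg (by positivity) hp0.le,
      ← ENNReal.ofReal_mul hl0, ← ENNReal.ofReal_mul hm0,
      ENNReal.ofReal_add (by positivity) (by positivity)]
  have e2 : ((ENNReal.ofReal l * ENNReal.ofReal A1 + ENNReal.ofReal (1 - l) * ENNReal.ofReal A2) *
        (ENNReal.ofReal l * ENNReal.ofReal B1 + ENNReal.ofReal (1 - l) * ENNReal.ofReal B2)) ^ p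
      = ENNReal.ofReal (((l * A1 + (1 - l) * A2) * (l * B1 + (1 - l) * B2)) ^ p) := by
    rw [← ENNReal.ofReal_mul hl0, ← ENNReal.ofReal_mul hm0,
      ← ENNReal.ofReal_add (by positivity) (by positivity),
      ← ENNReal.ofReal_mul hl0, ← ENNReal.ofReal_mul hm0,
      ← ENNReal.ofReal_add (by positivity) (by positivity),
      ← ENNReal.ofReal_mul (by positivity),
      ENNReal.ofReal_rpow_of_nonneg (by positivity) hp0.le]
  rw [e1, e2]
  exact ENNReal.ofReal_le_ofReal (aux_cs_key hA1 hB1 hA2 hB2 hl0 hl1 hp0 hp2)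

lemma aux_term_ne_bot_pos {c w : ℝ} (hc : 0 < c) (hw : 0 < w) {S : ℝ≥0∞} (hS : S ≠ 0) :
    (w : EReal) * ((c : EReal) * ENNReal.log S) ≠ ⊥ := by
  rcases eq_or_ne S ⊤ with rfl | htop
  · rw [ENNReal.log_top, EReal.coe_mul_top_of_pos hc, EReal.coe_mul_top_of_pos hw]
    exact top_ne_bot
  · rw [ENNReal.log_pos_real' (ENNReal.toReal_pos hS htop)]
    rw [← EReal.coe_mul, ← EReal.coe_mul]
    exact EReal.coe_ne_bot _

lemma aux_term_ne_bot_neg {c w : ℝ} (hc : c < 0) (hw : 0 < w) {S : ℝ≥0∞} (hS : S ≠ ⊤) :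
    (w : EReal) * ((c : EReal) * ENNReal.log S) ≠ ⊥ := by
  rcases eq_or_ne S 0 with rfl | h0
  · rw [ENNReal.log_zero, EReal.coe_mul_bot_of_neg hc, EReal.coe_mul_top_of_pos hw]
    exact top_ne_bot
  · rw [ENNReal.log_pos_real' (ENNReal.toReal_pos h0 hS)]
    rw [← EReal.coe_mul, ← EReal.coe_mul]
    exact EReal.coe_ne_bot _

lemma aux_wrap_pos {c l : ℝ} (hc : 0 < c) (hl0 : 0 < l) (hl1 : l < 1)
    {S1 S2 Sb : ℝ≥0∞} (h1 : S1 ≠ 0) (h2 : S2 ≠ 0) (hb : Sb ≠ 0)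
    (hle : Sb ≤ S1 ^ l * S2 ^ (1 - l)) :
    (c : EReal) * ENNReal.log Sb ≤ (l : EReal) * ((c : EReal) * ENNReal.log S1)
      + ((1 - l : ℝ) : EReal) * ((c : EReal) * ENNReal.log S2) := by
  have hm : (0:ℝ) < 1 - l := by linarith
  rcases eq_or_ne S1 ⊤ with rfl | h1t
  · rw [ENNReal.log_top, EReal.coe_mul_top_of_pos hc, EReal.coe_mul_top_of_pos hl0,
      EReal.top_add_of_ne_bot (aux_term_ne_bot_pos hc hm h2)]
    exact le_top
  rcases eq_or_ne S2 ⊤ with rfl | h2t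
  · rw [ENNReal.log_top, EReal.coe_mul_top_of_pos hc, EReal.coe_mul_top_of_pos hm,
      EReal.add_top_of_ne_bot (aux_term_ne_bot_pos hc hl0 h1)]
    exact le_top
  · have hbt : Sb ≠ ⊤ := by
      refine ne_top_of_le_ne_top ?_ hle
      exact ENNReal.mul_ne_top (ENNReal.rpow_ne_top_of_nonneg hl0.le h1t)
        (ENNReal.rpow_ne_top_of_nonneg hm.le h2t)
    have p1 := ENNReal.toReal_pos h1 h1t
    have p2 := ENNReal.toReal_pos h2 h2t
    have pb := ENNReal.toReal_pos hb hbt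
    rw [ENNReal.log_pos_real' p1, ENNReal.log_pos_real' p2, ENNReal.log_pos_real' pb,
      ← EReal.coe_mul, ← EReal.coe_mul, ← EReal.coe_mul, ← EReal.coe_mul, ← EReal.coe_mul,
      ← EReal.coe_add,
      EReal.coe_le_coe_iff]
    have hler : Sb.toReal ≤ S1.toReal ^ l * S2.toReal ^ (1 - l) := by
      have := ENNReal.toReal_mono (ENNReal.mul_ne_top
        (ENNReal.rpow_ne_top_of_nonneg hl0.le h1t) (ENNReal.rpow_ne_top_of_nonneg hm.le h2t)) hle
      rwa [ENNReal.toReal_mul, ← ENNReal.toReal_rpow, ← ENNReal.toReal_rpow] at this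
    have hlog : Real.log Sb.toReal ≤ l * Real.log S1.toReal + (1 - l) * Real.log S2.toReal := by
      calc Real.log Sb.toReal ≤ Real.log (S1.toReal ^ l * S2.toReal ^ (1 - l)) :=
            Real.log_le_log pb hler
        _ = l * Real.log S1.toReal + (1 - l) * Real.log S2.toReal := by
            rw [Real.log_mul (Real.rpow_pos_of_pos p1 _).ne' (Real.rpow_pos_of_pos p2 _).ne',
              Real.log_rpow p1, Real.log_rpow p2]
    nlinarith [hlog, hc]

lemma aux_wrap_neg {c l : ℝ} (hc : c < 0) (hl0 : 0 < l) (hl1 : l < 1)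
    {S1 S2 Sb : ℝ≥0∞} (h1t : S1 ≠ ⊤) (h2t : S2 ≠ ⊤) (hbt : Sb ≠ ⊤)
    (hge : S1 ^ l * S2 ^ (1 - l) ≤ Sb) :
    (c : EReal) * ENNReal.log Sb ≤ (l : EReal) * ((c : EReal) * ENNReal.log S1)
      + ((1 - l : ℝ) : EReal) * ((c : EReal) * ENNReal.log S2) := by
  have hm : (0:ℝ) < 1 - l := by linarith
  rcases eq_or_ne S1 0 with rfl | h1
  · rw [ENNReal.log_zero, EReal.coe_mul_bot_of_neg hc, EReal.coe_mul_top_of_pos hl0,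
      EReal.top_add_of_ne_bot (aux_term_ne_bot_neg hc hm h2t)]
    exact le_top
  rcases eq_or_ne S2 0 with rfl | h2
  · rw [ENNReal.log_zero, EReal.coe_mul_bot_of_neg hc, EReal.coe_mul_top_of_pos hm,
      EReal.add_top_of_ne_bot (aux_term_ne_bot_neg hc hl0 h1t)]
    exact le_top
  · have hb : Sb ≠ 0 := by
      refine fun h => ?_
      rw [h, le_zero_iff, mul_eq_zero] at hge
      rcases hge with h' | h'
      · exact h1 ((ENNReal.rpow_eq_zero_iff_of_pos hl0).1 h')
      · exact h2 ((ENNReal.rpow_eq_zero_iff_of_pos hm).1 h')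
    have p1 := ENNReal.toReal_pos h1 h1t
    have p2 := ENNReal.toReal_pos h2 h2t
    have pb := ENNReal.toReal_pos hb hbt
    rw [ENNReal.log_pos_real' p1, ENNReal.log_pos_real' p2, ENNReal.log_pos_real' pb,
      ← EReal.coe_mul, ← EReal.coe_mul, ← EReal.coe_mul, ← EReal.coe_mul, ← EReal.coe_mul,
      ← EReal.coe_add,
      EReal.coe_le_coe_iff]
    have hger : S1.toReal ^ l * S2.toReal ^ (1 - l) ≤ Sb.toReal := by
      have := ENNReal.toReal_mono hbt hge
      rwa [ENNReal.toReal_mul, ← ENNReal.toReal_rpow, ← ENNReal.toReal_rpow] at this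
    have hlog : l * Real.log S1.toReal + (1 - l) * Real.log S2.toReal ≤ Real.log Sb.toReal := by
      calc l * Real.log S1.toReal + (1 - l) * Real.log S2.toReal
          = Real.log (S1.toReal ^ l * S2.toReal ^ (1 - l)) := by
            rw [Real.log_mul (Real.rpow_pos_of_pos p1 _).ne' (Real.rpow_pos_of_pos p2 _).ne',
              Real.log_rpow p1, Real.log_rpow p2]
        _ ≤ Real.log Sb.toReal :=
            Real.log_le_log (by positivity) hger
    nlinarith [hlog, hc]

/-- for `α ≥ 1/2`, `(Q_X, Q_Y) ↦ D_α(P_XY‖Q_X Q_Y)` is jointly convex. -/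
theorem stmt15 {X Y : Type*} [Fintype X] [Fintype Y] (P : X × Y → ℝ≥0∞)
    (hP : ∑ p, P p = 1) (α : ℝ) (hα : 1/2 ≤ α)
    (QX1 QX2 : X → ℝ≥0∞) (hQX1 : ∑ x, QX1 x = 1) (hQX2 : ∑ x, QX2 x = 1)
    (QY1 QY2 : Y → ℝ≥0∞) (hQY1 : ∑ y, QY1 y = 1) (hQY2 : ∑ y, QY2 y = 1)
    (l : ℝ) (hl0 : 0 < l) (hl1 : l < 1) :
    renyiDiv α P (fun p =>
        (ENNReal.ofReal l * QX1 p.1 + ENNReal.ofReal (1 - l) * QX2 p.1) *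
        (ENNReal.ofReal l * QY1 p.2 + ENNReal.ofReal (1 - l) * QY2 p.2)) ≤
      ((l : ℝ) : EReal) * renyiDiv α P (fun p => QX1 p.1 * QY1 p.2) +
        ((1 - l : ℝ) : EReal) * renyiDiv α P (fun p => QX2 p.1 * QY2 p.2) := by
  have hm0 : (0:ℝ) < 1 - l := by linarith
  have hl05 : (0:ℝ) < 1/2 := by norm_num
  have hα0 : (0:ℝ) < α := lt_of_lt_of_le hl05 hα
  have hPle : ∀ p, P p ≤ 1 := aux_le_one hP
  have hPtop : ∀ p, P p ≠ ⊤ := fun p => ne_top_of_le_ne_top ENNReal.one_ne_top (hPle p)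
  have hX1le : ∀ x, QX1 x ≤ 1 := aux_le_one hQX1
  have hX2le : ∀ x, QX2 x ≤ 1 := aux_le_one hQX2
  have hY1le : ∀ y, QY1 y ≤ 1 := aux_le_one hQY1
  have hY2le : ∀ y, QY2 y ≤ 1 := aux_le_one hQY2
  have hX1t : ∀ x, QX1 x ≠ ⊤ := fun x => ne_top_of_le_ne_top ENNReal.one_ne_top (hX1le x)
  have hX2t : ∀ x, QX2 x ≠ ⊤ := fun x => ne_top_of_le_ne_top ENNReal.one_ne_top (hX2le x)
  have hY1t : ∀ y, QY1 y ≠ ⊤ := fun y => ne_top_of_le_ne_top ENNReal.one_ne_top (hY1le y)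
  have hY2t : ∀ y, QY2 y ≠ ⊤ := fun y => ne_top_of_le_ne_top ENNReal.one_ne_top (hY2le y)
  have hQ1t : ∀ p : X × Y, QX1 p.1 * QY1 p.2 ≠ ⊤ :=
    fun p => ENNReal.mul_ne_top (hX1t p.1) (hY1t p.2)
  have hQ2t : ∀ p : X × Y, QX2 p.1 * QY2 p.2 ≠ ⊤ :=
    fun p => ENNReal.mul_ne_top (hX2t p.1) (hY2t p.2)
  have hQbt : ∀ p : X × Y,
      (ENNReal.ofReal l * QX1 p.1 + ENNReal.ofReal (1 - l) * QX2 p.1) *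
        (ENNReal.ofReal l * QY1 p.2 + ENNReal.ofReal (1 - l) * QY2 p.2) ≠ ⊤ := by
    intro p
    exact ENNReal.mul_ne_top
      (ENNReal.add_ne_top.2 ⟨ENNReal.mul_ne_top ENNReal.ofReal_ne_top (hX1t p.1),
        ENNReal.mul_ne_top ENNReal.ofReal_ne_top (hX2t p.1)⟩)
      (ENNReal.add_ne_top.2 ⟨ENNReal.mul_ne_top ENNReal.ofReal_ne_top (hY1t p.2),
        ENNReal.mul_ne_top ENNReal.ofReal_ne_top (hY2t p.2)⟩)
  have hgeo : ∀ p : X × Y,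
      (QX1 p.1 * QY1 p.2) ^ l * (QX2 p.1 * QY2 p.2) ^ (1 - l) ≤
      (ENNReal.ofReal l * QX1 p.1 + ENNReal.ofReal (1 - l) * QX2 p.1) *
        (ENNReal.ofReal l * QY1 p.2 + ENNReal.ofReal (1 - l) * QY2 p.2) := by
    intro p
    calc (QX1 p.1 * QY1 p.2) ^ l * (QX2 p.1 * QY2 p.2) ^ (1 - l)
        = (QX1 p.1 ^ l * QX2 p.1 ^ (1 - l)) * (QY1 p.2 ^ l * QY2 p.2 ^ (1 - l)) := by
          rw [ENNReal.mul_rpow_of_nonneg _ _ hl0.le, ENNReal.mul_rpow_of_nonneg _ _ hm0.le]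
          ring
      _ ≤ (ENNReal.ofReal l * QX1 p.1 + ENNReal.ofReal (1 - l) * QX2 p.1) *
          (ENNReal.ofReal l * QY1 p.2 + ENNReal.ofReal (1 - l) * QY2 p.2) :=
          mul_le_mul' (aux_amgm (hX1t p.1) (hX2t p.1) hl0.le hl1.le)
            (aux_amgm (hY1t p.2) (hY2t p.2) hl0.le hl1.le)
  by_cases hα1 : α = 1
  · -- KL case
    simp only [renyiDiv, if_pos hα1]
    by_cases hac1 : ∀ p : X × Y, QX1 p.1 * QY1 p.2 = 0 → P p = 0
    swap
    · have h1 : klDiv P (fun p : X × Y => QX1 p.1 * QY1 p.2) = ⊤ := by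
        simp only [klDiv]; rw [if_neg hac1]
      have h2 : ((1 - l : ℝ) : EReal) * klDiv P (fun p : X × Y => QX2 p.1 * QY2 p.2) ≠ ⊥ := by
        simp only [klDiv]
        split
        · rw [← EReal.coe_mul]; exact EReal.coe_ne_bot _
        · rw [EReal.coe_mul_top_of_pos hm0]; exact top_ne_bot
      rw [h1, EReal.coe_mul_top_of_pos hl0, EReal.top_add_of_ne_bot h2]
      exact le_top
    by_cases hac2 : ∀ p : X × Y, QX2 p.1 * QY2 p.2 = 0 → P p = 0
    swap
    · have h1 : klDiv P (fun p : X × Y => QX2 p.1 * QY2 p.2) = ⊤ := by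
        simp only [klDiv]; rw [if_neg hac2]
      have h2 : ((l : ℝ) : EReal) * klDiv P (fun p : X × Y => QX1 p.1 * QY1 p.2) ≠ ⊥ := by
        simp only [klDiv]
        rw [if_pos hac1, ← EReal.coe_mul]
        exact EReal.coe_ne_bot _
      rw [h1, EReal.coe_mul_top_of_pos hm0, EReal.add_top_of_ne_bot h2]
      exact le_top
    have hacb : ∀ p : X × Y,
        (ENNReal.ofReal l * QX1 p.1 + ENNReal.ofReal (1 - l) * QX2 p.1) *
          (ENNReal.ofReal l * QY1 p.2 + ENNReal.ofReal (1 - l) * QY2 p.2) = 0 → P p = 0 := by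
      intro p hp
      rcases mul_eq_zero.1 hp with h | h
      · have hx : QX1 p.1 = 0 := by
          have := (add_eq_zero.1 h).1
          rcases mul_eq_zero.1 this with h' | h'
          · exact absurd h' (by simp [ENNReal.ofReal_eq_zero, not_le, hl0])
          · exact h'
        exact hac1 p (by rw [hx, zero_mul])
      · have hy : QY1 p.2 = 0 := by
          have := (add_eq_zero.1 h).1
          rcases mul_eq_zero.1 this with h' | h'
          · exact absurd h' (by simp [ENNReal.ofReal_eq_zero, not_le, hl0])
          · exact h'
        exact hac1 p (by rw [hy, mul_zero])
    simp only [klDiv]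
    rw [if_pos hacb, if_pos hac1, if_pos hac2, ← EReal.coe_mul, ← EReal.coe_mul,
      ← EReal.coe_add, EReal.coe_le_coe_iff, Finset.mul_sum, Finset.mul_sum,
      ← Finset.sum_add_distrib]
    apply Finset.sum_le_sum
    intro p _
    by_cases hp0 : P p = 0
    · simp [hp0]
    have hq1 : QX1 p.1 * QY1 p.2 ≠ 0 := fun h => hp0 (hac1 p h)
    have hq2 : QX2 p.1 * QY2 p.2 ≠ 0 := fun h => hp0 (hac2 p h)
    have hqb : (ENNReal.ofReal l * QX1 p.1 + ENNReal.ofReal (1 - l) * QX2 p.1) *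
        (ENNReal.ofReal l * QY1 p.2 + ENNReal.ofReal (1 - l) * QY2 p.2) ≠ 0 := by
      intro h
      have := hgeo p
      rw [h, le_zero_iff, mul_eq_zero] at this
      rcases this with h' | h'
      · exact hq1 ((ENNReal.rpow_eq_zero_iff_of_pos hl0).1 h')
      · exact hq2 ((ENNReal.rpow_eq_zero_iff_of_pos hm0).1 h')
    have pq1 : 0 < (QX1 p.1 * QY1 p.2).toReal := ENNReal.toReal_pos hq1 (hQ1t p)
    have pq2 : 0 < (QX2 p.1 * QY2 p.2).toReal := ENNReal.toReal_pos hq2 (hQ2t p)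
    have pqb : 0 < ((ENNReal.ofReal l * QX1 p.1 + ENNReal.ofReal (1 - l) * QX2 p.1) *
        (ENNReal.ofReal l * QY1 p.2 + ENNReal.ofReal (1 - l) * QY2 p.2)).toReal :=
      ENNReal.toReal_pos hqb (hQbt p)
    have ppr : 0 < (P p).toReal := ENNReal.toReal_pos hp0 (hPtop p)
    have hger : (QX1 p.1 * QY1 p.2).toReal ^ l * (QX2 p.1 * QY2 p.2).toReal ^ (1 - l) ≤
        ((ENNReal.ofReal l * QX1 p.1 + ENNReal.ofReal (1 - l) * QX2 p.1) *
          (ENNReal.ofReal l * QY1 p.2 + ENNReal.ofReal (1 - l) * QY2 p.2)).toReal := by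
      have := ENNReal.toReal_mono (hQbt p) (hgeo p)
      rwa [ENNReal.toReal_mul, ← ENNReal.toReal_rpow, ← ENNReal.toReal_rpow] at this
    have hlog : l * Real.log (QX1 p.1 * QY1 p.2).toReal
        + (1 - l) * Real.log (QX2 p.1 * QY2 p.2).toReal ≤
        Real.log ((ENNReal.ofReal l * QX1 p.1 + ENNReal.ofReal (1 - l) * QX2 p.1) *
          (ENNReal.ofReal l * QY1 p.2 + ENNReal.ofReal (1 - l) * QY2 p.2)).toReal := by
      calc l * Real.log (QX1 p.1 * QY1 p.2).toReal
            + (1 - l) * Real.log (QX2 p.1 * QY2 p.2).toReal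
          = Real.log ((QX1 p.1 * QY1 p.2).toReal ^ l * (QX2 p.1 * QY2 p.2).toReal ^ (1 - l)) := by
            rw [Real.log_mul (Real.rpow_pos_of_pos pq1 _).ne' (Real.rpow_pos_of_pos pq2 _).ne',
              Real.log_rpow pq1, Real.log_rpow pq2]
        _ ≤ _ := Real.log_le_log (by positivity) hger
    rw [Real.log_div ppr.ne' pqb.ne', Real.log_div ppr.ne' pq1.ne',
      Real.log_div ppr.ne' pq2.ne']
    nlinarith [hlog, ppr.le]
  · -- Renyi case
    simp only [renyiDiv, if_neg hα1]
    by_cases hgt : 1 < α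
    · -- alpha > 1 : Hoelder
      have hc : 0 < (α - 1)⁻¹ := inv_pos.2 (by linarith)
      have hexp : 1 - α < 0 := by linarith
      have hSne : ∀ Q : X × Y → ℝ≥0∞, (∀ p, Q p ≠ ⊤) →
          (∑ p, P p ^ α * Q p ^ (1 - α)) ≠ 0 := by
        intro Q hQ h
        obtain ⟨x, hx⟩ : ∃ p, P p ≠ 0 := by
          by_contra hcon
          push_neg at hcon
          rw [Finset.sum_eq_zero (fun p _ => hcon p)] at hP
          exact zero_ne_one hP
        rw [Finset.sum_eq_zero_iff] at h
        have := h x (mem_univ x)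
        rcases mul_eq_zero.1 this with h' | h'
        · rw [ENNReal.rpow_eq_zero_iff] at h'
          rcases h' with ⟨h'', _⟩ | ⟨h'', _⟩
          · exact hx h''
          · exact hPtop x h''
        · rw [ENNReal.rpow_eq_zero_iff] at h'
          rcases h' with ⟨h'', hy⟩ | ⟨h'', _⟩
          · linarith
          · exact hQ x h''
      have chain : (∑ p, P p ^ α *
          ((ENNReal.ofReal l * QX1 p.1 + ENNReal.ofReal (1 - l) * QX2 p.1) *
            (ENNReal.ofReal l * QY1 p.2 + ENNReal.ofReal (1 - l) * QY2 p.2)) ^ (1 - α)) ≤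
          (∑ p, P p ^ α * (QX1 p.1 * QY1 p.2) ^ (1 - α)) ^ l *
          (∑ p, P p ^ α * (QX2 p.1 * QY2 p.2) ^ (1 - α)) ^ (1 - l) := by
        calc (∑ p, P p ^ α *
            ((ENNReal.ofReal l * QX1 p.1 + ENNReal.ofReal (1 - l) * QX2 p.1) *
              (ENNReal.ofReal l * QY1 p.2 + ENNReal.ofReal (1 - l) * QY2 p.2)) ^ (1 - α))
            ≤ ∑ p, (P p ^ α * (QX1 p.1 * QY1 p.2) ^ (1 - α)) ^ l *
                (P p ^ α * (QX2 p.1 * QY2 p.2) ^ (1 - α)) ^ (1 - l) := by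
              apply Finset.sum_le_sum
              intro p _
              have h1 : ((ENNReal.ofReal l * QX1 p.1 + ENNReal.ofReal (1 - l) * QX2 p.1) *
                  (ENNReal.ofReal l * QY1 p.2 + ENNReal.ofReal (1 - l) * QY2 p.2)) ^ (1 - α)
                    ≤ ((QX1 p.1 * QY1 p.2) ^ l * (QX2 p.1 * QY2 p.2) ^ (1 - l)) ^ (1 - α) :=
                aux_rpow_anti (hgeo p) hexp.le
              have h2 : ((QX1 p.1 * QY1 p.2) ^ l * (QX2 p.1 * QY2 p.2) ^ (1 - l)) ^ (1 - α)
                  = ((QX1 p.1 * QY1 p.2) ^ (1 - α)) ^ l *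
                    ((QX2 p.1 * QY2 p.2) ^ (1 - α)) ^ (1 - l) := by
                rw [ENNReal.mul_rpow_of_ne_top (ENNReal.rpow_ne_top_of_nonneg hl0.le (hQ1t p))
                    (ENNReal.rpow_ne_top_of_nonneg hm0.le (hQ2t p)),
                  ← ENNReal.rpow_mul, ← ENNReal.rpow_mul, mul_comm l (1 - α),
                  mul_comm (1 - l) (1 - α), ENNReal.rpow_mul, ENNReal.rpow_mul]
              have h3 : P p ^ α = (P p ^ α) ^ l * (P p ^ α) ^ (1 - l) := by
                rw [← ENNReal.rpow_add_of_nonneg l (1 - l) hl0.le hm0.le]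
                norm_num
              calc P p ^ α *
                  ((ENNReal.ofReal l * QX1 p.1 + ENNReal.ofReal (1 - l) * QX2 p.1) *
                    (ENNReal.ofReal l * QY1 p.2 + ENNReal.ofReal (1 - l) * QY2 p.2)) ^ (1 - α)
                  ≤ P p ^ α * (((QX1 p.1 * QY1 p.2) ^ (1 - α)) ^ l *
                      ((QX2 p.1 * QY2 p.2) ^ (1 - α)) ^ (1 - l)) := by
                    exact mul_le_mul_right (le_of_le_of_eq h1 h2) _
                _ = (P p ^ α * (QX1 p.1 * QY1 p.2) ^ (1 - α)) ^ l *
                    (P p ^ α * (QX2 p.1 * QY2 p.2) ^ (1 - α)) ^ (1 - l) := by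
                    rw [ENNReal.mul_rpow_of_nonneg _ _ hl0.le,
                      ENNReal.mul_rpow_of_nonneg _ _ hm0.le]
                    nth_rewrite 1 [h3]
                    ring
          _ ≤ (∑ p, P p ^ α * (QX1 p.1 * QY1 p.2) ^ (1 - α)) ^ l *
              (∑ p, P p ^ α * (QX2 p.1 * QY2 p.2) ^ (1 - α)) ^ (1 - l) :=
              aux_holder _ _ hl0 hl1
      exact aux_wrap_pos hc hl0 hl1 (hSne _ hQ1t) (hSne _ hQ2t) (hSne _ hQbt) chain
    · -- 1/2 <= alpha < 1 : Cauchy-Schwarz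
      have hlt : α < 1 := lt_of_le_of_ne (not_lt.1 hgt) hα1
      have hc : (α - 1)⁻¹ < 0 := inv_lt_zero.2 (by linarith)
      have hp0' : 0 < 1 - α := by linarith
      have hp2' : 2 * (1 - α) ≤ 1 := by
        have : (1:ℝ)/2 ≤ α := hα
        linarith
      have hSt : ∀ Q : X × Y → ℝ≥0∞, (∀ p, Q p ≠ ⊤) →
          (∑ p, P p ^ α * Q p ^ (1 - α)) ≠ ⊤ := by
        intro Q hQ
        refine (ENNReal.sum_lt_top.2 fun p _ => ?_).ne
        exact (ENNReal.mul_ne_top (ENNReal.rpow_ne_top_of_nonneg hα0.le (hPtop p))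
          (ENNReal.rpow_ne_top_of_nonneg hp0'.le (hQ p))).lt_top
      have hsum : ENNReal.ofReal l * (∑ p, P p ^ α * (QX1 p.1 * QY1 p.2) ^ (1 - α)) +
          ENNReal.ofReal (1 - l) * (∑ p, P p ^ α * (QX2 p.1 * QY2 p.2) ^ (1 - α)) ≤
          ∑ p, P p ^ α *
            ((ENNReal.ofReal l * QX1 p.1 + ENNReal.ofReal (1 - l) * QX2 p.1) *
              (ENNReal.ofReal l * QY1 p.2 + ENNReal.ofReal (1 - l) * QY2 p.2)) ^ (1 - α) := by
        rw [Finset.mul_sum, Finset.mul_sum, ← Finset.sum_add_distrib]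
        apply Finset.sum_le_sum
        intro p _
        calc ENNReal.ofReal l * (P p ^ α * (QX1 p.1 * QY1 p.2) ^ (1 - α)) +
              ENNReal.ofReal (1 - l) * (P p ^ α * (QX2 p.1 * QY2 p.2) ^ (1 - α))
            = P p ^ α * (ENNReal.ofReal l * (QX1 p.1 * QY1 p.2) ^ (1 - α) +
                ENNReal.ofReal (1 - l) * (QX2 p.1 * QY2 p.2) ^ (1 - α)) := by ring
          _ ≤ P p ^ α *
              ((ENNReal.ofReal l * QX1 p.1 + ENNReal.ofReal (1 - l) * QX2 p.1) *
                (ENNReal.ofReal l * QY1 p.2 + ENNReal.ofReal (1 - l) * QY2 p.2)) ^ (1 - α) :=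
              mul_le_mul_right (aux_ptwise_lt (hX1t p.1) (hX2t p.1) (hY1t p.2) (hY2t p.2)
                hl0.le hl1.le hp0' hp2') _
      have chain : (∑ p, P p ^ α * (QX1 p.1 * QY1 p.2) ^ (1 - α)) ^ l *
          (∑ p, P p ^ α * (QX2 p.1 * QY2 p.2) ^ (1 - α)) ^ (1 - l) ≤
          ∑ p, P p ^ α *
            ((ENNReal.ofReal l * QX1 p.1 + ENNReal.ofReal (1 - l) * QX2 p.1) *
              (ENNReal.ofReal l * QY1 p.2 + ENNReal.ofReal (1 - l) * QY2 p.2)) ^ (1 - α) :=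
        le_trans (aux_amgm (hSt _ hQ1t) (hSt _ hQ2t) hl0.le hl1.le) hsum
      exact aux_wrap_neg hc hl0 hl1 (hSt _ hQ1t) (hSt _ hQ2t) (hSt _ hQbt) chain
end
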